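/- arXiv:2602.16289 — 6 statements merged into one kernel-verified Lean document; each statement's English description precedes it below -/
import Mathlib

section
/- Let (G, ≻) be a matching instance in which preferences are strict rankings, and let ℳ = {M₁, M₂} be a Pareto-optimal set of two matchings in G. Then ℳ is popular; moreover, either ℳ is strongly popular, or there exists a top-choice matching in G. -/
open scoped Classical

/-- A matching in a bipartite graph with agent set `A`, object set `O` and adjacency
relation `adj`, represented by the partial assignment `M : A → Option O` of objects to
agents: matched pairs are edges, and each object is matched to at most one agent. -/
def IsMatching {A O : Type*} (adj : A → O → Prop) (M : A → Option O) : Prop :=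
  (∀ a o, M a = some o → adj a o) ∧
  (∀ a a' o, M a = some o → M a' = some o → a = a')

/-- The lifted strict preference of agent `a` over matchings: `M ≻ₐ N` iff
`M(a) ≻ₐ N(a)`, where any assigned object is preferred to being unmatched. -/
def PrefM {A O : Type*} (pref : A → O → O → Prop) (a : A) (M N : A → Option O) : Prop :=
  (∃ o o', M a = some o ∧ N a = some o' ∧ pref a o o') ∨
  (∃ o, M a = some o ∧ N a = none)

/-- `pref a` is a strict partial order on the objects adjacent to `a`. -/
def IsPrefOrder {A O : Type*} (adj : A → O → Prop) (pref : A → O → O → Prop) : Prop :=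
  ∀ a : A, (∀ o, ¬ pref a o o) ∧
    (∀ o o' o'', pref a o o' → pref a o' o'' → pref a o o'') ∧
    (∀ o o', pref a o o' → adj a o ∧ adj a o')

/-- Preferences are strict rankings: each `pref a` is a strict linear order on the
objects adjacent to `a`. -/
def IsStrictRanking {A O : Type*} (adj : A → O → Prop) (pref : A → O → O → Prop) : Prop :=
  IsPrefOrder adj pref ∧
  ∀ a o o', adj a o → adj a o' → o ≠ o' → pref a o o' ∨ pref a o' o

/-- `φ(ℳ, N)`: the number of agents preferring some member of `ℳ` to `N`. -/
noncomputable def phiSet {A O : Type*} (pref : A → O → O → Prop)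
    (Mset : Set (A → Option O)) (N : A → Option O) : ℕ :=
  {a : A | ∃ M ∈ Mset, PrefM pref a M N}.ncard

/-- `φ(N, ℳ)`: the number of agents preferring `N` to every member of `ℳ`. -/
noncomputable def phiOne {A O : Type*} (pref : A → O → O → Prop)
    (N : A → Option O) (Mset : Set (A → Option O)) : ℕ :=
  {a : A | ∀ M ∈ Mset, PrefM pref a N M}.ncard

/-- `Mset` is popular (weakly Condorcet-winning) among the feasible matchings `F`:
`μ(ℳ, N) ≥ 0`, i.e. `φ(N, ℳ) ≤ φ(ℳ, N)`, for every feasible `N`. -/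
def Popular {A O : Type*} (pref : A → O → O → Prop) (F : Set (A → Option O))
    (Mset : Set (A → Option O)) : Prop :=
  ∀ N ∈ F, phiOne pref N Mset ≤ phiSet pref Mset N

/-- `Mset` is strongly popular (Condorcet-winning) among the feasible matchings `F`:
`μ(ℳ, N) > 0` for every feasible `N ∉ ℳ`. -/
def StronglyPopular {A O : Type*} (pref : A → O → O → Prop) (F : Set (A → Option O))
    (Mset : Set (A → Option O)) : Prop :=
  ∀ N ∈ F, N ∉ Mset → phiOne pref N Mset < phiSet pref Mset N

/-- A set `Y` of matchings Pareto-dominates a set `Z`. -/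
def Dominates {A O : Type*} (pref : A → O → O → Prop)
    (Y Z : Set (A → Option O)) : Prop :=
  Y.ncard ≤ Z.ncard ∧
  (∀ a : A, ∃ MY ∈ Y, ∀ MZ ∈ Z, ¬ PrefM pref a MZ MY) ∧
  (∃ a : A, ∃ MY ∈ Y, ∀ MZ ∈ Z, PrefM pref a MY MZ)

/-- `Mset` is Pareto-optimal: no set of feasible matchings Pareto-dominates it. -/
def ParetoOptimal {A O : Type*} (pref : A → O → O → Prop) (F : Set (A → Option O))
    (Mset : Set (A → Option O)) : Prop :=
  ¬ ∃ Y : Set (A → Option O), Y ⊆ F ∧ Dominates pref Y Mset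

/-- `M` is a top-choice matching among the feasible matchings `F`: no agent strictly
prefers any feasible matching to `M`. -/
def IsTopChoice {A O : Type*} (pref : A → O → O → Prop) (F : Set (A → Option O))
    (M : A → Option O) : Prop :=
  M ∈ F ∧ ∀ a : A, ¬ ∃ N ∈ F, PrefM pref a N M

section Aux

variable {A O : Type*}

/-- Option-level strict preference of agent `a`. -/
def OP (pref : A → O → O → Prop) (a : A) (x y : Option O) : Prop :=
  (∃ o o', x = some o ∧ y = some o' ∧ pref a o o') ∨ (∃ o, x = some o ∧ y = none)

lemma prefM_iff_op (pref : A → O → O → Prop) (a : A) (M N : A → Option O) :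
    PrefM pref a M N ↔ OP pref a (M a) (N a) := Iff.rfl

lemma op_some_left {pref : A → O → O → Prop} {a : A} {x y : Option O}
    (h : OP pref a x y) : ∃ o, x = some o := by
  rcases h with ⟨o, o', h1, _, _⟩ | ⟨o, h1, _⟩ <;> exact ⟨o, h1⟩

lemma op_some_none {pref : A → O → O → Prop} {a : A} {o : O} :
    OP pref a (some o) none := Or.inr ⟨o, rfl, rfl⟩

variable {adj : A → O → Prop} {pref : A → O → O → Prop}

lemma op_irrefl (hpref : IsStrictRanking adj pref) (a : A) (x : Option O) :
    ¬ OP pref a x x := by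
  rintro (⟨o, o', h1, h2, h3⟩ | ⟨o, h1, h2⟩)
  · rw [h1] at h2; injection h2 with h2; subst h2; exact (hpref.1 a).1 o h3
  · rw [h1] at h2; cases h2

lemma op_trans (hpref : IsStrictRanking adj pref) {a : A} {x y z : Option O}
    (h1 : OP pref a x y) (h2 : OP pref a y z) : OP pref a x z := by
  rcases h1 with ⟨o, o', e1, e2, p⟩ | ⟨o, e1, e2⟩
  · rcases h2 with ⟨u, u', f1, f2, q⟩ | ⟨u, f1, f2⟩
    · rw [e2] at f1; injection f1 with f1; subst f1
      exact Or.inl ⟨o, u', e1, f2, (hpref.1 a).2.1 _ _ _ p q⟩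
    · rw [e2] at f1; injection f1 with f1; subst f1
      exact Or.inr ⟨o, e1, f2⟩
  · rcases op_some_left h2 with ⟨u, f1⟩; rw [e2] at f1; cases f1

lemma op_asymm (hpref : IsStrictRanking adj pref) {a : A} {x y : Option O}
    (h1 : OP pref a x y) (h2 : OP pref a y x) : False :=
  op_irrefl hpref a x (op_trans hpref h1 h2)

lemma op_total (hpref : IsStrictRanking adj pref) {a : A} (x y : Option O)
    (hx : ∀ o, x = some o → adj a o) (hy : ∀ o, y = some o → adj a o) :
    OP pref a x y ∨ OP pref a y x ∨ x = y := by
  match x, y with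
  | none, none => exact Or.inr (Or.inr rfl)
  | some o, none => exact Or.inl (Or.inr ⟨o, rfl, rfl⟩)
  | none, some o => exact Or.inr (Or.inl (Or.inr ⟨o, rfl, rfl⟩))
  | some o, some o' =>
    by_cases h : o = o'
    · subst h; exact Or.inr (Or.inr rfl)
    · rcases hpref.2 a o o' (hx o rfl) (hy o' rfl) h with p | p
      · exact Or.inl (Or.inl ⟨o, o', rfl, rfl, p⟩)
      · exact Or.inr (Or.inl (Or.inl ⟨o', o, rfl, rfl, p⟩))

/-- The pointwise better of two matchings. -/
noncomputable def Bmax (pref : A → O → O → Prop) (M₁ M₂ : A → Option O) :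
    A → Option O :=
  fun a => if PrefM pref a M₂ M₁ then M₂ a else M₁ a

lemma bmax_eq (pref : A → O → O → Prop) (M₁ M₂ : A → Option O) (a : A) :
    Bmax pref M₁ M₂ a = M₁ a ∨ Bmax pref M₁ M₂ a = M₂ a := by
  unfold Bmax; split_ifs <;> simp

lemma bmax_ge (hpref : IsStrictRanking adj pref) (M₁ M₂ : A → Option O) (a : A) :
    ¬ OP pref a (M₁ a) (Bmax pref M₁ M₂ a) ∧ ¬ OP pref a (M₂ a) (Bmax pref M₁ M₂ a) := by
  unfold Bmax; split_ifs with h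
  · exact ⟨fun h' => op_asymm hpref h' h, op_irrefl hpref a _⟩
  · exact ⟨op_irrefl hpref a _, h⟩

lemma matching_usage {M : A → Option O} (hM : IsMatching adj M) (o : O) [Fintype A] :
    {c | M c = some o}.ncard ≤ 1 := by
  rw [Set.ncard_le_one (Set.toFinite _)]
  exact fun c hc c' hc' => hM.2 c c' o hc hc'

end Aux

section Dom

variable {A O : Type*} [Fintype A] [Fintype O]

omit [Fintype O] in
/-- Any capacity-2 assignment that weakly improves on both matchings and strictly
improves for one agent yields a Pareto-dominating set. -/
lemma dom_of_suitable (adj : A → O → Prop) (pref : A → O → O → Prop)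
    (M₁ M₂ : A → Option O) (hne : M₁ ≠ M₂)
    (C : A → Option O)
    (hadj : ∀ a o, C a = some o → adj a o)
    (husage : ∀ o, ({c | C c = some o}).ncard ≤ 2)
    (hweak : ∀ a, ¬ OP pref a (M₁ a) (C a) ∧ ¬ OP pref a (M₂ a) (C a))
    (hstrict : ∃ a, OP pref a (C a) (M₁ a) ∧ OP pref a (C a) (M₂ a)) :
    ∃ Y : Set (A → Option O), Y ⊆ {M | IsMatching adj M} ∧
      Dominates pref Y ({M₁, M₂} : Set (A → Option O)) := by
  classical
  obtain ⟨a₀, hst₁, hst₂⟩ := hstrict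
  -- a choice of one user of each object
  set pick : O → A := fun o => if h : ∃ c, C c = some o then h.choose else a₀ with hpickdef
  have hpick : ∀ o c, C c = some o → C (pick o) = some o := by
    intro o c hc
    have h : ∃ c, C c = some o := ⟨c, hc⟩
    simp only [hpickdef, dif_pos h]
    exact h.choose_spec
  set Y₁ : A → Option O :=
    fun c => if h : ∃ o, C c = some o ∧ pick o = c then C c else none with hY₁def
  set Y₂ : A → Option O :=
    fun c => if h : ∃ o, C c = some o ∧ pick o ≠ c then C c else none with hY₂def
  have hY₁some : ∀ c o, Y₁ c = some o → C c = some o ∧ pick o = c := by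
    intro c o hc
    simp only [hY₁def] at hc
    split_ifs at hc with h
    · obtain ⟨o', ho', hp⟩ := h
      rw [hc] at ho'; injection ho' with ho'; subst ho'; exact ⟨hc, hp⟩
  have hY₂some : ∀ c o, Y₂ c = some o → C c = some o ∧ pick o ≠ c := by
    intro c o hc
    simp only [hY₂def] at hc
    split_ifs at hc with h
    · obtain ⟨o', ho', hp⟩ := h
      rw [hc] at ho'; injection ho' with ho'; subst ho'; exact ⟨hc, hp⟩
  have hY₁M : IsMatching adj Y₁ := by
    constructor
    · intro a o h; exact hadj a o (hY₁some a o h).1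
    · intro a a' o h h'
      rw [← (hY₁some a o h).2, ← (hY₁some a' o h').2]
  have hY₂M : IsMatching adj Y₂ := by
    constructor
    · intro a o h; exact hadj a o (hY₂some a o h).1
    · intro a a' o h h'
      obtain ⟨hC, hp⟩ := hY₂some a o h
      obtain ⟨hC', hp'⟩ := hY₂some a' o h'
      by_contra hne'
      have hsub : ({a, a', pick o} : Set A) ⊆ {c | C c = some o} := by
        rintro c (rfl | rfl | rfl)
        · exact hC
        · exact hC'
        · exact hpick o a hC
      have h3 : ({a, a', pick o} : Set A).ncard = 3 := by
        rw [Set.ncard_insert_of_notMem (by simp [hne', Ne.symm hp]) (Set.toFinite _),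
          Set.ncard_insert_of_notMem (by simp [Ne.symm hp']) (Set.toFinite _),
          Set.ncard_singleton]
      have := Set.ncard_le_ncard hsub (Set.toFinite _)
      rw [h3] at this
      have := husage o
      omega
  -- each agent is covered by the Y that keeps C's value
  have hcover : ∀ a, ∃ Yc ∈ ({Y₁, Y₂} : Set (A → Option O)), Yc a = C a := by
    intro a
    rcases h : C a with _ | o
    · refine ⟨Y₁, by simp, ?_⟩
      simp only [hY₁def]
      rw [dif_neg]; rintro ⟨o', ho', _⟩; rw [h] at ho'; cases ho'
    · by_cases hp : pick o = a
      · refine ⟨Y₁, by simp, ?_⟩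
        simp only [hY₁def]; rw [dif_pos ⟨o, h, hp⟩]; exact h
      · refine ⟨Y₂, by simp, ?_⟩
        simp only [hY₂def]; rw [dif_pos ⟨o, h, hp⟩]; exact h
  refine ⟨{Y₁, Y₂}, ?_, ?_, ?_, ?_⟩
  · rintro Y (rfl | rfl)
    · exact hY₁M
    · exact hY₂M
  · -- cardinality
    have h2 : ({M₁, M₂} : Set (A → Option O)).ncard = 2 := Set.ncard_pair hne
    rw [h2]
    calc ({Y₁, Y₂} : Set (A → Option O)).ncard ≤ ({Y₂} : Set (A → Option O)).ncard + 1 :=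
          Set.ncard_insert_le _ _
      _ = 2 := by rw [Set.ncard_singleton]
  · -- weak domination
    intro a
    obtain ⟨Yc, hYc, hYca⟩ := hcover a
    refine ⟨Yc, hYc, ?_⟩
    rintro MZ (rfl | rfl)
    · rw [prefM_iff_op, hYca]; exact (hweak a).1
    · rw [prefM_iff_op, hYca]; exact (hweak a).2
  · -- strict improvement
    obtain ⟨Yc, hYc, hYca⟩ := hcover a₀
    refine ⟨a₀, Yc, hYc, ?_⟩
    rintro MZ (rfl | rfl)
    · rw [prefM_iff_op, hYca]; exact hst₁
    · rw [prefM_iff_op, hYca]; exact hst₂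

end Dom

/-- If preferences are strict rankings and `{M₁, M₂}` is a
Pareto-optimal set of two matchings, then `{M₁, M₂}` is popular; moreover, either it is
strongly popular or a top-choice matching exists. -/
theorem pareto_optimal_pair_popular_of_strict
    {A O : Type*} [Fintype A] [Fintype O]
    (adj : A → O → Prop) (pref : A → O → O → Prop)
    (hpref : IsStrictRanking adj pref)
    (M₁ M₂ : A → Option O) (hM₁ : IsMatching adj M₁) (hM₂ : IsMatching adj M₂)
    (hne : M₁ ≠ M₂)
    (hPO : ParetoOptimal pref {M | IsMatching adj M} {M₁, M₂}) :
    Popular pref {M | IsMatching adj M} {M₁, M₂} ∧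
      (StronglyPopular pref {M | IsMatching adj M} {M₁, M₂} ∨
        ∃ T, IsTopChoice pref {M | IsMatching adj M} T) := by
  classical
  set B : A → Option O := Bmax pref M₁ M₂ with hBdef
  have hB2 : ∀ a, B a = M₁ a ∨ B a = M₂ a := bmax_eq pref M₁ M₂
  have hBge : ∀ a, ¬ OP pref a (M₁ a) (B a) ∧ ¬ OP pref a (M₂ a) (B a) :=
    bmax_ge hpref M₁ M₂
  have hBadj : ∀ a o, B a = some o → adj a o := by
    intro a o h
    rcases hB2 a with h' | h' <;> rw [h'] at h
    · exact hM₁.1 a o h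
    · exact hM₂.1 a o h
  have hBuse : ∀ o, {c | B c = some o}.ncard ≤ 2 := by
    intro o
    have hsub : {c | B c = some o} ⊆ {c | M₁ c = some o} ∪ {c | M₂ c = some o} := by
      intro c hc
      simp only [Set.mem_setOf_eq] at hc
      rcases hB2 c with h' | h'
      · exact Or.inl (by simp only [Set.mem_setOf_eq]; rw [← h']; exact hc)
      · exact Or.inr (by simp only [Set.mem_setOf_eq]; rw [← h']; exact hc)
    calc {c | B c = some o}.ncard
        ≤ ({c | M₁ c = some o} ∪ {c | M₂ c = some o}).ncard :=
          Set.ncard_le_ncard hsub (Set.toFinite _)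
      _ ≤ {c | M₁ c = some o}.ncard + {c | M₂ c = some o}.ncard := Set.ncard_union_le _ _
      _ ≤ 2 := by have := matching_usage hM₁ o; have := matching_usage hM₂ o; omega
  -- Property (T): any object preferred to one's B-value is fully used by B
  have hT : ∀ b o, adj b o → OP pref b (some o) (B b) → 2 ≤ {c | B c = some o}.ncard := by
    intro b o hbo hop
    by_contra hlt
    push_neg at hlt
    have hlt1 : {c | B c = some o}.ncard ≤ 1 := by omega
    set C : A → Option O := fun c => if c = b then some o else B c with hCdef
    have hCb : C b = some o := by simp [hCdef]
    have hCa : ∀ c, c ≠ b → C c = B c := by intro c hc; simp [hCdef, hc]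
    apply hPO
    refine dom_of_suitable adj pref M₁ M₂ hne C ?_ ?_ ?_ ?_
    · intro a o' h
      by_cases hab : a = b
      · subst hab; rw [hCb] at h; injection h with h; subst h; exact hbo
      · rw [hCa a hab] at h; exact hBadj a o' h
    · intro o'
      by_cases ho' : o' = o
      · subst ho'
        have hsub : {c | C c = some o'} ⊆ insert b {c | B c = some o'} := by
          intro c hc
          simp only [Set.mem_setOf_eq] at hc
          by_cases hcb : c = b
          · exact Or.inl hcb
          · right; simp only [Set.mem_setOf_eq]; rw [← hCa c hcb]; exact hc
        calc {c | C c = some o'}.ncard ≤ (insert b {c | B c = some o'}).ncard :=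
              Set.ncard_le_ncard hsub (Set.toFinite _)
          _ ≤ {c | B c = some o'}.ncard + 1 := Set.ncard_insert_le _ _
          _ ≤ 2 := by omega
      · have hsub : {c | C c = some o'} ⊆ {c | B c = some o'} := by
          intro c hc
          simp only [Set.mem_setOf_eq] at hc ⊢
          by_cases hcb : c = b
          · subst hcb; rw [hCb] at hc; injection hc with hc; exact absurd hc.symm ho'
          · rw [← hCa c hcb]; exact hc
        exact le_trans (Set.ncard_le_ncard hsub (Set.toFinite _)) (hBuse o')
    · intro a
      by_cases hab : a = b
      · subst hab
        rw [hCb]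
        constructor
        · intro hcon; exact (hBge a).1 (op_trans hpref hcon hop)
        · intro hcon; exact (hBge a).2 (op_trans hpref hcon hop)
      · rw [hCa a hab]; exact hBge a
    · refine ⟨b, ?_, ?_⟩
      · rw [hCb]
        rcases op_total hpref (M₁ b) (some o) (fun o'' h => hM₁.1 b o'' h)
            (fun o'' h => by injection h with h; subst h; exact hbo) with h | h | h
        · exact absurd (op_trans hpref h hop) (hBge b).1
        · exact h
        · rw [← h] at hop; exact absurd hop (hBge b).1
      · rw [hCb]
        rcases op_total hpref (M₂ b) (some o) (fun o'' h => hM₂.1 b o'' h)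
            (fun o'' h => by injection h with h; subst h; exact hbo) with h | h | h
        · exact absurd (op_trans hpref h hop) (hBge b).2
        · exact h
        · rw [← h] at hop; exact absurd hop (hBge b).2
  -- characterization of D⁺ and D⁻
  have hDpc : ∀ (N : A → Option O) a,
      ((∀ M ∈ ({M₁, M₂} : Set (A → Option O)), PrefM pref a N M) ↔
        OP pref a (N a) (B a)) := by
    intro N a
    constructor
    · intro h
      rcases hB2 a with h' | h' <;> rw [h']
      · exact h M₁ (Set.mem_insert _ _)
      · exact h M₂ (Set.mem_insert_of_mem _ rfl)
    · intro h M hM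
      simp only [Set.mem_insert_iff, Set.mem_singleton_iff] at hM
      rcases hM with rfl | rfl
      · rw [prefM_iff_op]
        rcases op_total hpref (M a) (B a) (fun o' h' => hM₁.1 a o' h') (hBadj a)
          with h' | h' | h'
        · exact absurd h' (hBge a).1
        · exact op_trans hpref h h'
        · rw [← h'] at h; exact h
      · rw [prefM_iff_op]
        rcases op_total hpref (M a) (B a) (fun o' h' => hM₂.1 a o' h') (hBadj a)
          with h' | h' | h'
        · exact absurd h' (hBge a).2
        · exact op_trans hpref h h'
        · rw [← h'] at h; exact h
  have hDmc : ∀ (N : A → Option O) a,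
      ((∃ M ∈ ({M₁, M₂} : Set (A → Option O)), PrefM pref a M N) ↔
        OP pref a (B a) (N a)) := by
    intro N a
    constructor
    · rintro ⟨M, hM, h⟩
      simp only [Set.mem_insert_iff, Set.mem_singleton_iff] at hM
      rw [prefM_iff_op] at h
      rcases hM with rfl | rfl
      · rcases op_total hpref (M a) (B a) (fun o' h' => hM₁.1 a o' h') (hBadj a)
          with h' | h' | h'
        · exact absurd h' (hBge a).1
        · exact op_trans hpref h' h
        · rw [h'] at h; exact h
      · rcases op_total hpref (M a) (B a) (fun o' h' => hM₂.1 a o' h') (hBadj a)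
          with h' | h' | h'
        · exact absurd h' (hBge a).2
        · exact op_trans hpref h' h
        · rw [h'] at h; exact h
    · intro h
      rcases hB2 a with h' | h'
      · exact ⟨M₁, Set.mem_insert _ _, by rw [prefM_iff_op, ← h']; exact h⟩
      · exact ⟨M₂, Set.mem_insert_of_mem _ rfl, by rw [prefM_iff_op, ← h']; exact h⟩
  -- the core counting argument
  have main : ∀ N : A → Option O, IsMatching adj N →
      {a | OP pref a (N a) (B a)}.ncard ≤ {a | OP pref a (B a) (N a)}.ncard ∧
      ({a | OP pref a (B a) (N a)}.ncard ≤ {a | OP pref a (N a) (B a)}.ncard →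
        ∀ a, N a = B a) := by
    intro N hN
    set Dp : Set A := {a | OP pref a (N a) (B a)} with hDpdef
    set Dm : Set A := {a | OP pref a (B a) (N a)} with hDmdef
    have hmemDp : ∀ a, a ∈ Dp ↔ OP pref a (N a) (B a) := fun a => Iff.rfl
    have hmemDm : ∀ a, a ∈ Dm ↔ OP pref a (B a) (N a) := fun a => Iff.rfl
    have hNsome : ∀ a ∈ Dp, ∃ o, N a = some o :=
      fun a ha => op_some_left ((hmemDp a).mp ha)
    have hnotown : ∀ a ∈ Dp, B a ≠ N a := by
      intro a ha h
      have ha' : OP pref a (N a) (B a) := (hmemDp a).mp ha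
      rw [h] at ha'
      exact op_irrefl hpref a (N a) ha'
    have hNinj : ∀ a ∈ Dp, ∀ a', N a = N a' → a = a' := by
      intro a ha a' h
      obtain ⟨o, ho⟩ := hNsome a ha
      exact hN.2 a a' o ho (by rw [← h]; exact ho)
    -- owners structure
    have howner : ∀ a ∈ Dp, ∃ c₁ c₂, c₁ ≠ c₂ ∧
        M₁ c₁ = N a ∧ B c₁ = N a ∧ M₂ c₂ = N a ∧ B c₂ = N a := by
      intro a ha
      obtain ⟨o, hNa⟩ := hNsome a ha
      have hadja : adj a o := hN.1 a o hNa
      have h2 : 2 ≤ {c | B c = some o}.ncard := by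
        apply hT a o hadja
        rw [← hNa]
        exact (hmemDp a).mp ha
      obtain ⟨c₁, hc₁, c₂, hc₂, hcc⟩ :=
        (Set.one_lt_ncard (s := {c | B c = some o}) (Set.toFinite _)).mp (by omega)
      simp only [Set.mem_setOf_eq] at hc₁ hc₂
      rw [← hNa] at hc₁ hc₂
      rcases hB2 c₁ with e1 | e1 <;> rcases hB2 c₂ with e2 | e2
      · exfalso
        apply hcc
        obtain ⟨o', ho'⟩ : ∃ o', N a = some o' := ⟨o, hNa⟩
        apply hM₁.2 c₁ c₂ o'
        · rw [← e1, hc₁]; exact ho'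
        · rw [← e2, hc₂]; exact ho'
      · exact ⟨c₁, c₂, hcc, by rw [← e1]; exact hc₁, hc₁, by rw [← e2]; exact hc₂, hc₂⟩
      · exact ⟨c₂, c₁, hcc.symm, by rw [← e2]; exact hc₂, hc₂, by rw [← e1]; exact hc₁, hc₁⟩
      · exfalso
        apply hcc
        obtain ⟨o', ho'⟩ : ∃ o', N a = some o' := ⟨o, hNa⟩
        apply hM₂.2 c₁ c₂ o'
        · rw [← e1, hc₁]; exact ho'
        · rw [← e2, hc₂]; exact ho'
    choose c1f c2f hne12 hm1 hb1 hm2 hb2 using howner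
    set i₁ : A → A := fun a => if h : a ∈ Dp then c1f a h else a with hi₁def
    set i₂ : A → A := fun a => if h : a ∈ Dp then c2f a h else a with hi₂def
    have hI : ∀ a, ∀ ha : a ∈ Dp,
        M₁ (i₁ a) = N a ∧ B (i₁ a) = N a ∧ M₂ (i₂ a) = N a ∧ B (i₂ a) = N a ∧
          i₁ a ≠ i₂ a := by
      intro a ha
      simp only [hi₁def, hi₂def, dif_pos ha]
      exact ⟨hm1 a ha, hb1 a ha, hm2 a ha, hb2 a ha, hne12 a ha⟩
    have hinj1 : Set.InjOn i₁ Dp := by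
      intro a ha a' ha' h
      apply hNinj a ha a'
      rw [← (hI a ha).2.1, ← (hI a' ha').2.1, h]
    have hinj2 : Set.InjOn i₂ Dp := by
      intro a ha a' ha' h
      apply hNinj a ha a'
      rw [← (hI a ha).2.2.2.1, ← (hI a' ha').2.2.2.1, h]
    have hdisj : Disjoint (i₁ '' Dp) (i₂ '' Dp) := by
      rw [Set.disjoint_left]
      rintro c ⟨a, ha, rfl⟩ ⟨a', ha', hEq⟩
      have hNN : N a' = N a := by rw [← (hI a ha).2.1, ← (hI a' ha').2.2.2.1, hEq]
      have haa : a' = a := hNinj a' ha' a hNN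
      subst haa
      exact (hI a' ha').2.2.2.2 hEq.symm
    have hownmem : ∀ a ∈ Dp, ∀ c, B c = N a → c ∈ Dp ∪ Dm := by
      intro a ha c hBc
      have hca : c ≠ a := by rintro rfl; exact hnotown c ha hBc
      rcases op_total hpref (N c) (B c) (hN.1 c) (hBadj c) with h | h | h
      · exact Set.mem_union_left _ ((hmemDp c).mpr h)
      · exact Set.mem_union_right _ ((hmemDm c).mpr h)
      · exfalso
        apply hca
        obtain ⟨o, ho⟩ := hNsome a ha
        apply hN.2 c a o _ ho
        rw [h, hBc]; exact ho
    have hsubU : i₁ '' Dp ∪ i₂ '' Dp ⊆ Dp ∪ Dm := by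
      rintro c (⟨a, ha, rfl⟩ | ⟨a, ha, rfl⟩)
      · exact hownmem a ha _ (hI a ha).2.1
      · exact hownmem a ha _ (hI a ha).2.2.2.1
    have e1 : (i₁ '' Dp).ncard = Dp.ncard := Set.ncard_image_of_injOn hinj1
    have e2 : (i₂ '' Dp).ncard = Dp.ncard := Set.ncard_image_of_injOn hinj2
    have e3 : (i₁ '' Dp ∪ i₂ '' Dp).ncard = Dp.ncard + Dp.ncard := by
      rw [Set.ncard_union_eq hdisj (Set.toFinite _) (Set.toFinite _), e1, e2]
    have e4 := Set.ncard_le_ncard hsubU (Set.toFinite _)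
    have e5 := Set.ncard_union_le Dp Dm
    have hdisjDm : Disjoint Dp Dm := by
      rw [Set.disjoint_left]
      intro a ha ha'
      exact op_asymm hpref ((hmemDp a).mp ha) ((hmemDm a).mp ha')
    have e6 : (Dp ∪ Dm).ncard = Dp.ncard + Dm.ncard :=
      Set.ncard_union_eq hdisjDm (Set.toFinite _) (Set.toFinite _)
    refine ⟨by omega, ?_⟩
    intro hle
    by_cases hDp : Dp = ∅
    · have hDm : Dm = ∅ := by
        rw [← Set.ncard_eq_zero (Set.toFinite _)]
        have : Dp.ncard = 0 := by rw [hDp]; simp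
        omega
      intro a
      have h1 : a ∉ Dp := by rw [hDp]; exact Set.notMem_empty a
      have h2 : a ∉ Dm := by rw [hDm]; exact Set.notMem_empty a
      rcases op_total hpref (N a) (B a) (hN.1 a) (hBadj a) with h | h | h
      · exact absurd ((hmemDp a).mpr h) h1
      · exact absurd ((hmemDm a).mpr h) h2
      · exact h
    · exfalso
      obtain ⟨a₀, ha₀⟩ := Set.nonempty_iff_ne_empty.mpr hDp
      have heqU : i₁ '' Dp ∪ i₂ '' Dp = Dp ∪ Dm := by
        apply Set.eq_of_subset_of_ncard_le hsubU _ (Set.toFinite _)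
        rw [e6, e3]; omega
      have hg : ∀ a ∈ Dp, ∃ a', a' ∈ Dp ∧ N a' = B a ∧ a' ≠ a := by
        intro a ha
        have hmem : a ∈ i₁ '' Dp ∪ i₂ '' Dp := by rw [heqU]; exact Set.mem_union_left _ ha
        have key : ∀ a' (ha' : a' ∈ Dp), i₁ a' = a ∨ i₂ a' = a →
            N a' = B a ∧ a' ≠ a := by
          intro a' ha' hii
          have hba : B a = N a' := by
            rcases hii with h | h
            · rw [← h]; exact (hI a' ha').2.1
            · rw [← h]; exact (hI a' ha').2.2.2.1
          refine ⟨hba.symm, ?_⟩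
          rintro rfl
          exact hnotown a' ha' hba
        rcases hmem with ⟨a', ha', hEq⟩ | ⟨a', ha', hEq⟩
        · exact ⟨a', ha', key a' ha' (Or.inl hEq)⟩
        · exact ⟨a', ha', key a' ha' (Or.inr hEq)⟩
      choose gf hg1 hg2 hg3 using hg
      set g : A → A := fun a => if h : a ∈ Dp then gf a h else a with hgdef
      have hgDp : ∀ a, ∀ ha : a ∈ Dp, g a ∈ Dp ∧ N (g a) = B a ∧ g a ≠ a := by
        intro a ha
        simp only [hgdef, dif_pos ha]
        exact ⟨hg1 a ha, hg2 a ha, hg3 a ha⟩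
      have hiter : ∀ k, g^[k] a₀ ∈ Dp := by
        intro k
        induction k with
        | zero => simpa using ha₀
        | succ n ih => rw [Function.iterate_succ_apply']; exact (hgDp _ ih).1
      obtain ⟨m, n, hmn, hEq⟩ : ∃ m n, m < n ∧ g^[m] a₀ = g^[n] a₀ := by
        obtain ⟨m, n, hne', hEq⟩ := Finite.exists_ne_map_eq_of_infinite (fun k => g^[k] a₀)
        rcases lt_or_gt_of_ne hne' with h | h
        · exact ⟨m, n, h, hEq⟩
        · exact ⟨n, m, h, hEq.symm⟩
      set x := g^[m] a₀ with hxdef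
      set p := n - m with hpdef
      have hp : 0 < p := by omega
      have hpx : g^[p] x = x := by
        rw [hxdef, ← Function.iterate_add_apply]
        have hpm : p + m = n := by omega
        rw [hpm, ← hEq]
      set Z : Set A := Set.range (fun k => g^[k] x) with hZdef
      have hxZ : x ∈ Z := ⟨0, rfl⟩
      have hZDp : Z ⊆ Dp := by
        rintro c ⟨k, rfl⟩
        show g^[k] x ∈ Dp
        rw [hxdef, ← Function.iterate_add_apply]
        exact hiter _
      have hZsurj : ∀ z ∈ Z, ∃ z' ∈ Z, g z' = z := by
        rintro z ⟨k, rfl⟩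
        refine ⟨g^[k + p - 1] x, ⟨k + p - 1, rfl⟩, ?_⟩
        show g (g^[k + p - 1] x) = g^[k] x
        have h1 : g^[k + p - 1 + 1] x = g (g^[k + p - 1] x) :=
          Function.iterate_succ_apply' g _ x
        have h2 : k + p - 1 + 1 = k + p := by omega
        rw [← h1, h2, Function.iterate_add_apply, hpx]
      set C : A → Option O := fun c => if c ∈ Z then N c else B c with hCdef
      apply hPO
      refine dom_of_suitable adj pref M₁ M₂ hne C ?_ ?_ ?_ ?_
      · intro a o h
        simp only [hCdef] at h
        split_ifs at h with hz
        · exact hN.1 a o h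
        · exact hBadj a o h
      · intro o
        by_cases hoz : ∃ a ∈ Z, N a = some o
        · obtain ⟨a, haZ, haN⟩ := hoz
          obtain ⟨z, hzZ, hgz⟩ := hZsurj a haZ
          have hzDp : z ∈ Dp := hZDp hzZ
          have hzB : B z = some o := by
            rw [← haN, ← hgz]
            exact ((hgDp z hzDp).2.1).symm
          have haDp : a ∈ Dp := hZDp haZ
          have hsubu : {c | C c = some o} ⊆ insert a ({c | B c = some o} \ {z}) := by
            intro c hc
            simp only [Set.mem_setOf_eq, hCdef] at hc
            split_ifs at hc with hcz
            · left
              obtain ⟨oa, hoa⟩ := hNsome a haDp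
              exact hN.2 c a o hc (by rw [haN])
            · right
              refine ⟨hc, ?_⟩
              simp only [Set.mem_singleton_iff]
              rintro rfl
              exact hcz hzZ
          calc {c | C c = some o}.ncard ≤ (insert a ({c | B c = some o} \ {z})).ncard :=
                Set.ncard_le_ncard hsubu (Set.toFinite _)
            _ ≤ ({c | B c = some o} \ {z}).ncard + 1 := Set.ncard_insert_le _ _
            _ ≤ 2 := by
                have h1 : ({c | B c = some o} \ {z}).ncard < {c | B c = some o}.ncard :=
                  Set.ncard_diff_singleton_lt_of_mem hzB (Set.toFinite _)
                have h2 := hBuse o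
                omega
        · have hsubu : {c | C c = some o} ⊆ {c | B c = some o} := by
            intro c hc
            simp only [Set.mem_setOf_eq, hCdef] at hc ⊢
            split_ifs at hc with hcz
            · exact absurd ⟨c, hcz, hc⟩ hoz
            · exact hc
          exact le_trans (Set.ncard_le_ncard hsubu (Set.toFinite _)) (hBuse o)
      · intro a
        simp only [hCdef]
        split_ifs with hz
        · have haDp : a ∈ Dp := hZDp hz
          have h1 := (hDpc N a).mpr ((hmemDp a).mp haDp)
          constructor
          · intro hcon
            exact op_asymm hpref hcon
              ((prefM_iff_op pref a N M₁).mp (h1 M₁ (Set.mem_insert _ _)))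
          · intro hcon
            exact op_asymm hpref hcon
              ((prefM_iff_op pref a N M₂).mp (h1 M₂ (Set.mem_insert_of_mem _ rfl)))
        · exact hBge a
      · refine ⟨x, ?_, ?_⟩ <;>
          have h1 := (hDpc N x).mpr ((hmemDp x).mp (hZDp hxZ)) <;>
          have hCx : C x = N x := by simp only [hCdef, if_pos hxZ]
        · rw [hCx]
          exact (prefM_iff_op pref x N M₁).mp (h1 M₁ (Set.mem_insert _ _))
        · rw [hCx]
          exact (prefM_iff_op pref x N M₂).mp (h1 M₂ (Set.mem_insert_of_mem _ rfl))
  -- rewrite φ into the D⁺/D⁻ form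
  have hphiOne : ∀ N : A → Option O,
      phiOne pref N {M₁, M₂} = {a | OP pref a (N a) (B a)}.ncard := by
    intro N
    unfold phiOne
    congr 1
    ext a
    simp only [Set.mem_setOf_eq]
    exact hDpc N a
  have hphiSet : ∀ N : A → Option O,
      phiSet pref {M₁, M₂} N = {a | OP pref a (B a) (N a)}.ncard := by
    intro N
    unfold phiSet
    congr 1
    ext a
    simp only [Set.mem_setOf_eq]
    exact hDmc N a
  constructor
  · intro N hNF
    rw [hphiOne, hphiSet]
    exact (main N hNF).1
  · by_cases hs : StronglyPopular pref {M | IsMatching adj M} {M₁, M₂}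
    · exact Or.inl hs
    · right
      unfold StronglyPopular at hs
      push_neg at hs
      obtain ⟨N, hNF, hNmem, hle⟩ := hs
      rw [hphiOne, hphiSet] at hle
      have hNM : IsMatching adj N := hNF
      have hNB : ∀ a, N a = B a := (main N hNM).2 hle
      refine ⟨N, hNF, ?_⟩
      rintro a ⟨N', hN'F, hP⟩
      have hN'M : IsMatching adj N' := hN'F
      rw [prefM_iff_op] at hP
      obtain ⟨o, hN'a⟩ := op_some_left hP
      have hadja : adj a o := hN'M.1 a o hN'a
      rw [hN'a, hNB a] at hP
      have h2 := hT a o hadja hP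
      have hset : {c | B c = some o} = {c | N c = some o} := by
        ext c; simp only [Set.mem_setOf_eq]; rw [hNB c]
      rw [hset] at h2
      have := matching_usage hNM o
      omega
end

section
/- Let (G, ≻) be a matching instance with strict rankings, let ℳ = {M₁, M₂} be a Pareto-optimal set of two matchings in G such that every agent is matched in at most one of M₁ and M₂, and let N be any matching in G. Then for every agent a such that N ≻_a M₁ and N ≻_a M₂, there exist two distinct agents b₁ ≠ b₂ with M₁(b₁) = N(a) = M₂(b₂), and each bᵢ (i = 1, 2) satisfies N(bᵢ) ≠ Mᵢ(bᵢ), i.e., bᵢ is not indifferent between ℳ and N. -/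
open scoped Classical

lemma prefm_not_self {A O : Type*} {adj : A → O → Prop} {pref : A → O → O → Prop}
    (hpref : IsPrefOrder adj pref) (a : A) {M M' : A → Option O} (h : M a = M' a) :
    ¬ PrefM pref a M M' := by
  rintro (⟨o, o', h1, h2, h3⟩ | ⟨o, h1, h2⟩)
  · rw [h, h2] at h1
    injection h1 with he
    subst he
    exact (hpref a).1 _ h3
  · rw [h, h2] at h1
    cases h1

lemma pref_asymm {A O : Type*} {adj : A → O → Prop} {pref : A → O → O → Prop}
    (hpref : IsPrefOrder adj pref) (a : A) {o o' : O} (h1 : pref a o o') :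
    ¬ pref a o' o :=
  fun h2 => (hpref a).1 o ((hpref a).2.1 _ _ _ h1 h2)

lemma exists_assigned {A O : Type*}
    {adj : A → O → Prop} {pref : A → O → O → Prop}
    (hpref : IsStrictRanking adj pref)
    {M M' : A → Option O} (hM : IsMatching adj M) (hM' : IsMatching adj M')
    (hne : M ≠ M')
    (honce : ∀ a : A, M a = none ∨ M' a = none)
    (hPO : ParetoOptimal pref {X | IsMatching adj X} {M, M'})
    {N : A → Option O} (hN : IsMatching adj N) {a : A} {o : O} (hNa : N a = some o)
    (h1 : PrefM pref a N M) (h2 : PrefM pref a N M') :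
    ∃ b : A, b ≠ a ∧ M b = some o := by
  have hpo := hpref.1
  -- facts about M a and M' a
  have hMa : M a = none ∨ ∃ o₂, M a = some o₂ ∧ pref a o o₂ := by
    rcases h1 with ⟨o₁, o₂, hn, hm, hp⟩ | ⟨o₁, hn, hm⟩
    · rw [hNa] at hn; injection hn with he; subst he; exact Or.inr ⟨o₂, hm, hp⟩
    · exact Or.inl hm
  have hM'a : M' a = none ∨ ∃ o₂, M' a = some o₂ ∧ pref a o o₂ := by
    rcases h2 with ⟨o₁, o₂, hn, hm, hp⟩ | ⟨o₁, hn, hm⟩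
    · rw [hNa] at hn; injection hn with he; subst he; exact Or.inr ⟨o₂, hm, hp⟩
    · exact Or.inl hm
  have hanot : M a ≠ some o := by
    rcases hMa with h | ⟨o₂, hm, hp⟩
    · rw [h]; exact fun hc => by cases hc
    · rw [hm]; intro hc; injection hc with he; subst he; exact (hpo a).1 _ hp
  by_contra hno
  push_neg at hno
  have hno' : ∀ b, M b ≠ some o := by
    intro b hb
    by_cases hba : b = a
    · exact hanot (hba ▸ hb)
    · exact hno b hba hb
  -- the improved matching
  set M'' : A → Option O := fun b => if b = a then some o else M b with hM''def
  have hM''a : M'' a = some o := if_pos rfl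
  have hM''ne : ∀ b, b ≠ a → M'' b = M b := fun b hb => if_neg hb
  have hmatch : IsMatching adj M'' := by
    constructor
    · intro b o'' hb
      by_cases hba : b = a
      · rw [hba, hM''a] at hb; injection hb with he; subst he
        rw [hba]; exact hN.1 a o hNa
      · rw [hM''ne b hba] at hb; exact hM.1 b o'' hb
    · intro b b' o'' hb hb'
      by_cases hba : b = a <;> by_cases hb'a : b' = a
      · rw [hba, hb'a]
      · rw [hba, hM''a] at hb; injection hb with he; subst he
        rw [hM''ne b' hb'a] at hb'
        exact absurd hb' (hno' b')
      · rw [hb'a, hM''a] at hb'; injection hb' with he; subst he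
        rw [hM''ne b hba] at hb
        exact absurd hb (hno' b)
      · rw [hM''ne b hba] at hb; rw [hM''ne b' hb'a] at hb'
        exact hM.2 b b' o'' hb hb'
  have hnotMM'' : ¬ PrefM pref a M M'' := by
    rintro (⟨o₁, o₂, hx, hy, hp⟩ | ⟨o₁, hx, hy⟩)
    · rw [hM''a] at hy; injection hy with he; subst he
      rcases hMa with h | ⟨o₂', hm, hp'⟩
      · rw [h] at hx; cases hx
      · rw [hm] at hx; injection hx with he; subst he
        exact pref_asymm hpo a hp' hp
    · rw [hM''a] at hy; cases hy
  have hnotM'M'' : ¬ PrefM pref a M' M'' := by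
    rintro (⟨o₁, o₂, hx, hy, hp⟩ | ⟨o₁, hx, hy⟩)
    · rw [hM''a] at hy; injection hy with he; subst he
      rcases hM'a with h | ⟨o₂', hm, hp'⟩
      · rw [h] at hx; cases hx
      · rw [hm] at hx; injection hx with he; subst he
        exact pref_asymm hpo a hp' hp
    · rw [hM''a] at hy; cases hy
  apply hPO
  refine ⟨{M'', M'}, ?_, ?_, ?_, ?_⟩
  · intro X hX
    rcases hX with rfl | hX
    · exact hmatch
    · rw [Set.mem_singleton_iff] at hX; subst hX; exact hM'
  · calc ({M'', M'} : Set (A → Option O)).ncard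
        ≤ ({M'} : Set (A → Option O)).ncard + 1 := Set.ncard_insert_le _ _
      _ = 2 := by rw [Set.ncard_singleton]
      _ = ({M, M'} : Set (A → Option O)).ncard := (Set.ncard_pair hne).symm
  · intro a'
    by_cases ha' : a' = a
    · subst ha'
      refine ⟨M'', Or.inl rfl, ?_⟩
      intro MZ hMZ
      rcases hMZ with rfl | hMZ
      · exact hnotMM''
      · rw [Set.mem_singleton_iff] at hMZ; subst hMZ; exact hnotM'M''
    · rcases honce a' with h | h
      · refine ⟨M', Or.inr rfl, ?_⟩
        intro MZ hMZ
        rcases hMZ with rfl | hMZ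
        · rintro (⟨o₁, o₂, hx, hy, hp⟩ | ⟨o₁, hx, hy⟩) <;> rw [h] at hx <;> cases hx
        · rw [Set.mem_singleton_iff] at hMZ; subst hMZ
          exact prefm_not_self hpo a' rfl
      · refine ⟨M'', Or.inl rfl, ?_⟩
        intro MZ hMZ
        rcases hMZ with rfl | hMZ
        · exact prefm_not_self hpo a' (hM''ne a' ha').symm
        · rw [Set.mem_singleton_iff] at hMZ; subst hMZ
          rintro (⟨o₁, o₂, hx, hy, hp⟩ | ⟨o₁, hx, hy⟩) <;> rw [h] at hx <;> cases hx
  · refine ⟨a, M'', Or.inl rfl, ?_⟩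
    intro MZ hMZ
    rcases hMZ with rfl | hMZ
    · rcases hMa with h | ⟨o₂, hm, hp⟩
      · exact Or.inr ⟨o, hM''a, h⟩
      · exact Or.inl ⟨o, o₂, hM''a, hm, hp⟩
    · rw [Set.mem_singleton_iff] at hMZ; subst hMZ
      rcases hM'a with h | ⟨o₂, hm, hp⟩
      · exact Or.inr ⟨o, hM''a, h⟩
      · exact Or.inl ⟨o, o₂, hM''a, hm, hp⟩

/-- Under strict rankings, for a Pareto-optimal set `{M₁, M₂}` in which
every agent is matched in at most one of the two matchings, every agent preferring `N`
to both matchings yields two distinct agents receiving `N(a)` in `M₁` and `M₂`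
respectively, neither of whom is indifferent between `{M₁, M₂}` and `N`. -/
theorem exists_two_successors
    {A O : Type*} [Fintype A] [Fintype O]
    (adj : A → O → Prop) (pref : A → O → O → Prop)
    (hpref : IsStrictRanking adj pref)
    (M₁ M₂ : A → Option O) (hM₁ : IsMatching adj M₁) (hM₂ : IsMatching adj M₂)
    (hne : M₁ ≠ M₂)
    (honce : ∀ a : A, M₁ a = none ∨ M₂ a = none)
    (hPO : ParetoOptimal pref {M | IsMatching adj M} {M₁, M₂})
    (N : A → Option O) (hN : IsMatching adj N) :
    ∀ a : A, PrefM pref a N M₁ → PrefM pref a N M₂ →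
      ∃ b₁ b₂ : A, b₁ ≠ b₂ ∧ M₁ b₁ = N a ∧ M₂ b₂ = N a ∧
        N b₁ ≠ M₁ b₁ ∧ N b₂ ≠ M₂ b₂ := by

  intro a h1 h2
  obtain ⟨o, hNa⟩ : ∃ o, N a = some o := by
    rcases h1 with ⟨o₁, o₂, hn, _, _⟩ | ⟨o₁, hn, _⟩ <;> exact ⟨o₁, hn⟩
  obtain ⟨b₁, hb₁a, hb₁⟩ := exists_assigned hpref hM₁ hM₂ hne honce hPO hN hNa h1 h2
  obtain ⟨b₂, hb₂a, hb₂⟩ := exists_assigned hpref hM₂ hM₁ hne.symm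
    (fun a => (honce a).symm) (Set.pair_comm M₁ M₂ ▸ hPO) hN hNa h2 h1
  refine ⟨b₁, b₂, ?_, ?_, ?_, ?_, ?_⟩
  · intro he
    subst he
    rcases honce b₁ with h | h
    · rw [h] at hb₁; cases hb₁
    · rw [h] at hb₂; cases hb₂
  · rw [hb₁, hNa]
  · rw [hb₂, hNa]
  · intro h
    exact hb₁a (hN.2 b₁ a o (h.trans hb₁) hNa)
  · intro h
    exact hb₂a (hN.2 b₂ a o (h.trans hb₂) hNa)
end

section
/- Let (G, ℐ, ≻) be a matroid-constrained matching instance with partial-order preferences. Then every Pareto-optimal set ℳ of ℐ-constrained matchings in G with |ℳ| ≥ 2 is popular among ℐ-constrained matchings. -/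
open scoped Classical

/-- The set `M(A)` of objects matched to agents. -/
def matchedObjs {A O : Type*} (M : A → Option O) : Set O := {o | ∃ a, M a = some o}

/-- A matching is `ℐ`-constrained if the set of matched objects is independent. -/
def IsConstrained {A O : Type*} (adj : A → O → Prop) (Mat : Matroid O)
    (M : A → Option O) : Prop :=
  IsMatching adj M ∧ Mat.Indep (matchedObjs M)

private lemma exists_maximal_rel' {γ : Type*} (r : γ → γ → Prop)
    (htrans : ∀ x y z, r x y → r y z → r x z)
    (hirr : ∀ x, ¬ r x x) :
    ∀ S : Finset γ, S.Nonempty → ∃ m ∈ S, ∀ s ∈ S, ¬ r s m := by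
  classical
  intro S
  induction S using Finset.strongInduction with
  | _ S ih =>
    intro hS
    obtain ⟨a, ha⟩ := hS
    by_cases hTe : (S.filter fun s => r s a).Nonempty
    · have hss : S.filter (fun s => r s a) ⊂ S :=
        Finset.filter_ssubset.mpr ⟨a, ha, hirr a⟩
      obtain ⟨m, hmT, hmax⟩ := ih _ hss hTe
      rw [Finset.mem_filter] at hmT
      refine ⟨m, hmT.1, fun s hs hr => ?_⟩
      exact hmax s (Finset.mem_filter.mpr ⟨hs, htrans _ _ _ hr hmT.2⟩) hr
    · exact ⟨a, ha, fun s hs hr => hTe ⟨s, Finset.mem_filter.mpr ⟨hs, hr⟩⟩⟩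

private lemma key_exchange' {A O : Type*} (Mat : Matroid O)
    (P Q R : Finset A) (x y : A → O)
    (hPQR : Disjoint (P ∪ Q) R) (hQR : Disjoint Q R)
    (hxinj : Set.InjOn x ↑(P ∪ Q)) (hxind : Mat.Indep (x '' ↑(P ∪ Q)))
    (hyinj : Set.InjOn y ↑(Q ∪ R)) (hyind : Mat.Indep (y '' ↑(Q ∪ R)))
    (hcard : P.card < R.card) :
    ∃ F : Finset A, F ⊆ Q ∧ ∃ r ∈ R,
      Set.InjOn (fun a => if a ∈ F ∨ a = r then y a else x a) ↑(P ∪ Q ∪ {r}) ∧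
      Mat.Indep ((fun a => if a ∈ F ∨ a = r then y a else x a) '' ↑(P ∪ Q ∪ {r})) := by
  classical
  suffices main : ∀ n (F : Finset A), F ⊆ Q → (Q \ F).card = n →
      Set.InjOn (fun a => if a ∈ F then y a else x a) ↑(P ∪ Q) →
      Mat.Indep ((fun a => if a ∈ F then y a else x a) '' ↑(P ∪ Q)) →
      ∃ F' : Finset A, F' ⊆ Q ∧ ∃ r ∈ R,
        Set.InjOn (fun a => if a ∈ F' ∨ a = r then y a else x a) ↑(P ∪ Q ∪ {r}) ∧
        Mat.Indep ((fun a => if a ∈ F' ∨ a = r then y a else x a) '' ↑(P ∪ Q ∪ {r})) by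
    have h0 : (fun a => if a ∈ (∅ : Finset A) then y a else x a) = x := by
      funext a; simp
    apply main (Q \ ∅).card ∅ (Finset.empty_subset Q) rfl
    · rw [h0]; exact hxinj
    · rw [h0]; exact hxind
  intro n
  induction n using Nat.strong_induction_on with
  | _ n ih =>
    intro F hFQ hn hinj hind
    set u : A → O := fun a => if a ∈ F then y a else x a with hu
    have h1 : (u '' ↑(P ∪ Q)).encard = ((P ∪ Q).card : ℕ∞) := by
      rw [hinj.encard_image, Set.encard_coe_eq_coe_finsetCard]
    have h2 : (y '' ↑(Q ∪ R)).encard = ((Q ∪ R).card : ℕ∞) := by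
      rw [hyinj.encard_image, Set.encard_coe_eq_coe_finsetCard]
    have hlt : (P ∪ Q).card < (Q ∪ R).card := by
      have hle := Finset.card_union_le P Q
      rw [Finset.card_union_of_disjoint hQR]
      omega
    have hIcard : (u '' ↑(P ∪ Q)).encard < (y '' ↑(Q ∪ R)).encard := by
      rw [h1, h2]; exact_mod_cast hlt
    obtain ⟨z, hz, hins⟩ := hind.augment hyind hIcard
    obtain ⟨hzJ, hzI⟩ := hz
    obtain ⟨a, haQR, hza⟩ := hzJ
    have haQR' : a ∈ Q ∪ R := by exact_mod_cast haQR
    rcases Finset.mem_union.mp haQR' with haQ | haR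
    · -- swap case
      have haPQ : a ∈ (↑(P ∪ Q) : Set A) := by
        exact_mod_cast Finset.mem_union.mpr (Or.inr haQ)
      have haF : a ∉ F := by
        intro haF
        exact hzI ⟨a, haPQ, by simp [hu, haF, hza]⟩
      have hsub : (Q \ insert a F).card < n := by
        rw [← hn]
        apply Finset.card_lt_card
        constructor
        · intro b hb
          rw [Finset.mem_sdiff] at hb ⊢
          exact ⟨hb.1, fun h => hb.2 (Finset.mem_insert_of_mem h)⟩
        · intro hcon
          have := hcon (Finset.mem_sdiff.mpr ⟨haQ, haF⟩)
          rw [Finset.mem_sdiff] at this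
          exact this.2 (Finset.mem_insert_self a F)
      set u' : A → O := fun b => if b ∈ insert a F then y b else x b with hu'
      have hufun : ∀ b, b ≠ a → u' b = u b := by
        intro b hb; simp only [hu, hu', Finset.mem_insert]
        by_cases hbF : b ∈ F <;> simp [hbF, hb]
      have hua : u' a = z := by simp [hu', hza]
      have himg : u' '' ↑(P ∪ Q) ⊆ insert z (u '' ↑(P ∪ Q)) := by
        rintro _ ⟨b, hb, rfl⟩
        by_cases hba : b = a
        · subst hba; rw [hua]; exact Set.mem_insert _ _
        · rw [hufun b hba]; exact Set.mem_insert_of_mem _ ⟨b, hb, rfl⟩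
      have hinj' : Set.InjOn u' ↑(P ∪ Q) := by
        intro s hs t ht heq
        by_cases hsa : s = a <;> by_cases hta : t = a
        · rw [hsa, hta]
        · exfalso
          apply hzI
          subst hsa
          rw [hua, hufun t hta] at heq
          exact ⟨t, ht, heq.symm⟩
        · exfalso
          apply hzI
          subst hta
          rw [hua, hufun s hsa] at heq
          exact ⟨s, hs, heq⟩
        · rw [hufun s hsa, hufun t hta] at heq
          exact hinj hs ht heq
      exact ih _ hsub (insert a F) (Finset.insert_subset haQ hFQ) rfl hinj' (hins.subset himg)
    · -- finish case
      refine ⟨F, hFQ, a, haR, ?_⟩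
      have hra : a ∉ P ∪ Q := fun h => Finset.disjoint_left.mp hPQR h haR
      set w : A → O := fun c => if c ∈ F ∨ c = a then y c else x c with hw
      have hfun : ∀ b ∈ (↑(P ∪ Q) : Set A), w b = u b := by
        intro b hb
        have hba : b ≠ a := by rintro rfl; exact hra (by exact_mod_cast hb)
        by_cases hbF : b ∈ F <;> simp [hw, hu, hbF, hba]
      have hwa : w a = z := by
        have : (a ∈ F ∨ a = a) := Or.inr rfl
        simp only [hw, if_pos this]; exact hza
      have hset : (↑(P ∪ Q ∪ {a}) : Set A) = insert a ↑(P ∪ Q) := by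
        push_cast
        rw [Set.union_singleton]
      have himg : w '' ↑(P ∪ Q ∪ {a}) = insert z (u '' ↑(P ∪ Q)) := by
        rw [hset, Set.image_insert_eq, hwa]
        congr 1
        apply Set.image_congr hfun
      constructor
      · -- InjOn
        rw [hset]
        intro s hs t ht heq
        rcases Set.mem_insert_iff.mp hs with hsa | hs' <;>
          rcases Set.mem_insert_iff.mp ht with hta | ht'
        · rw [hsa, hta]
        · exfalso; apply hzI
          subst hsa
          rw [hwa, hfun t ht'] at heq
          exact ⟨t, ht', heq.symm⟩
        · exfalso; apply hzI
          subst hta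
          rw [hwa, hfun s hs'] at heq
          exact ⟨s, hs', heq⟩
        · rw [hfun s hs', hfun t ht'] at heq
          exact hinj hs' ht' heq
      · rw [himg]; exact hins


/-- In a matroid-constrained matching instance with partial-order
preferences, every Pareto-optimal set of at least two `ℐ`-constrained matchings is
popular among the `ℐ`-constrained matchings. -/
theorem pareto_optimal_popular_matroid
    {A O : Type*} [Fintype A] [Fintype O]
    (adj : A → O → Prop) (pref : A → O → O → Prop)
    (hpref : IsPrefOrder adj pref)
    (Mat : Matroid O) (hE : Mat.E = Set.univ)
    (Mset : Set (A → Option O))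
    (hfeas : ∀ M ∈ Mset, IsConstrained adj Mat M)
    (hcard : 2 ≤ Mset.ncard)
    (hPO : ParetoOptimal pref {M | IsConstrained adj Mat M} Mset) :
    Popular pref {M | IsConstrained adj Mat M} Mset := by
  classical
  intro N hN
  by_contra hlt'
  push_neg at hlt'
  set G : Set A := {a : A | ∀ M ∈ Mset, PrefM pref a N M} with hGdef
  set B : Set A := {a : A | ∃ M ∈ Mset, PrefM pref a M N} with hBdef
  have hBG : B.ncard < G.ncard := hlt'
  have hMfin : Mset.Finite := Set.toFinite _
  have hMne : Mset.Nonempty := by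
    rcases Set.eq_empty_or_nonempty Mset with h | h
    · rw [h] at hcard; simp at hcard
    · exact h
  obtain ⟨M₁, hM₁⟩ := hMne
  have hGne : G.Nonempty := by
    have h0 : 0 < G.ncard := lt_of_le_of_lt (Nat.zero_le _) hBG
    exact (Set.ncard_pos (Set.toFinite _)).mp h0
  obtain ⟨g₀, hg₀G⟩ := hGne
  have hNg₀ : ∃ o, N g₀ = some o := by
    rcases hg₀G M₁ hM₁ with ⟨o, o', h1, _⟩ | ⟨o, h1, _⟩ <;> exact ⟨o, h1⟩
  obtain ⟨o₀, -⟩ := hNg₀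
  have prefM_trans : ∀ (a : A) (M₂ M₃ M₄ : A → Option O),
      PrefM pref a M₂ M₃ → PrefM pref a M₃ M₄ → PrefM pref a M₂ M₄ := by
    intro a M₂ M₃ M₄ h12 h23
    rcases h12 with ⟨o, o', h2, h3, hp⟩ | ⟨o, h2, h3⟩ <;>
      rcases h23 with ⟨p, p', h3', h4, hp'⟩ | ⟨p, h3', h4⟩
    · rw [h3'] at h3; injection h3 with h3; subst h3
      exact Or.inl ⟨o, p', h2, h4, (hpref a).2.1 _ _ _ hp hp'⟩
    · exact Or.inr ⟨o, h2, h4⟩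
    · rw [h3'] at h3; cases h3
    · rw [h3'] at h3; cases h3
  have prefM_irrefl : ∀ (a : A) (M₂ : A → Option O), ¬ PrefM pref a M₂ M₂ := by
    intro a M₂ h
    rcases h with ⟨o, o', h1, h2, hp⟩ | ⟨o, h1, h2⟩
    · rw [h1] at h2; injection h2 with h2; subst h2; exact (hpref a).1 o hp
    · rw [h1] at h2; cases h2
  have hmaxex : ∀ a : A, ∃ Mx ∈ Mset, ∀ M' ∈ Mset, ¬ PrefM pref a M' Mx := by
    intro a
    obtain ⟨m, hm, hmax⟩ := exists_maximal_rel' (fun M M' => PrefM pref a M M')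
      (fun _ _ _ => prefM_trans a _ _ _) (fun M => prefM_irrefl a M) hMfin.toFinset
      ⟨M₁, hMfin.mem_toFinset.mpr hM₁⟩
    exact ⟨m, hMfin.mem_toFinset.mp hm, fun M' hM' => hmax M' (hMfin.mem_toFinset.mpr hM')⟩
  set U : (A → Option O) → Set A := fun M₀ => {a : A |
    (∀ M' ∈ Mset, ¬ PrefM pref a M' M₀) ∧
    (∀ M ∈ Mset, (∀ M' ∈ Mset, ¬ PrefM pref a M' M) → M = M₀) ∧
    M₀ a ≠ none} with hUdef
  -- KEY STEP
  have key : ∀ M₀, M₀ ∈ Mset → (G \ U M₀).ncard ≤ (U M₀ ∩ B).ncard := by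
    intro M₀ hM₀
    by_contra hkey
    push_neg at hkey
    have hM₀c := hfeas M₀ hM₀
    have hNc : IsConstrained adj Mat N := hN
    set P : Finset A := (U M₀ ∩ B).toFinset with hPdef
    set Q : Finset A := (U M₀ \ B).toFinset with hQdef
    set R : Finset A := (G \ U M₀).toFinset with hRdef
    set x : A → O := fun a => (M₀ a).getD o₀ with hxdef
    set y : A → O := fun a => (N a).getD o₀ with hydef
    have hPmem : ∀ a, a ∈ P ↔ a ∈ U M₀ ∧ a ∈ B := by
      intro a; rw [hPdef, Set.mem_toFinset]; exact Set.mem_inter_iff a _ _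
    have hQmem : ∀ a, a ∈ Q ↔ a ∈ U M₀ ∧ a ∉ B := by
      intro a; rw [hQdef, Set.mem_toFinset]; exact Set.mem_diff a
    have hRmem : ∀ a, a ∈ R ↔ a ∈ G ∧ a ∉ U M₀ := by
      intro a; rw [hRdef, Set.mem_toFinset]; exact Set.mem_diff a
    have hPQ_U : ∀ a, a ∈ P ∪ Q → a ∈ U M₀ := by
      intro a ha
      rcases Finset.mem_union.mp ha with h | h
      · exact ((hPmem a).mp h).1
      · exact ((hQmem a).mp h).1
    have hMx : ∀ a, a ∈ P ∪ Q → M₀ a = some (x a) := by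
      intro a ha
      have haU := hPQ_U a ha
      cases hka : M₀ a with
      | none => exact absurd hka haU.2.2
      | some o => rw [hxdef]; simp [hka]
    have hNy : ∀ a, a ∈ Q ∪ R → N a = some (y a) := by
      intro a ha
      have hsome : ∃ o, N a = some o := by
        rcases Finset.mem_union.mp ha with haQ | haR
        · obtain ⟨haU, haB⟩ := (hQmem a).mp haQ
          cases hNa : N a with
          | some o => exact ⟨o, rfl⟩
          | none =>
            exfalso
            apply haB
            exact ⟨M₀, hM₀, Or.inr ⟨x a, hMx a (Finset.mem_union_right _ haQ), hNa⟩⟩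
        · obtain ⟨haG, -⟩ := (hRmem a).mp haR
          rcases haG M₁ hM₁ with ⟨o, o', h1, _⟩ | ⟨o, h1, _⟩ <;> exact ⟨o, h1⟩
      obtain ⟨o, ho⟩ := hsome
      rw [ho, hydef]; simp [ho]
    have hxinj : Set.InjOn x ↑(P ∪ Q) := by
      intro s hs t ht heq
      have hs' := hMx s (by exact_mod_cast hs)
      have ht' := hMx t (by exact_mod_cast ht)
      rw [heq] at hs'
      exact hM₀c.1.2 s t (x t) hs' ht'
    have hxind : Mat.Indep (x '' ↑(P ∪ Q)) := by
      apply hM₀c.2.subset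
      rintro _ ⟨a, ha, rfl⟩
      exact ⟨a, hMx a (by exact_mod_cast ha)⟩
    have hyinj : Set.InjOn y ↑(Q ∪ R) := by
      intro s hs t ht heq
      have hs' := hNy s (by exact_mod_cast hs)
      have ht' := hNy t (by exact_mod_cast ht)
      rw [heq] at hs'
      exact hNc.1.2 s t (y t) hs' ht'
    have hyind : Mat.Indep (y '' ↑(Q ∪ R)) := by
      apply hNc.2.subset
      rintro _ ⟨a, ha, rfl⟩
      exact ⟨a, hNy a (by exact_mod_cast ha)⟩
    have hQRdisj : Disjoint Q R := by
      rw [Finset.disjoint_left]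
      intro a haQ haR
      exact ((hRmem a).mp haR).2 ((hQmem a).mp haQ).1
    have hPQRdisj : Disjoint (P ∪ Q) R := by
      rw [Finset.disjoint_left]
      intro a ha haR
      exact ((hRmem a).mp haR).2 (hPQ_U a ha)
    have hcardPR : P.card < R.card := by
      have h1 : P.card = (U M₀ ∩ B).ncard := by
        rw [hPdef, Set.ncard_eq_toFinset_card']
      have h2 : R.card = (G \ U M₀).ncard := by
        rw [hRdef, Set.ncard_eq_toFinset_card']
      omega
    obtain ⟨F, hFQ, r, hrR, hZinj, hZind⟩ := key_exchange' Mat P Q R x y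
      hPQRdisj hQRdisj hxinj hxind hyinj hyind hcardPR
    set S : Finset A := P ∪ Q ∪ {r} with hSdef
    set u : A → O := fun a => if a ∈ F ∨ a = r then y a else x a with hudef
    set Z : A → Option O := fun a => if a ∈ S then some (u a) else none with hZdef
    have hZval : ∀ a, a ∈ S → Z a = some (u a) := by
      intro a ha; rw [hZdef]; simp [ha]
    have hZnone : ∀ a, a ∉ S → Z a = none := by
      intro a ha; rw [hZdef]; simp [ha]
    have hrPQ : r ∉ P ∪ Q := fun h => Finset.disjoint_left.mp hPQRdisj h hrR
    have huy : ∀ a, (a ∈ F ∨ a = r) → N a = some (u a) := by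
      intro a ha
      have haQR : a ∈ Q ∪ R := by
        rcases ha with h | rfl
        · exact Finset.mem_union_left _ (hFQ h)
        · exact Finset.mem_union_right _ hrR
      have h1 := hNy a haQR
      rw [hudef]; simp only [if_pos ha]; exact h1
    have hux : ∀ a, a ∈ P ∪ Q → ¬(a ∈ F ∨ a = r) → M₀ a = some (u a) := by
      intro a ha hcond
      have h1 := hMx a ha
      rw [hudef]; simp only [if_neg hcond]; exact h1
    have hSsplit : ∀ a, a ∈ S → a ∈ P ∪ Q ∨ a = r := by
      intro a ha
      rcases Finset.mem_union.mp ha with h | h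
      · exact Or.inl h
      · exact Or.inr (Finset.mem_singleton.mp h)
    have hZmatch : IsMatching adj Z := by
      constructor
      · intro a o hao
        by_cases haS : a ∈ S
        · rw [hZval a haS] at hao
          injection hao with hao
          subst hao
          by_cases hcond : a ∈ F ∨ a = r
          · exact hNc.1.1 a _ (huy a hcond)
          · have haPQ : a ∈ P ∪ Q := by
              rcases hSsplit a haS with h | h
              · exact h
              · exact absurd (Or.inr h) hcond
            exact hM₀c.1.1 a _ (hux a haPQ hcond)
        · rw [hZnone a haS] at hao; cases hao
      · intro a a' o ha ha'
        by_cases haS : a ∈ S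
        · by_cases haS' : a' ∈ S
          · rw [hZval a haS] at ha
            rw [hZval a' haS'] at ha'
            injection ha with ha
            injection ha' with ha'
            exact hZinj (by exact_mod_cast haS) (by exact_mod_cast haS') (by rw [ha, ha'])
          · rw [hZnone a' haS'] at ha'; cases ha'
        · rw [hZnone a haS] at ha; cases ha
    have hZobjs : matchedObjs Z = u '' ↑S := by
      ext o
      constructor
      · rintro ⟨a, ha⟩
        by_cases haS : a ∈ S
        · rw [hZval a haS] at ha
          injection ha with ha
          exact ⟨a, by exact_mod_cast haS, ha⟩
        · rw [hZnone a haS] at ha; cases ha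
      · rintro ⟨a, ha, rfl⟩
        exact ⟨a, hZval a (by exact_mod_cast ha)⟩
    have hZcons : IsConstrained adj Mat Z := ⟨hZmatch, by rw [hZobjs]; exact hZind⟩
    apply hPO
    refine ⟨insert Z (Mset \ {M₀}), ?_, ?_, ?_, ?_⟩
    · rintro W hW
      rcases Set.mem_insert_iff.mp hW with rfl | ⟨hW1, -⟩
      · exact hZcons
      · exact hfeas W hW1
    · calc (insert Z (Mset \ {M₀})).ncard ≤ (Mset \ {M₀}).ncard + 1 :=
            Set.ncard_insert_le _ _
        _ = Mset.ncard - 1 + 1 := by rw [Set.ncard_diff_singleton_of_mem hM₀]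
        _ = Mset.ncard := by omega
    · -- coverage
      intro a
      by_cases hcase : ∃ M' ∈ Mset, M' ≠ M₀ ∧ ∀ M'' ∈ Mset, ¬ PrefM pref a M'' M'
      · obtain ⟨M', hM', hneM, hmax'⟩ := hcase
        exact ⟨M', Set.mem_insert_iff.mpr (Or.inr ⟨hM', hneM⟩),
          fun MZ hMZ => hmax' MZ hMZ⟩
      · push_neg at hcase
        obtain ⟨Mx, hMx', hmaxx⟩ := hmaxex a
        have hMxM₀ : Mx = M₀ := by
          by_contra hne
          obtain ⟨M'', hM'', hpf⟩ := hcase Mx hMx' hne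
          exact hmaxx M'' hM'' hpf
        have hM₀max : ∀ M' ∈ Mset, ¬ PrefM pref a M' M₀ := by
          rw [← hMxM₀]; exact hmaxx
        have huniq : ∀ M ∈ Mset, (∀ M' ∈ Mset, ¬ PrefM pref a M' M) → M = M₀ := by
          intro M hM hMmax
          by_contra hne
          obtain ⟨M'', hM'', hpf⟩ := hcase M hM hne
          exact hMmax M'' hM'' hpf
        by_cases hnone : M₀ a = none
        · refine ⟨Z, Set.mem_insert _ _, fun MZ hMZ hpf => ?_⟩
          have hMZnone : MZ a = none := by
            cases hMZa : MZ a with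
            | none => rfl
            | some o => exact absurd (Or.inr ⟨o, hMZa, hnone⟩) (hM₀max MZ hMZ)
          rcases hpf with ⟨o, o', h1, -, -⟩ | ⟨o, h1, -⟩ <;>
            rw [hMZnone] at h1 <;> cases h1
        · have haU : a ∈ U M₀ := ⟨hM₀max, huniq, hnone⟩
          have haPQ : a ∈ P ∪ Q := by
            by_cases haB : a ∈ B
            · exact Finset.mem_union_left _ ((hPmem a).mpr ⟨haU, haB⟩)
            · exact Finset.mem_union_right _ ((hQmem a).mpr ⟨haU, haB⟩)
          have haS : a ∈ S := Finset.mem_union_left _ haPQ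
          refine ⟨Z, Set.mem_insert _ _, fun MZ hMZ hpf => ?_⟩
          by_cases hcond : a ∈ F ∨ a = r
          · have haB : a ∉ B := by
              rcases hcond with hF | rfl
              · exact ((hQmem a).mp (hFQ hF)).2
              · exact absurd haU ((hRmem a).mp hrR).2
            apply haB
            refine ⟨MZ, hMZ, ?_⟩
            have hZa : Z a = N a := by rw [hZval a haS, huy a hcond]
            rcases hpf with ⟨o, o', h1, h2, hp⟩ | ⟨o, h1, h2⟩
            · exact Or.inl ⟨o, o', h1, by rw [← hZa]; exact h2, hp⟩
            · exact Or.inr ⟨o, h1, by rw [← hZa]; exact h2⟩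
          · apply hM₀max MZ hMZ
            have hZa : Z a = M₀ a := by rw [hZval a haS, hux a haPQ hcond]
            rcases hpf with ⟨o, o', h1, h2, hp⟩ | ⟨o, h1, h2⟩
            · exact Or.inl ⟨o, o', h1, by rw [← hZa]; exact h2, hp⟩
            · exact Or.inr ⟨o, h1, by rw [← hZa]; exact h2⟩
    · -- strict improvement at r
      have hrG : r ∈ G := ((hRmem r).mp hrR).1
      have hrS : r ∈ S := Finset.mem_union_right _ (Finset.mem_singleton_self r)
      have hZr : Z r = N r := by rw [hZval r hrS, huy r (Or.inr rfl)]
      refine ⟨r, Z, Set.mem_insert _ _, fun MZ hMZ => ?_⟩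
      rcases hrG MZ hMZ with ⟨o, o', h1, h2, hp⟩ | ⟨o, h1, h2⟩
      · exact Or.inl ⟨o, o', by rw [hZr]; exact h1, h2, hp⟩
      · exact Or.inr ⟨o, by rw [hZr]; exact h1, h2⟩
  -- SUMMATION
  have hUdisj : ∀ M₀, M₀ ∈ Mset → ∀ M₁', M₁' ∈ Mset → M₀ ≠ M₁' →
      Disjoint (U M₀) (U M₁') := by
    intro M₀ hM₀ M₁' hM₁' hne
    rw [Set.disjoint_left]
    intro a ha ha'
    exact hne (ha'.2.1 M₀ hM₀ ha.1)
  set 𝕄 : Finset (A → Option O) := hMfin.toFinset with h𝕄def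
  have hcard𝕄 : 𝕄.card = Mset.ncard := (Set.ncard_eq_toFinset_card _ hMfin).symm
  have hper : ∀ M₀ ∈ 𝕄, G.ncard ≤ (U M₀ ∩ B).toFinset.card + (G ∩ U M₀).toFinset.card := by
    intro M₀ hM₀'
    have hM₀ : M₀ ∈ Mset := hMfin.mem_toFinset.mp hM₀'
    have h2 : G.ncard ≤ (G \ U M₀).ncard + (G ∩ U M₀).ncard := by
      calc G.ncard = ((G \ U M₀) ∪ (G ∩ U M₀)).ncard := by rw [Set.diff_union_inter]
        _ ≤ _ := Set.ncard_union_le _ _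
    have h3 := key M₀ hM₀
    have h4 : (U M₀ ∩ B).toFinset.card = (U M₀ ∩ B).ncard :=
      (Set.ncard_eq_toFinset_card' _).symm
    have h5 : (G ∩ U M₀).toFinset.card = (G ∩ U M₀).ncard :=
      (Set.ncard_eq_toFinset_card' _).symm
    omega
  have hsum1 : ∑ M₀ ∈ 𝕄, (U M₀ ∩ B).toFinset.card ≤ B.ncard := by
    rw [← Finset.card_biUnion]
    · calc (𝕄.biUnion fun M₀ => (U M₀ ∩ B).toFinset).card ≤ B.toFinset.card := by
            apply Finset.card_le_card
            intro a ha
            rw [Finset.mem_biUnion] at ha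
            obtain ⟨M₀, -, hmem⟩ := ha
            rw [Set.mem_toFinset] at hmem ⊢
            exact hmem.2
        _ = B.ncard := (Set.ncard_eq_toFinset_card' _).symm
    · intro M₀ hM₀' M₁' hM₁'' hne
      show Disjoint (U M₀ ∩ B).toFinset (U M₁' ∩ B).toFinset
      rw [Finset.disjoint_left]
      intro a ha ha'
      rw [Set.mem_toFinset] at ha ha'
      exact Set.disjoint_left.mp
        (hUdisj M₀ (hMfin.mem_toFinset.mp hM₀') M₁' (hMfin.mem_toFinset.mp hM₁'') hne)
        ha.1 ha'.1
  have hsum2 : ∑ M₀ ∈ 𝕄, (G ∩ U M₀).toFinset.card ≤ G.ncard := by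
    rw [← Finset.card_biUnion]
    · calc (𝕄.biUnion fun M₀ => (G ∩ U M₀).toFinset).card ≤ G.toFinset.card := by
            apply Finset.card_le_card
            intro a ha
            rw [Finset.mem_biUnion] at ha
            obtain ⟨M₀, -, hmem⟩ := ha
            rw [Set.mem_toFinset] at hmem ⊢
            exact hmem.1
        _ = G.ncard := (Set.ncard_eq_toFinset_card' _).symm
    · intro M₀ hM₀' M₁' hM₁'' hne
      show Disjoint (G ∩ U M₀).toFinset (G ∩ U M₁').toFinset
      rw [Finset.disjoint_left]
      intro a ha ha'
      rw [Set.mem_toFinset] at ha ha'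
      exact Set.disjoint_left.mp
        (hUdisj M₀ (hMfin.mem_toFinset.mp hM₀') M₁' (hMfin.mem_toFinset.mp hM₁'') hne)
        ha.2 ha'.2
  have htot : 𝕄.card * G.ncard ≤ B.ncard + G.ncard := by
    calc 𝕄.card * G.ncard = ∑ _M₀ ∈ 𝕄, G.ncard := by
          rw [Finset.sum_const, smul_eq_mul]
      _ ≤ ∑ M₀ ∈ 𝕄, ((U M₀ ∩ B).toFinset.card + (G ∩ U M₀).toFinset.card) :=
          Finset.sum_le_sum hper
      _ = (∑ M₀ ∈ 𝕄, (U M₀ ∩ B).toFinset.card) + ∑ M₀ ∈ 𝕄, (G ∩ U M₀).toFinset.card :=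
          Finset.sum_add_distrib
      _ ≤ B.ncard + G.ncard := Nat.add_le_add hsum1 hsum2
  have hm2 : 2 ≤ 𝕄.card := by rw [hcard𝕄]; exact hcard
  have h2g : 2 * G.ncard ≤ 𝕄.card * G.ncard := Nat.mul_le_mul_right _ hm2
  omega
end

section
/- Let (G, ℐ, ≻) be a matroid-constrained matching instance in which preferences are weak rankings. Then there exists a popular set of at most two ℐ-constrained matchings in G. -/
open scoped Classical

/-- Preferences are weak rankings: each `pref a` is a strict partial order whose induced
incomparability relation is transitive on the objects adjacent to `a`. -/
def IsWeakRanking {A O : Type*} (adj : A → O → Prop) (pref : A → O → O → Prop) : Prop :=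
  IsPrefOrder adj pref ∧
  ∀ a o o' o'', adj a o → adj a o' → adj a o'' →
    (¬ pref a o o' ∧ ¬ pref a o' o) → (¬ pref a o' o'' ∧ ¬ pref a o'' o') →
    (¬ pref a o o'' ∧ ¬ pref a o'' o)

set_option linter.unusedSectionVars false
set_option maxHeartbeats 1000000

namespace PP

variable {A O : Type*} [Fintype A] [Fintype O]

noncomputable def util (adj : A → O → Prop) (pref : A → O → O → Prop) (a : A) :
    Option O → ℕ
  | none => 0
  | some o => {o' | adj a o' ∧ pref a o o'}.ncard + 1

variable {adj : A → O → Prop} {pref : A → O → O → Prop}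

lemma util_none (a : A) : util adj pref a none = 0 := rfl

lemma util_some_pos (a : A) (o : O) : 0 < util adj pref a (some o) :=
  Nat.succ_pos _

/-- Key translation: on adjacent objects, strict preference is equivalent to
utility comparison. -/
lemma pref_iff_util (h : IsWeakRanking adj pref) {a : A} {o o' : O}
    (ho : adj a o) (ho' : adj a o') :
    pref a o o' ↔ util adj pref a (some o') < util adj pref a (some o) := by
  obtain ⟨hord, hweak⟩ := h
  obtain ⟨hirr, htrans, hadj⟩ := hord a
  have hsub : ∀ x y : O, pref a x y →
      {z | adj a z ∧ pref a y z} ⊂ {z | adj a z ∧ pref a x z} := by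
    intro x y hxy
    constructor
    · rintro z ⟨hz, hyz⟩; exact ⟨hz, htrans _ _ _ hxy hyz⟩
    · intro hcon
      have : y ∈ {z | adj a z ∧ pref a x z} := ⟨(hadj _ _ hxy).2, hxy⟩
      have hmem := hcon this
      exact hirr y hmem.2
  have heq : ∀ x y : O, adj a x → adj a y → ¬ pref a x y → ¬ pref a y x →
      {z | adj a z ∧ pref a x z} = {z | adj a z ∧ pref a y z} := by
    intro x y hx hy hxy hyx
    ext z
    constructor
    · rintro ⟨hz, hxz⟩
      refine ⟨hz, ?_⟩
      by_contra hyz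
      by_cases hzy : pref a z y
      · exact hxy (htrans _ _ _ hxz hzy)
      · exact (hweak a x y z hx hy hz ⟨hxy, hyx⟩ ⟨hyz, hzy⟩).1 hxz
    · rintro ⟨hz, hyz⟩
      refine ⟨hz, ?_⟩
      by_contra hxz
      by_cases hzx : pref a z x
      · exact hyx (htrans _ _ _ hyz hzx)
      · exact (hweak a y x z hy hx hz ⟨hyx, hxy⟩ ⟨hxz, hzx⟩).1 hyz
  constructor
  · intro hp
    have := hsub o o' hp
    have hlt := Set.ncard_lt_ncard this (Set.toFinite _)
    simpa [util] using Nat.succ_lt_succ hlt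
  · intro hu
    by_contra hp
    by_cases hp' : pref a o' o
    · have := Set.ncard_lt_ncard (hsub o' o hp') (Set.toFinite _)
      simp only [util] at hu
      omega
    · have := heq o o' ho ho' hp hp'
      simp only [util, this] at hu
      omega

/-- translation of `PrefM` to utility comparison, for adjacency-respecting
assignments. -/
lemma prefM_iff_util (h : IsWeakRanking adj pref) {a : A} {M N : A → Option O}
    (hM : ∀ o, M a = some o → adj a o) (hN : ∀ o, N a = some o → adj a o) :
    PrefM pref a M N ↔ util adj pref a (N a) < util adj pref a (M a) := by
  constructor
  · rintro (⟨o, o', hMo, hNo, hp⟩ | ⟨o, hMo, hNo⟩)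
    · rw [hMo, hNo]
      exact (pref_iff_util h (hM o hMo) (hN o' hNo)).1 hp
    · rw [hMo, hNo]
      exact util_some_pos a o
  · intro hu
    cases hMa : M a with
    | none => rw [hMa, util_none] at hu; omega
    | some o =>
      cases hNa : N a with
      | none => exact Or.inr ⟨o, hMa, hNa⟩
      | some o' =>
        rw [hMa, hNa] at hu
        exact Or.inl ⟨o, o', hMa, hNa, (pref_iff_util h (hM o hMa) (hN o' hNa)).2 hu⟩

section Core

variable (adj : A → O → Prop) (pref : A → O → O → Prop) (Mat : Matroid O)

def Tset (τ : A → Option (O × Bool)) (i : Bool) : Set O :=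
  {o | ∃ a, τ a = some (o, i)}

def Feas (τ : A → Option (O × Bool)) : Prop :=
  (∀ a p, τ a = some p → adj a p.1) ∧
  (∀ a a' p, τ a = some p → τ a' = some p → a = a') ∧
  (∀ i : Bool, Mat.Indep (Tset τ i))

noncomputable def uval (τ : A → Option (O × Bool)) (a : A) : ℕ :=
  util adj pref a ((τ a).map Prod.fst)

noncomputable def Phi (τ : A → Option (O × Bool)) : ℕ :=
  ∑ a : A, uval adj pref τ a

variable (N : A → Option O)

def Wst (τ : A → Option (O × Bool)) : Set A :=
  {a | uval adj pref τ a < util adj pref a (N a)}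

def Lst (τ : A → Option (O × Bool)) : Set A :=
  {a | util adj pref a (N a) < uval adj pref τ a}

def edge (τ : A → Option (O × Bool)) (c d : A) : Prop :=
  ∃ oc, N c = some oc ∧ ∃ x i, τ d = some (x, i) ∧ d ∉ Lst adj pref N τ ∧
    oc ∉ Mat.closure (Tset τ i \ {x})

variable {adj pref Mat N}

lemma grd (hE : Mat.E = Set.univ) (S : Set O) : S ⊆ Mat.E := by
  rw [hE]; exact Set.subset_univ S

lemma mem_closure_essential (hE : Mat.E = Set.univ) :
    ∀ (n : ℕ) (T : Set O), T.ncard ≤ n → Mat.Indep T → ∀ y : O, y ∈ Mat.closure T →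
      y ∈ Mat.closure {x ∈ T | y ∉ Mat.closure (T \ {x})} := by
  intro n
  induction n with
  | zero =>
      intro T hcard hind y hy
      have : T = ∅ := by
        rw [← Set.ncard_eq_zero (Set.toFinite T)]; omega
      subst this
      convert hy using 2
      ext x; simp
  | succ n IH =>
      intro T hcard hind y hy
      by_cases hall : ∀ x ∈ T, y ∉ Mat.closure (T \ {x})
      · convert hy using 2
        ext x
        simp only [Set.mem_setOf_eq]
        exact ⟨fun h => h.1, fun hx => ⟨hx, hall x hx⟩⟩
      · push_neg at hall
        obtain ⟨x₀, hx₀T, hx₀⟩ := hall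
        set T' := T \ {x₀} with hT'
        have hT'sub : T' ⊆ T := Set.diff_subset
        have hindT' : Mat.Indep T' := hind.subset hT'sub
        have hcard' : T'.ncard ≤ n := by
          have hlt : T'.ncard < T.ncard := by
            rw [hT']
            exact Set.ncard_diff_singleton_lt_of_mem hx₀T (Set.toFinite T)
          omega
        have hyT' : y ∈ Mat.closure T' := hx₀
        have hIH := IH T' hcard' hindT' y hyT'
        have hsubE : {x ∈ T' | y ∉ Mat.closure (T' \ {x})} ⊆
            {x ∈ T | y ∉ Mat.closure (T \ {x})} := by
          intro x hx
          simp only [Set.mem_setOf_eq] at hx ⊢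
          obtain ⟨hxT', hxcl⟩ := hx
          refine ⟨hT'sub hxT', ?_⟩
          intro hycl
          have hxne : x ≠ x₀ := fun h => hxT'.2 (by simp [h])
          have hrw : T \ {x} = insert x₀ (T' \ {x}) := by
            rw [hT']
            ext z
            simp only [Set.mem_diff, Set.mem_singleton_iff, Set.mem_insert_iff]
            constructor
            · rintro ⟨hz, hzx⟩
              by_cases hzx0 : z = x₀
              · exact Or.inl hzx0
              · exact Or.inr ⟨⟨hz, hzx0⟩, hzx⟩
            · rintro (rfl | ⟨⟨hz, _⟩, hzx⟩)
              · exact ⟨hx₀T, hxne.symm⟩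
              · exact ⟨hz, hzx⟩
          rw [hrw] at hycl
          have hexch := Matroid.mem_closure_insert hxcl hycl
          have hsub : insert y (T' \ {x}) ⊆ Mat.closure T' := by
            intro z hz
            rcases hz with rfl | hz
            · exact hyT'
            · exact Mat.subset_closure T' (grd hE T') (Set.diff_subset hz)
          have := (Mat.closure_subset_closure_of_subset_closure hsub) hexch
          exact hind.notMem_closure_diff_of_mem hx₀T this
        exact Mat.closure_subset_closure hsubE hIH

lemma ncard_le_of_indep_subset_closure {T K : Set O}
    (hT : Mat.Indep T) (hK : Mat.Indep K) (hTK : T ⊆ Mat.closure K) :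
    T.ncard ≤ K.ncard := by
  by_contra hlt
  push_neg at hlt
  have henc : K.encard < T.encard := by
    rw [← Set.Finite.cast_ncard_eq (Set.toFinite K),
      ← Set.Finite.cast_ncard_eq (Set.toFinite T)]
    exact_mod_cast hlt
  obtain ⟨e, he, hind⟩ := hK.augment hT henc
  have := (hK.insert_indep_iff_of_notMem he.2).1 hind
  exact this.2 (hTK he.1)

lemma uval_slot {τ : A → Option (O × Bool)} {a : A} {x : O} {t : Bool}
    (hs : τ a = some (x, t)) : uval adj pref τ a = util adj pref a (some x) := by
  rw [uval, hs]; rfl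

lemma uval_none {τ : A → Option (O × Bool)} {a : A} (hs : τ a = none) :
    uval adj pref τ a = 0 := by rw [uval, hs]; rfl

lemma mem_Tset_update {τ : A → Option (O × Bool)} {c : A} {o : O} {i : Bool}
    {o' : O} {t : Bool} :
    o' ∈ Tset (Function.update τ c (some (o, i))) t ↔
      (o' = o ∧ t = i) ∨ ∃ a', a' ≠ c ∧ τ a' = some (o', t) := by
  constructor
  · rintro ⟨a', ha'⟩
    by_cases hac : a' = c
    · subst hac
      rw [Function.update_self] at ha'
      left
      obtain ⟨h1, h2⟩ := Prod.mk.injEq .. ▸ (Option.some_injective _ ha')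
      exact ⟨h1.symm, h2.symm⟩
    · rw [Function.update_of_ne hac] at ha'
      exact Or.inr ⟨a', hac, ha'⟩
  · rintro (⟨rfl, rfl⟩ | ⟨a', hac, ha'⟩)
    · exact ⟨c, by rw [Function.update_self]⟩
    · exact ⟨a', by rw [Function.update_of_ne hac]; exact ha'⟩

lemma Tset_update_subset {τ : A → Option (O × Bool)} {c : A} {o : O} {i : Bool}
    (t : Bool) :
    Tset (Function.update τ c (some (o, i))) t ⊆
      if t = i then insert o (Tset τ t) else Tset τ t := by
  intro o' ho'
  rcases mem_Tset_update.1 ho' with ⟨rfl, rfl⟩ | ⟨a', _, ha'⟩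
  · simp
  · by_cases hti : t = i
    · rw [if_pos hti]
      exact Set.mem_insert_of_mem _ ⟨a', ha'⟩
    · rw [if_neg hti]
      exact ⟨a', ha'⟩

lemma feas_update (hE : Mat.E = Set.univ) {τ : A → Option (O × Bool)}
    (hF : Feas adj Mat τ) {c : A} {o : O} {i : Bool}
    (hadj : adj c o) (hfree : o ∉ Mat.closure (Tset τ i)) :
    Feas adj Mat (Function.update τ c (some (o, i))) := by
  have hnotmem : o ∉ Tset τ i := fun hmem =>
    hfree (Mat.subset_closure _ (grd hE _) hmem)
  refine ⟨?_, ?_, ?_⟩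
  · intro a p hp
    by_cases hac : a = c
    · subst hac; rw [Function.update_self] at hp
      obtain rfl := Option.some_injective _ hp
      exact hadj
    · rw [Function.update_of_ne hac] at hp
      exact hF.1 a p hp
  · intro a a' p hp hp'
    by_cases hac : a = c <;> by_cases hac' : a' = c
    · rw [hac, hac']
    · subst hac
      rw [Function.update_self] at hp
      rw [Function.update_of_ne hac'] at hp'
      obtain rfl := Option.some_injective _ hp.symm
      exact absurd (Mat.subset_closure _ (grd hE _) (⟨a', hp'⟩ : o ∈ Tset τ i)) hfree
    · subst hac'
      rw [Function.update_self] at hp'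
      rw [Function.update_of_ne hac] at hp
      obtain rfl := Option.some_injective _ hp'.symm
      exact absurd (Mat.subset_closure _ (grd hE _) (⟨a, hp⟩ : o ∈ Tset τ i)) hfree
    · rw [Function.update_of_ne hac] at hp
      rw [Function.update_of_ne hac'] at hp'
      exact hF.2.1 a a' p hp hp'
  · intro t
    have hsub := Tset_update_subset (τ := τ) (c := c) (o := o) (i := i) t
    by_cases hti : t = i
    · rw [if_pos hti] at hsub
      refine Matroid.Indep.subset ?_ hsub
      subst hti
      exact ((hF.2.2 t).insert_indep_iff_of_notMem hnotmem).2
        ⟨by rw [hE]; trivial, hfree⟩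
    · rw [if_neg hti] at hsub
      exact (hF.2.2 t).subset hsub

lemma closure_insert_trick (hE : Mat.E = Set.univ) {S T : Set O} {y z : O}
    (hS : S ⊆ Mat.closure T) (hyT : y ∈ Mat.closure T)
    (hzT : z ∉ Mat.closure T) (hyS : y ∉ Mat.closure S) :
    y ∉ Mat.closure (insert z S) := by
  intro hmem
  have hexch := Matroid.mem_closure_insert hyS hmem
  have hsub : insert y S ⊆ Mat.closure T := Set.insert_subset hyT hS
  exact hzT ((Mat.closure_subset_closure_of_subset_closure hsub) hexch)

lemma uval_update_eq {τ : A → Option (O × Bool)} {c : A} {v : Option (O × Bool)} :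
    uval adj pref (Function.update τ c v) c = util adj pref c (v.map Prod.fst) := by
  rw [uval, Function.update_self]

lemma uval_update_ne {τ : A → Option (O × Bool)} {c x : A} {v : Option (O × Bool)}
    (hx : x ≠ c) : uval adj pref (Function.update τ c v) x = uval adj pref τ x := by
  rw [uval, Function.update_of_ne hx]; rfl

lemma peel (hE : Mat.E = Set.univ) (hN : IsConstrained adj Mat N) :
    ∀ k : ℕ, ∀ τ : A → Option (O × Bool), Feas adj Mat τ →
      (∀ τ', Feas adj Mat τ' → Phi adj pref τ' ≤ Phi adj pref τ) →
      ∀ a : ℕ → A, Set.InjOn a (Set.Iic k) → a 0 ∈ Wst adj pref N τ →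
      (∀ j, j < k → edge adj pref Mat N τ (a j) (a (j+1))) →
      ∀ ock i, N (a k) = some ock → ock ∉ Mat.closure (Tset τ i) → False := by
  intro k
  induction k using Nat.strong_induction_on with
  | _ k IH =>
  intro τ hF hmax a hInj h0W hedges ock i hNc hfree
  -- helper: rewiring a k is feasible
  have hadjc : adj (a k) ock := hN.1.1 _ _ hNc
  have hF' : Feas adj Mat (Function.update τ (a k) (some (ock, i))) :=
    feas_update hE hF hadjc hfree
  -- Case 1: endpoint is a winner: strict improvement, contradiction.
  by_cases hWk : a k ∈ Wst adj pref N τ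
  · set τ' := Function.update τ (a k) (some (ock, i)) with hτ'
    have hkey : uval adj pref τ (a k) < util adj pref (a k) (some ock) := by
      have h2 : uval adj pref τ (a k) < util adj pref (a k) (N (a k)) := hWk
      rwa [hNc] at h2
    have hlt : Phi adj pref τ < Phi adj pref τ' := by
      apply Finset.sum_lt_sum
      · intro x _
        by_cases hx : x = a k
        · rw [hx, hτ', uval_update_eq]
          simp only [Option.map_some]
          exact le_of_lt hkey
        · rw [hτ', uval_update_ne hx]
      · refine ⟨a k, Finset.mem_univ _, ?_⟩
        rw [hτ', uval_update_eq]
        simp only [Option.map_some]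
        exact hkey
    exact absurd (hmax τ' hF') (not_le.2 hlt)
  -- Case 2: some interior vertex has a free insertion: shorten the path.
  by_cases hshort : ∃ j, j < k ∧ ∃ oj t, N (a j) = some oj ∧ oj ∉ Mat.closure (Tset τ t)
  · obtain ⟨j, hj, oj, t, hNj, hfr⟩ := hshort
    exact IH j hj τ hF hmax a (hInj.mono (fun x hx => le_trans hx (le_of_lt hj)))
      h0W (fun m hm => hedges m (lt_trans hm hj)) oj t hNj hfr
  push_neg at hshort
  -- now every interior vertex's N-object is spanned by every tag.
  cases k with
  | zero => exact hWk h0W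
  | succ k' =>
  have hedgek := hedges k' (Nat.lt_succ_self k')
  obtain ⟨ok', hNk', xc, ic, hslot, hcL, hess⟩ := hedgek
  -- a (k'+1) is a tie
  have htie : util adj pref (a (k'+1)) (N (a (k'+1))) = uval adj pref τ (a (k'+1)) := by
    have h1 : ¬ (uval adj pref τ (a (k'+1)) < util adj pref (a (k'+1)) (N (a (k'+1)))) := hWk
    have h2 : ¬ (util adj pref (a (k'+1)) (N (a (k'+1))) < uval adj pref τ (a (k'+1))) := hcL
    omega
  set τ' := Function.update τ (a (k'+1)) (some (ock, i)) with hτ'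
  have huval_eq : ∀ x, uval adj pref τ' x = uval adj pref τ x := by
    intro x
    by_cases hx : x = a (k'+1)
    · rw [hx, hτ', uval_update_eq]
      simp only [Option.map_some]
      rw [← htie, hNc]
    · rw [hτ']; exact uval_update_ne hx
  have hPhi : Phi adj pref τ' = Phi adj pref τ :=
    Finset.sum_congr rfl (fun x _ => huval_eq x)
  have hmax' : ∀ τ'', Feas adj Mat τ'' → Phi adj pref τ'' ≤ Phi adj pref τ' := by
    intro τ'' h''
    rw [hPhi]; exact hmax τ'' h''
  have hW' : Wst adj pref N τ' = Wst adj pref N τ := by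
    ext x; simp only [Wst, Set.mem_setOf_eq, huval_eq]
  have hL' : Lst adj pref N τ' = Lst adj pref N τ := by
    ext x; simp only [Lst, Set.mem_setOf_eq, huval_eq]
  -- distinctness of the endpoint from earlier path vertices
  have hne : ∀ j, j ≤ k' → a j ≠ a (k'+1) := by
    intro j hj heq
    have := hInj (Set.mem_Iic.2 (le_trans hj (Nat.le_succ k'))) (Set.mem_Iic.2 le_rfl) heq
    omega
  -- the new free insertion at a k', tag ic
  have hsubslot : Tset τ' ic ⊆
      (if ic = i then insert ock (Tset τ ic \ {xc}) else (Tset τ ic \ {xc})) := by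
    intro o' ho'
    rcases mem_Tset_update.1 ho' with ⟨rfl, rfl⟩ | ⟨a', hac, ha'⟩
    · rw [if_pos rfl]; exact Set.mem_insert _ _
    · have ho'mem : o' ∈ Tset τ ic := ⟨a', ha'⟩
      have ho'ne : o' ≠ xc := by
        rintro rfl
        exact hac (hF.2.1 a' (a (k'+1)) (o', ic) ha' hslot)
      by_cases hici : ic = i
      · rw [if_pos hici]; exact Set.mem_insert_of_mem _ ⟨ho'mem, ho'ne⟩
      · rw [if_neg hici]; exact ⟨ho'mem, ho'ne⟩
  have hok'cl : ok' ∈ Mat.closure (Tset τ ic) :=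
    hshort k' (Nat.lt_succ_self k') ok' ic hNk'
  have hfree' : ok' ∉ Mat.closure (Tset τ' ic) := by
    intro hmem
    have := Mat.closure_subset_closure hsubslot hmem
    by_cases hici : ic = i
    · rw [if_pos hici] at this
      subst hici
      exact closure_insert_trick hE
        (fun z hz => Mat.subset_closure _ (grd hE _) (Set.diff_subset hz))
        hok'cl hfree hess this
    · rw [if_neg hici] at this
      exact hess this
  -- edges are preserved
  have hedges' : ∀ j, j < k' → edge adj pref Mat N τ' (a j) (a (j+1)) := by
    intro j hj
    obtain ⟨oj, hNj, xj, tj, hslotj, hjL, hessj⟩ := hedges j (lt_trans hj (Nat.lt_succ_self k'))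
    refine ⟨oj, hNj, xj, tj, ?_, ?_, ?_⟩
    · rw [hτ', Function.update_of_ne (hne (j+1) hj)]
      exact hslotj
    · rw [hL']; exact hjL
    · -- oj ∉ closure (Tset τ' tj \ {xj})
      have hsub2 : Tset τ' tj \ {xj} ⊆
          (if tj = i then insert ock (Tset τ tj \ {xj}) else (Tset τ tj \ {xj})) := by
        rintro o' ⟨ho', ho'ne⟩
        rcases mem_Tset_update.1 ho' with ⟨rfl, rfl⟩ | ⟨a', hac, ha'⟩
        · rw [if_pos rfl]; exact Set.mem_insert _ _
        · by_cases htji : tj = i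
          · rw [if_pos htji]; exact Set.mem_insert_of_mem _ ⟨⟨a', ha'⟩, ho'ne⟩
          · rw [if_neg htji]; exact ⟨⟨a', ha'⟩, ho'ne⟩
      intro hmem
      have := Mat.closure_subset_closure hsub2 hmem
      by_cases htji : tj = i
      · rw [if_pos htji] at this
        subst htji
        have hojcl : oj ∈ Mat.closure (Tset τ tj) :=
          hshort j (lt_trans hj (Nat.lt_succ_self k')) oj tj hNj
        exact closure_insert_trick hE
          (fun z hz => Mat.subset_closure _ (grd hE _) (Set.diff_subset hz))
          hojcl hfree hessj this
      · rw [if_neg htji] at this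
        exact hessj this
  exact IH k' (Nat.lt_succ_self k') τ' hF' hmax' a
    (hInj.mono (fun x hx => le_trans hx (Nat.le_succ k')))
    (hW' ▸ h0W) hedges' ok' ic hNk' hfree'

/-- From reflexive-transitive reachability, extract an injective path. -/
lemma exists_inj_path {α : Type*} {r : α → α → Prop} {w c : α}
    (hr : Relation.ReflTransGen r w c) :
    ∃ (k : ℕ) (a : ℕ → α), a 0 = w ∧ a k = c ∧ (∀ j, j < k → r (a j) (a (j+1))) ∧
      Set.InjOn a (Set.Iic k) := by
  induction hr with
  | refl =>
      refine ⟨0, fun _ => w, rfl, rfl, fun j hj => absurd hj (Nat.not_lt_zero j), ?_⟩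
      intro x hx y hy _
      simp only [Set.mem_Iic, Nat.le_zero] at hx hy
      rw [hx, hy]
  | tail hwb hbc IH =>
      rename_i b c''
      obtain ⟨k, a, ha0, hak, hsteps, hinj⟩ := IH
      by_cases hmem : ∃ j, j ≤ k ∧ a j = c''
      · obtain ⟨j, hj, haj⟩ := hmem
        exact ⟨j, a, ha0, haj, fun m hm => hsteps m (lt_of_lt_of_le hm hj),
          hinj.mono (fun x hx => le_trans hx hj)⟩
      · push_neg at hmem
        refine ⟨k + 1, fun m => if m ≤ k then a m else c'', ?_, ?_, ?_, ?_⟩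
        · show (if 0 ≤ k then a 0 else c'') = w
          rw [if_pos (Nat.zero_le k)]; exact ha0
        · show (if k + 1 ≤ k then a (k+1) else c'') = c''
          rw [if_neg (by omega)]
        · intro j hj
          show r (if j ≤ k then a j else c'') (if j + 1 ≤ k then a (j+1) else c'')
          rcases Nat.lt_succ_iff_lt_or_eq.1 hj with hj' | rfl
          · rw [if_pos (le_of_lt hj'), if_pos (Nat.succ_le_of_lt hj')]
            exact hsteps j hj'
          · rw [if_pos le_rfl, if_neg (by omega), hak]
            exact hbc
        · intro x hx y hy hxy
          simp only [Set.mem_Iic] at hx hy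
          simp only at hxy
          by_cases hxk : x ≤ k <;> by_cases hyk : y ≤ k
          · rw [if_pos hxk, if_pos hyk] at hxy
            exact hinj (Set.mem_Iic.2 hxk) (Set.mem_Iic.2 hyk) hxy
          · rw [if_pos hxk, if_neg hyk] at hxy
            exact absurd hxy (hmem x hxk)
          · rw [if_neg hxk, if_pos hyk] at hxy
            exact absurd hxy.symm (hmem y hyk)
          · omega

/-- The main counting lemma: at a maximizer, winners are at most losers. -/
lemma winners_le_losers (hE : Mat.E = Set.univ) (hN : IsConstrained adj Mat N)
    (τ : A → Option (O × Bool)) (hF : Feas adj Mat τ)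
    (hmax : ∀ τ', Feas adj Mat τ' → Phi adj pref τ' ≤ Phi adj pref τ) :
    (Wst adj pref N τ).ncard ≤ (Lst adj pref N τ).ncard := by
  classical
  by_cases hO : Nonempty O
  swap
  · -- no objects at all: no winners
    have hWempty : Wst adj pref N τ = ∅ := by
      ext x
      simp only [Wst, Set.mem_setOf_eq, Set.mem_empty_iff_false, iff_false, not_lt]
      cases hNx : N x with
      | none => exact Nat.zero_le _
      | some o => exact absurd ⟨o⟩ hO
    rw [hWempty, Set.ncard_empty]
    exact Nat.zero_le _
  -- reachable set
  set R := {d | ∃ w ∈ Wst adj pref N τ, Relation.ReflTransGen (edge adj pref Mat N τ) w d}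
    with hR
  have hWR : Wst adj pref N τ ⊆ R := fun w hw => ⟨w, hw, Relation.ReflTransGen.refl⟩
  have hRL : ∀ d ∈ R, d ∉ Lst adj pref N τ := by
    rintro d ⟨w, hw, hrt⟩
    rcases (Relation.ReflTransGen.cases_tail hrt) with rfl | ⟨e, _, hedge⟩
    · intro hd
      have h1 : uval adj pref τ d < util adj pref d (N d) := hw
      have h2 : util adj pref d (N d) < uval adj pref τ d := hd
      omega
    · obtain ⟨_, _, _, _, _, hdL, _⟩ := hedge
      exact hdL
  have hRsome : ∀ c ∈ R, ∃ oc, N c = some oc := by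
    rintro c ⟨w, hw, hrt⟩
    rcases (Relation.ReflTransGen.cases_tail hrt) with rfl | ⟨e, _, hedge⟩
    · have h1 : uval adj pref τ c < util adj pref c (N c) := hw
      cases hNd : N c with
      | none => rw [hNd] at h1; simp [util] at h1
      | some o => exact ⟨o, rfl⟩
    · obtain ⟨_, _, x, i, hslot, hdL, _⟩ := hedge
      have h2 : ¬ (util adj pref c (N c) < uval adj pref τ c) := hdL
      have h3 : 0 < uval adj pref τ c := by
        rw [uval_slot hslot]; exact util_some_pos c x
      cases hNd : N c with
      | none =>
          rw [hNd] at h2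
          simp only [util] at h2
          omega
      | some o => exact ⟨o, rfl⟩
  have hRclosed : ∀ c ∈ R, ∀ d, edge adj pref Mat N τ c d → d ∈ R := by
    rintro c ⟨w, hw, hrt⟩ d hcd
    exact ⟨w, hw, hrt.tail hcd⟩
  -- IMP: all N-objects of reachable agents are spanned everywhere
  have hIMP : ∀ c ∈ R, ∀ oc, N c = some oc → ∀ t : Bool, oc ∈ Mat.closure (Tset τ t) := by
    rintro c ⟨w, hw, hrt⟩ oc hoc t
    by_contra hfree
    obtain ⟨k, a, ha0, hak, hsteps, hinj⟩ := exists_inj_path hrt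
    exact peel hE hN k τ hF hmax a hinj (ha0 ▸ hw) hsteps oc t (hak ▸ hoc) hfree
  -- the sets of supporting slots
  set K := fun t : Bool => {x : O | ∃ d, (d ∈ R ∨ d ∈ Lst adj pref N τ) ∧ τ d = some (x, t)}
    with hK
  have hKsub : ∀ t, K t ⊆ Tset τ t := by
    rintro t x ⟨d, _, hd⟩; exact ⟨d, hd⟩
  have hKindep : ∀ t, Mat.Indep (K t) := fun t => (hF.2.2 t).subset (hKsub t)
  -- N-objects of reachable agents
  set NR := {o : O | ∃ c ∈ R, N c = some o} with hNR
  have hNRindep : Mat.Indep NR := by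
    refine hN.2.subset ?_
    rintro o ⟨c, _, hc⟩; exact ⟨c, hc⟩
  have hNRcl : ∀ t, NR ⊆ Mat.closure (K t) := by
    rintro t o ⟨c, hcR, hc⟩
    have hocl : o ∈ Mat.closure (Tset τ t) := hIMP c hcR o hc t
    have hess := mem_closure_essential hE (Tset τ t).ncard (Tset τ t) le_rfl
      (hF.2.2 t) o hocl
    refine (Mat.closure_subset_closure ?_) hess
    rintro x ⟨hxT, hxess⟩
    obtain ⟨d, hd⟩ := hxT
    by_cases hdL : d ∈ Lst adj pref N τ
    · exact ⟨d, Or.inr hdL, hd⟩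
    · have : edge adj pref Mat N τ c d := ⟨o, hc, x, t, hd, hdL, hxess⟩
      exact ⟨d, Or.inl (hRclosed c hcR d this), hd⟩
  have hNRK : ∀ t, NR.ncard ≤ (K t).ncard := fun t =>
    ncard_le_of_indep_subset_closure hNRindep (hKindep t) (hNRcl t)
  -- |R| ≤ |NR|
  letI : Inhabited O := ⟨hO.some⟩
  have hRNR : R.ncard ≤ NR.ncard := by
    apply Set.ncard_le_ncard_of_injOn (fun c => (N c).iget)
    · intro c hc
      obtain ⟨oc, hoc⟩ := hRsome c hc
      exact ⟨c, hc, by simp only [hoc, Option.iget_some]⟩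
    · intro c hc c' hc' hcc
      obtain ⟨oc, hoc⟩ := hRsome c hc
      obtain ⟨oc', hoc'⟩ := hRsome c' hc'
      simp only [hoc, hoc', Option.iget_some] at hcc
      exact hN.1.2 c c' oc hoc (by rw [hoc']; exact congrArg some hcc.symm)
  -- slots: |K false| + |K true| ≤ |R| + |L|
  have hslots : (K false).ncard + (K true).ncard ≤
      R.ncard + (Lst adj pref N τ).ncard := by
    set Slots := {p : O × Bool | ∃ d, (d ∈ R ∨ d ∈ Lst adj pref N τ) ∧ τ d = some p}
      with hSlots
    have h1 : ∀ t : Bool, (K t).ncard = ((fun x => (x, t)) '' (K t)).ncard :=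
      fun t => (Set.ncard_image_of_injective _ (fun x y hxy => (Prod.mk.injEq .. ▸ hxy).1)).symm
    have h2 : ((fun x : O => (x, false)) '' (K false)) ∪ ((fun x : O => (x, true)) '' (K true))
        = Slots := by
      ext p
      constructor
      · rintro (⟨x, ⟨d, hd1, hd2⟩, rfl⟩ | ⟨x, ⟨d, hd1, hd2⟩, rfl⟩) <;> exact ⟨d, hd1, hd2⟩
      · rintro ⟨d, hd1, hd2⟩
        rcases p with ⟨x, t⟩
        cases t
        · exact Or.inl ⟨x, ⟨d, hd1, hd2⟩, rfl⟩
        · exact Or.inr ⟨x, ⟨d, hd1, hd2⟩, rfl⟩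
    have hdisj : Disjoint ((fun x : O => (x, false)) '' (K false))
        ((fun x : O => (x, true)) '' (K true)) := by
      rw [Set.disjoint_iff]
      rintro p ⟨⟨x, _, rfl⟩, ⟨y, _, hy⟩⟩
      exact Bool.noConfusion (Prod.mk.injEq .. ▸ hy).2
    have h3 : (K false).ncard + (K true).ncard = Slots.ncard := by
      rw [h1 false, h1 true, ← h2]
      exact (Set.ncard_union_eq hdisj (Set.toFinite _) (Set.toFinite _)).symm
    have h4 : Slots ⊆ (fun d => (τ d).iget) ''
        {d : A | (d ∈ R ∨ d ∈ Lst adj pref N τ) ∧ (τ d).isSome} := by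
      rintro p ⟨d, hd1, hd2⟩
      exact ⟨d, ⟨hd1, by simp only [hd2, Option.isSome_some]⟩,
        by simp only [hd2, Option.iget_some]⟩
    have h5 : Slots.ncard ≤ R.ncard + (Lst adj pref N τ).ncard := by
      refine le_trans (Set.ncard_le_ncard h4 (Set.toFinite _)) ?_
      refine le_trans (Set.ncard_image_le (Set.toFinite _)) ?_
      refine le_trans (Set.ncard_le_ncard ?_ (Set.toFinite _)) (Set.ncard_union_le _ _)
      rintro d ⟨hd, _⟩
      exact hd
    omega
  have hWRcard : (Wst adj pref N τ).ncard ≤ R.ncard :=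
    Set.ncard_le_ncard hWR (Set.toFinite _)
  have hfin : R.ncard ≤ NR.ncard := hRNR
  have hK0 := hNRK false
  have hK1 := hNRK true
  omega

end Core

section Final

variable {adj : A → O → Prop} {pref : A → O → O → Prop} {Mat : Matroid O}
variable {N : A → Option O}

noncomputable def Mb (τ : A → Option (O × Bool)) (i : Bool) : A → Option O :=
  fun a => (τ a).bind (fun p => if p.2 = i then some p.1 else none)

lemma Mb_eq_some {τ : A → Option (O × Bool)} {i : Bool} {a : A} {o : O} :
    Mb τ i a = some o ↔ τ a = some (o, i) := by
  constructor
  · intro h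
    unfold Mb at h
    cases hτ : τ a with
    | none => rw [hτ] at h; exact absurd h (by simp)
    | some p =>
        rcases p with ⟨x, t⟩
        rw [hτ] at h
        simp only [Option.bind_some] at h
        by_cases hp : t = i
        · rw [if_pos hp] at h
          obtain rfl := Option.some_injective _ h
          subst hp
          rfl
        · rw [if_neg hp] at h
          exact absurd h (by simp)
  · intro h
    unfold Mb
    rw [h]
    simp

lemma Mb_eq_none {τ : A → Option (O × Bool)} {i : Bool} {a : A} (hτ : τ a = none) :
    Mb τ i a = none := by simp [Mb, hτ]

lemma Mb_eq_none' {τ : A → Option (O × Bool)} {a : A} {x : O} {t : Bool}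
    (hτ : τ a = some (x, t)) : Mb τ (!t) a = none := by
  simp only [Mb, hτ, Option.bind_some]
  rw [if_neg (by cases t <;> simp)]

lemma Mb_eq_slot {τ : A → Option (O × Bool)} {a : A} {x : O} {t : Bool}
    (hτ : τ a = some (x, t)) : Mb τ t a = some x := Mb_eq_some.2 hτ

lemma Mb_constrained (hF : Feas adj Mat τ) (i : Bool) :
    IsConstrained adj Mat (Mb τ i) := by
  refine ⟨⟨?_, ?_⟩, ?_⟩
  · intro a o hmo
    exact hF.1 a (o, i) (Mb_eq_some.1 hmo)
  · intro a a' o hmo hmo'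
    exact hF.2.1 a a' (o, i) (Mb_eq_some.1 hmo) (Mb_eq_some.1 hmo')
  · have : matchedObjs (Mb τ i) = Tset τ i := by
      ext o
      constructor
      · rintro ⟨a, ha⟩; exact ⟨a, Mb_eq_some.1 ha⟩
      · rintro ⟨a, ha⟩; exact ⟨a, Mb_eq_some.2 ha⟩
    rw [this]
    exact hF.2.2 i

lemma adj_of_Mb (hF : Feas adj Mat τ) (i : Bool) (a : A) :
    ∀ o, Mb τ i a = some o → adj a o :=
  fun o ho => hF.1 a (o, i) (Mb_eq_some.1 ho)

lemma phiOne_mem_iff (h : IsWeakRanking adj pref) (hF : Feas adj Mat τ)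
    (hNc : IsConstrained adj Mat N) (a : A) :
    (∀ M ∈ ({Mb τ false, Mb τ true} : Set (A → Option O)), PrefM pref a N M) ↔
      a ∈ Wst adj pref N τ := by
  have hNadj : ∀ o, N a = some o → adj a o := fun o ho => hNc.1.1 a o ho
  have hiff : ∀ i : Bool, PrefM pref a N (Mb τ i) ↔
      util adj pref a (Mb τ i a) < util adj pref a (N a) :=
    fun i => prefM_iff_util h hNadj (adj_of_Mb hF i a)
  simp only [Set.mem_insert_iff, Set.mem_singleton_iff, forall_eq_or_imp, forall_eq,
    hiff]
  rw [Wst, Set.mem_setOf_eq]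
  cases hτ : τ a with
  | none =>
      rw [Mb_eq_none hτ, Mb_eq_none hτ, uval_none hτ]
      simp only [util]
      omega
  | some p =>
      rcases p with ⟨x, t⟩
      have h1 : util adj pref a (Mb τ t a) = uval adj pref τ a := by
        rw [Mb_eq_slot hτ, uval_slot hτ]
      have h2 : util adj pref a (Mb τ (!t) a) = 0 := by
        rw [Mb_eq_none' hτ]; rfl
      have h3 : 0 < uval adj pref τ a := by
        rw [uval_slot hτ]; exact util_some_pos a x
      cases t
      · simp only [Bool.not_false] at h2
        rw [h1, h2]
        omega
      · simp only [Bool.not_true] at h2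
        rw [h1, h2]
        omega

lemma phiSet_mem_iff (h : IsWeakRanking adj pref) (hF : Feas adj Mat τ)
    (hNc : IsConstrained adj Mat N) (a : A) :
    (∃ M ∈ ({Mb τ false, Mb τ true} : Set (A → Option O)), PrefM pref a M N) ↔
      a ∈ Lst adj pref N τ := by
  have hNadj : ∀ o, N a = some o → adj a o := fun o ho => hNc.1.1 a o ho
  have hiff : ∀ i : Bool, PrefM pref a (Mb τ i) N ↔
      util adj pref a (N a) < util adj pref a (Mb τ i a) :=
    fun i => prefM_iff_util h (adj_of_Mb hF i a) hNadj
  simp only [Set.mem_insert_iff, Set.mem_singleton_iff, exists_eq_or_imp, exists_eq_left,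
    hiff]
  rw [Lst, Set.mem_setOf_eq]
  cases hτ : τ a with
  | none =>
      rw [Mb_eq_none hτ, Mb_eq_none hτ, uval_none hτ]
      simp only [util]
      omega
  | some p =>
      rcases p with ⟨x, t⟩
      have h1 : util adj pref a (Mb τ t a) = uval adj pref τ a := by
        rw [Mb_eq_slot hτ, uval_slot hτ]
      have h2 : util adj pref a (Mb τ (!t) a) = 0 := by
        rw [Mb_eq_none' hτ]; rfl
      cases t
      · simp only [Bool.not_false] at h2
        rw [h1, h2]
        omega
      · simp only [Bool.not_true] at h2
        rw [h1, h2]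
        omega

end Final

end PP

/-- In a matroid-constrained matching instance with weak rankings,
there exists a popular set of at most two `ℐ`-constrained matchings. -/
theorem exists_popular_pair_of_weak
    {A O : Type*} [Fintype A] [Fintype O]
    (adj : A → O → Prop) (pref : A → O → O → Prop)
    (hpref : IsWeakRanking adj pref)
    (Mat : Matroid O) (hE : Mat.E = Set.univ) :
    ∃ Mset : Set (A → Option O),
      (∀ M ∈ Mset, IsConstrained adj Mat M) ∧ Mset.ncard ≤ 2 ∧
      Popular pref {M | IsConstrained adj Mat M} Mset := by
  classical
  have hne : ({τ : A → Option (O × Bool) | PP.Feas adj Mat τ}).Nonempty := by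
    refine ⟨fun _ => none, ?_, ?_, ?_⟩
    · intro a p hp; exact absurd hp (by simp)
    · intro a a' p hp _; exact absurd hp (by simp)
    · intro i
      have hT : PP.Tset (fun _ : A => (none : Option (O × Bool))) i = ∅ := by
        ext o; simp [PP.Tset]
      rw [hT]; exact Mat.empty_indep
  obtain ⟨τ, hτF, hτmax⟩ :=
    Set.exists_max_image {τ : A → Option (O × Bool) | PP.Feas adj Mat τ}
      (PP.Phi adj pref) (Set.toFinite _) hne
  have hmax : ∀ τ', PP.Feas adj Mat τ' → PP.Phi adj pref τ' ≤ PP.Phi adj pref τ :=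
    fun τ' h' => hτmax τ' h'
  refine ⟨{PP.Mb τ false, PP.Mb τ true}, ?_, ?_, ?_⟩
  · intro M hM
    simp only [Set.mem_insert_iff, Set.mem_singleton_iff] at hM
    rcases hM with rfl | rfl
    · exact PP.Mb_constrained hτF false
    · exact PP.Mb_constrained hτF true
  · calc ({PP.Mb τ false, PP.Mb τ true} : Set (A → Option O)).ncard
        ≤ ({PP.Mb τ true} : Set (A → Option O)).ncard + 1 := Set.ncard_insert_le _ _
      _ ≤ 2 := by rw [Set.ncard_singleton]
  · intro N hN
    have hNc : IsConstrained adj Mat N := hN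
    have hW : {a : A | ∀ M ∈ ({PP.Mb τ false, PP.Mb τ true} : Set (A → Option O)),
        PrefM pref a N M} = PP.Wst adj pref N τ := by
      ext a; exact PP.phiOne_mem_iff hpref hτF hNc a
    have hL : {a : A | ∃ M ∈ ({PP.Mb τ false, PP.Mb τ true} : Set (A → Option O)),
        PrefM pref a M N} = PP.Lst adj pref N τ := by
      ext a; exact PP.phiSet_mem_iff hpref hτF hNc a
    unfold phiOne phiSet
    rw [hW, hL]
    exact PP.winners_le_losers hE hNc τ hτF hmax
end

section
/- Let (G, ℐ, ≻) be a matroid-constrained matching instance in which preferences are strict rankings. Then there exists a strongly popular set of at most two ℐ-constrained matchings in G. -/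
open scoped Classical

set_option linter.unusedSectionVars false

noncomputable section SPPaux
namespace SPPaux

variable {A O : Type*} [Fintype A] [Fintype O]

variable (adj : A → O → Prop) (pref : A → O → O → Prop) (Mat : Matroid O)

/-- object `o` can be added to the independent set `X`. -/
def okc (o : O) (X : Finset O) : Prop := o ∉ X ∧ Mat.Indep (insert o ↑X)

def Feas (a : A) (X₁ X₂ : Finset O) : Finset O :=
  Finset.univ.filter fun o => adj a o ∧ (okc Mat o X₁ ∨ okc Mat o X₂)

lemma exists_max (a : A) (hirr : ∀ o, ¬ pref a o o)
    (htr : ∀ o o' o'', pref a o o' → pref a o' o'' → pref a o o'')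
    (s : Finset O) (hs : s.Nonempty) : ∃ o ∈ s, ∀ u ∈ s, ¬ pref a u o := by
  classical
  induction s using Finset.induction_on with
  | empty => exact absurd hs (by simp)
  | insert _ _ hx =>
    rename_i x s ih
    rcases s.eq_empty_or_nonempty with rfl | hs'
    · exact ⟨x, by simp, by simpa using hirr x⟩
    · obtain ⟨o, ho, hmax⟩ := ih hs'
      by_cases hxo : pref a x o
      · refine ⟨x, Finset.mem_insert_self _ _, ?_⟩
        intro u hu
        rcases Finset.mem_insert.1 hu with rfl | hu
        · exact hirr u
        · intro hux; exact hmax u hu (htr _ _ _ hux hxo)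
      · refine ⟨o, Finset.mem_insert_of_mem ho, ?_⟩
        intro u hu
        rcases Finset.mem_insert.1 hu with rfl | hu
        · exact hxo
        · exact hmax u hu

/-- greedy choice of `a` given current copy states. -/
def pick (a : A) (X₁ X₂ : Finset O) : Option O :=
  if h : ∃ o ∈ Feas adj Mat a X₁ X₂, ∀ u ∈ Feas adj Mat a X₁ X₂, ¬ pref a u o
  then some h.choose else none

lemma pick_spec {a : A} {X₁ X₂ : Finset O} {o : O} (h : pick adj pref Mat a X₁ X₂ = some o) :
    o ∈ Feas adj Mat a X₁ X₂ ∧ ∀ u ∈ Feas adj Mat a X₁ X₂, ¬ pref a u o := by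
  by_cases h' : ∃ o ∈ Feas adj Mat a X₁ X₂, ∀ u ∈ Feas adj Mat a X₁ X₂, ¬ pref a u o
  · rw [pick, dif_pos h'] at h
    obtain rfl : h'.choose = o := Option.some.inj h
    exact ⟨h'.choose_spec.1, h'.choose_spec.2⟩
  · rw [pick, dif_neg h'] at h
    exact absurd h (by simp)

lemma pick_none {a : A} {X₁ X₂ : Finset O} (hirr : ∀ o, ¬ pref a o o)
    (htr : ∀ o o' o'', pref a o o' → pref a o' o'' → pref a o o'')
    (h : pick adj pref Mat a X₁ X₂ = none) {u : O} (hu : u ∈ Feas adj Mat a X₁ X₂) : False := by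
  by_cases h' : ∃ o ∈ Feas adj Mat a X₁ X₂, ∀ u ∈ Feas adj Mat a X₁ X₂, ¬ pref a u o
  · rw [pick, dif_pos h'] at h; exact absurd h (by simp)
  · exact h' (exists_max pref a hirr htr _ ⟨u, hu⟩)

/-- position of an agent in the processing order -/
def pos (a : A) : ℕ := ((Fintype.equivFin A) a : ℕ)

lemma pos_lt (a : A) : pos a < Fintype.card A := ((Fintype.equivFin A) a).isLt

lemma pos_inj {a b : A} (h : pos a = pos b) : a = b := by
  have := Fin.val_injective h
  exact (Fintype.equivFin A).injective this

/-- state of the greedy after `k` steps -/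
def st : ℕ → Finset O × Finset O
  | 0 => (∅, ∅)
  | (k+1) =>
    let s := st k
    if h : k < Fintype.card A then
      match pick adj pref Mat ((Fintype.equivFin A).symm ⟨k, h⟩) s.1 s.2 with
      | none => s
      | some o => if okc Mat o s.1 then (insert o s.1, s.2) else (s.1, insert o s.2)
    else s

/-- state component by copy -/
def stb (b : Bool) (k : ℕ) : Finset O := cond b (st adj pref Mat k).1 (st adj pref Mat k).2

/-- the combined greedy assignment: object and copy -/
def D (a : A) : Option (O × Bool) :=
  match pick adj pref Mat a (st adj pref Mat (pos a)).1 (st adj pref Mat (pos a)).2 with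
  | none => none
  | some o => some (o, if okc Mat o (st adj pref Mat (pos a)).1 then true else false)

lemma D_eq_none_iff {a : A} :
    D adj pref Mat a = none ↔
      pick adj pref Mat a (st adj pref Mat (pos a)).1 (st adj pref Mat (pos a)).2 = none := by
  rw [D]
  rcases h : pick adj pref Mat a (st adj pref Mat (pos a)).1 (st adj pref Mat (pos a)).2 with _ | o <;> simp

lemma D_eq_some {a : A} {o : O} {b : Bool} (h : D adj pref Mat a = some (o, b)) :
    pick adj pref Mat a (st adj pref Mat (pos a)).1 (st adj pref Mat (pos a)).2 = some o ∧
      (b = true ↔ okc Mat o (st adj pref Mat (pos a)).1) := by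
  rw [D] at h
  rcases hp : pick adj pref Mat a (st adj pref Mat (pos a)).1 (st adj pref Mat (pos a)).2 with _ | o'
  · rw [hp] at h; simp at h
  · rw [hp] at h
    simp only [Option.some.injEq, Prod.mk.injEq] at h
    obtain ⟨rfl, hb⟩ := h
    constructor
    · rfl
    · split_ifs at hb with hok
      · simp [← hb, hok]
      · simp [← hb, hok]

lemma st_succ_eq (k : ℕ) (h : k < Fintype.card A) :
    st adj pref Mat (k+1) =
      (match D adj pref Mat ((Fintype.equivFin A).symm ⟨k, h⟩) with
       | none => st adj pref Mat k
       | some (o, true) => (insert o (st adj pref Mat k).1, (st adj pref Mat k).2)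
       | some (o, false) => ((st adj pref Mat k).1, insert o (st adj pref Mat k).2)) := by
  have hpos : pos ((Fintype.equivFin A).symm ⟨k, h⟩) = k := by
    simp [pos]
  conv_lhs => rw [st]
  rw [dif_pos h, D, hpos]
  rcases hp : pick adj pref Mat ((Fintype.equivFin A).symm ⟨k, h⟩) (st adj pref Mat k).1 (st adj pref Mat k).2 with _ | o
  · rfl
  · by_cases hok : okc Mat o (st adj pref Mat k).1
    · simp [hok]
    · simp [hok]

lemma stb_mono_succ (b : Bool) (k : ℕ) : stb adj pref Mat b k ⊆ stb adj pref Mat b (k+1) := by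
  unfold stb
  by_cases h : k < Fintype.card A
  · rw [st_succ_eq adj pref Mat k h]
    rcases hD : D adj pref Mat ((Fintype.equivFin A).symm ⟨k, h⟩) with _ | ⟨o, b'⟩
    · simp
    · cases b' <;> cases b <;> simp [Finset.subset_insert]
  · conv_rhs => rw [st]
    rw [dif_neg h]

lemma stb_mono (b : Bool) {k m : ℕ} (h : k ≤ m) : stb adj pref Mat b k ⊆ stb adj pref Mat b m := by
  induction h with
  | refl => exact Finset.Subset.refl _
  | step _ ih => exact ih.trans (stb_mono_succ adj pref Mat b _)

/-- membership characterisation of the state -/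
lemma mem_stb (b : Bool) (k : ℕ) (x : O) :
    x ∈ stb adj pref Mat b k ↔ ∃ a, pos a < k ∧ D adj pref Mat a = some (x, b) := by
  induction k with
  | zero => cases b <;> simp [stb, st]
  | succ k ih =>
    by_cases h : k < Fintype.card A
    · set a₀ := (Fintype.equivFin A).symm ⟨k, h⟩ with ha₀
      have hpos : pos a₀ = k := by simp [pos, ha₀]
      have hsplit : ∀ a : A, pos a < k + 1 ↔ pos a < k ∨ a = a₀ := by
        intro a
        constructor
        · intro hlt
          rcases Nat.lt_succ_iff_lt_or_eq.1 hlt with h' | h'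
          · exact Or.inl h'
          · exact Or.inr (pos_inj (h'.trans hpos.symm))
        · rintro (h' | rfl)
          · exact Nat.lt_succ_of_lt h'
          · rw [hpos]; exact Nat.lt_succ_self k
      rcases hD : D adj pref Mat a₀ with _ | ⟨o, b'⟩
      · have hst : stb adj pref Mat b (k+1) = stb adj pref Mat b k := by
          unfold stb; rw [st_succ_eq adj pref Mat k h, ← ha₀, hD]
        rw [hst, ih]
        constructor
        · rintro ⟨a, hak, hDa⟩; exact ⟨a, (hsplit a).2 (Or.inl hak), hDa⟩
        · rintro ⟨a, hak, hDa⟩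
          rcases (hsplit a).1 hak with h' | rfl
          · exact ⟨a, h', hDa⟩
          · rw [hD] at hDa; exact absurd hDa (by simp)
      · by_cases hb : b' = b
        · subst hb
          have hst : stb adj pref Mat b' (k+1) = insert o (stb adj pref Mat b' k) := by
            unfold stb; rw [st_succ_eq adj pref Mat k h, ← ha₀, hD]; cases b' <;> rfl
          rw [hst, Finset.mem_insert, ih]
          constructor
          · rintro (rfl | ⟨a, hak, hDa⟩)
            · exact ⟨a₀, (hsplit a₀).2 (Or.inr rfl), hD⟩
            · exact ⟨a, (hsplit a).2 (Or.inl hak), hDa⟩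
          · rintro ⟨a, hak, hDa⟩
            rcases (hsplit a).1 hak with h' | rfl
            · exact Or.inr ⟨a, h', hDa⟩
            · rw [hD] at hDa
              obtain h1 : o = x ∧ b' = b' := by simpa using (Option.some.inj hDa)
              exact Or.inl h1.1.symm
        · have hst : stb adj pref Mat b (k+1) = stb adj pref Mat b k := by
            unfold stb; rw [st_succ_eq adj pref Mat k h, ← ha₀, hD]
            cases b' <;> cases b <;> first | (exact absurd rfl hb) | rfl
          rw [hst, ih]
          constructor
          · rintro ⟨a, hak, hDa⟩; exact ⟨a, (hsplit a).2 (Or.inl hak), hDa⟩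
          · rintro ⟨a, hak, hDa⟩
            rcases (hsplit a).1 hak with h' | rfl
            · exact ⟨a, h', hDa⟩
            · rw [hD] at hDa
              obtain h2 : o = x ∧ b' = b := by simpa using (Option.some.inj hDa)
              exact absurd h2.2 hb
    · have hst : stb adj pref Mat b (k+1) = stb adj pref Mat b k := by
        unfold stb; conv_lhs => rw [st]
        rw [dif_neg h]
      rw [hst, ih]
      constructor
      · rintro ⟨a, hak, hDa⟩; exact ⟨a, Nat.lt_succ_of_lt hak, hDa⟩
      · rintro ⟨a, hak, hDa⟩
        refine ⟨a, ?_, hDa⟩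
        have := pos_lt a
        omega

lemma D_spec {a : A} {o : O} {b : Bool} (hD : D adj pref Mat a = some (o, b)) :
    adj a o ∧ okc Mat o (stb adj pref Mat b (pos a)) ∧
      ∀ u ∈ Feas adj Mat a (st adj pref Mat (pos a)).1 (st adj pref Mat (pos a)).2, ¬ pref a u o := by
  obtain ⟨hp, hb⟩ := D_eq_some adj pref Mat hD
  obtain ⟨hmem, hmax⟩ := pick_spec adj pref Mat hp
  rw [Feas, Finset.mem_filter] at hmem
  obtain ⟨-, hadj, hok⟩ := hmem
  refine ⟨hadj, ?_, hmax⟩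
  cases b with
  | true => exact hb.1 rfl
  | false =>
    rcases hok with h1 | h2
    · exact absurd (hb.2 h1) (by simp)
    · exact h2

lemma D_not_okc₁ {a : A} {o : O} (hD : D adj pref Mat a = some (o, false)) :
    ¬ okc Mat o (st adj pref Mat (pos a)).1 := by
  obtain ⟨hp, hb⟩ := D_eq_some adj pref Mat hD
  intro hok
  exact absurd (hb.2 hok) (by simp)

lemma stb_succ_of_D {a : A} {o : O} {b : Bool} (hD : D adj pref Mat a = some (o, b)) :
    stb adj pref Mat b (pos a + 1) = insert o (stb adj pref Mat b (pos a)) ∧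
      ∀ b', b' ≠ b → stb adj pref Mat b' (pos a + 1) = stb adj pref Mat b' (pos a) := by
  have h := pos_lt a
  have ha : (Fintype.equivFin A).symm ⟨pos a, h⟩ = a := by simp [pos]
  unfold stb
  rw [st_succ_eq adj pref Mat (pos a) h, ha, hD]
  cases b with
  | true =>
    refine ⟨rfl, ?_⟩
    intro b' hb'
    cases b' with
    | true => exact absurd rfl hb'
    | false => rfl
  | false =>
    refine ⟨rfl, ?_⟩
    intro b' hb'
    cases b' with
    | false => exact absurd rfl hb'
    | true => rfl

lemma stb_succ_of_D_none {a : A} (hD : D adj pref Mat a = none) (b : Bool) :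
    stb adj pref Mat b (pos a + 1) = stb adj pref Mat b (pos a) := by
  have h := pos_lt a
  have ha : (Fintype.equivFin A).symm ⟨pos a, h⟩ = a := by simp [pos]
  unfold stb
  rw [st_succ_eq adj pref Mat (pos a) h, ha, hD]

lemma indep_stb (k : ℕ) : ∀ b, Mat.Indep ↑(stb adj pref Mat b k) := by
  induction k with
  | zero =>
    intro b
    cases b <;> simpa [stb, st] using Mat.empty_indep
  | succ k ih =>
    intro b
    by_cases h : k < Fintype.card A
    · set a₀ := (Fintype.equivFin A).symm ⟨k, h⟩ with ha₀
      have hpos : pos a₀ = k := by simp [pos, ha₀]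
      rcases hD : D adj pref Mat a₀ with _ | ⟨o, b'⟩
      · rw [← hpos, stb_succ_of_D_none adj pref Mat hD b, hpos]; exact ih b
      · by_cases hb : b = b'
        · subst hb
          rw [← hpos, (stb_succ_of_D adj pref Mat hD).1, Finset.coe_insert]
          exact (D_spec adj pref Mat hD).2.1.2
        · rw [← hpos, (stb_succ_of_D adj pref Mat hD).2 b hb, hpos]; exact ih b
    · have hst : ∀ b, stb adj pref Mat b (k+1) = stb adj pref Mat b k := by
        intro b; unfold stb; conv_lhs => rw [st]
        rw [dif_neg h]
      rw [hst]; exact ih b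

/-- agents matched in copy `b` among the first `k` -/
def Ag (b : Bool) (k : ℕ) : Finset A :=
  Finset.univ.filter fun a => pos a < k ∧ ∃ x, D adj pref Mat a = some (x, b)

lemma card_stb (k : ℕ) : ∀ b, (stb adj pref Mat b k).card = (Ag adj pref Mat b k).card := by
  induction k with
  | zero =>
    intro b
    have : Ag adj pref Mat b 0 = ∅ := by
      ext a; simp [Ag]
    rw [this]
    cases b <;> simp [stb, st]
  | succ k ih =>
    intro b
    by_cases h : k < Fintype.card A
    · set a₀ := (Fintype.equivFin A).symm ⟨k, h⟩ with ha₀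
      have hpos : pos a₀ = k := by simp [pos, ha₀]
      have hsplit : ∀ a : A, pos a < k + 1 ↔ pos a < k ∨ a = a₀ := by
        intro a
        constructor
        · intro hlt
          rcases Nat.lt_succ_iff_lt_or_eq.1 hlt with h' | h'
          · exact Or.inl h'
          · exact Or.inr (pos_inj (h'.trans hpos.symm))
        · rintro (h' | rfl)
          · exact Nat.lt_succ_of_lt h'
          · rw [hpos]; exact Nat.lt_succ_self k
      rcases hD : D adj pref Mat a₀ with _ | ⟨o, b'⟩
      · have hAg : Ag adj pref Mat b (k+1) = Ag adj pref Mat b k := by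
          ext a
          simp only [Ag, Finset.mem_filter, Finset.mem_univ, true_and]
          constructor
          · rintro ⟨hak, x, hDa⟩
            rcases (hsplit a).1 hak with h' | rfl
            · exact ⟨h', x, hDa⟩
            · rw [hD] at hDa; exact absurd hDa (by simp)
          · rintro ⟨hak, x, hDa⟩
            exact ⟨(hsplit a).2 (Or.inl hak), x, hDa⟩
        rw [hAg, ← hpos, stb_succ_of_D_none adj pref Mat hD b, hpos]
        exact ih b
      · by_cases hb : b = b'
        · subst hb
          have hAg : Ag adj pref Mat b (k+1) = insert a₀ (Ag adj pref Mat b k) := by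
            ext a
            simp only [Ag, Finset.mem_filter, Finset.mem_univ, true_and, Finset.mem_insert]
            constructor
            · rintro ⟨hak, x, hDa⟩
              rcases (hsplit a).1 hak with h' | rfl
              · exact Or.inr ⟨h', x, hDa⟩
              · exact Or.inl rfl
            · rintro (rfl | ⟨hak, x, hDa⟩)
              · exact ⟨(hsplit a₀).2 (Or.inr rfl), o, hD⟩
              · exact ⟨(hsplit a).2 (Or.inl hak), x, hDa⟩
          have ha₀notin : a₀ ∉ Ag adj pref Mat b k := by
            simp only [Ag, Finset.mem_filter, Finset.mem_univ, true_and, hpos]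
            intro hcon
            exact absurd hcon.1 (lt_irrefl k)
          have honotin : o ∉ stb adj pref Mat b (pos a₀) := (D_spec adj pref Mat hD).2.1.1
          rw [hAg, Finset.card_insert_of_notMem ha₀notin, ← hpos,
            (stb_succ_of_D adj pref Mat hD).1,
            Finset.card_insert_of_notMem honotin, hpos]
          rw [ih b]
        · have hAg : Ag adj pref Mat b (k+1) = Ag adj pref Mat b k := by
            ext a
            simp only [Ag, Finset.mem_filter, Finset.mem_univ, true_and]
            constructor
            · rintro ⟨hak, x, hDa⟩
              rcases (hsplit a).1 hak with h' | rfl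
              · exact ⟨h', x, hDa⟩
              · rw [hD] at hDa
                obtain h2 : o = x ∧ b' = b := by simpa using (Option.some.inj hDa)
                exact absurd h2.2.symm hb
            · rintro ⟨hak, x, hDa⟩
              exact ⟨(hsplit a).2 (Or.inl hak), x, hDa⟩
          rw [hAg, ← hpos, (stb_succ_of_D adj pref Mat hD).2 b (fun hc => hb hc), hpos]
          exact ih b
    · have hst : stb adj pref Mat b (k+1) = stb adj pref Mat b k := by
        unfold stb; conv_lhs => rw [st]
        rw [dif_neg h]
      have hAg : Ag adj pref Mat b (k+1) = Ag adj pref Mat b k := by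
        ext a
        simp only [Ag, Finset.mem_filter, Finset.mem_univ, true_and]
        have := pos_lt a
        constructor
        · rintro ⟨hak, hx⟩; exact ⟨by omega, hx⟩
        · rintro ⟨hak, hx⟩; exact ⟨by omega, hx⟩
      rw [hst, hAg]; exact ih b

/-- copy-`b` matching -/
def Mb (b : Bool) (a : A) : Option O :=
  match D adj pref Mat a with
  | some (x, b') => if b' = b then some x else none
  | none => none

/-- combined assignment (object only) -/
def Dm (a : A) : Option O := (D adj pref Mat a).map Prod.fst

lemma Mb_eq_some {b : Bool} {a : A} {x : O} :
    Mb adj pref Mat b a = some x ↔ D adj pref Mat a = some (x, b) := by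
  unfold Mb
  rcases hD : D adj pref Mat a with _ | ⟨o, b'⟩
  · simp
  · by_cases hb : b' = b
    · subst hb; simp
    · simp only [if_neg hb]
      constructor
      · intro hc; exact absurd hc (by simp)
      · intro hc
        obtain h2 : o = x ∧ b' = b := by simpa using (Option.some.inj hc)
        exact absurd h2.2 hb

lemma D_mem_stb {a : A} {x : O} {b : Bool} (hD : D adj pref Mat a = some (x, b)) {k : ℕ}
    (hk : pos a < k) : x ∈ stb adj pref Mat b k :=
  (mem_stb adj pref Mat b k x).2 ⟨a, hk, hD⟩

lemma isMatching_Mb (b : Bool) : IsMatching adj (Mb adj pref Mat b) := by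
  constructor
  · intro a o h
    exact (D_spec adj pref Mat ((Mb_eq_some adj pref Mat).1 h)).1
  · intro a a' o h h'
    rw [Mb_eq_some] at h h'
    by_contra hne
    have hpos : pos a ≠ pos a' := fun hc => hne (pos_inj hc)
    -- wlog via cases
    rcases lt_or_gt_of_ne hpos with hlt | hlt
    · have hmem : o ∈ stb adj pref Mat b (pos a') :=
        stb_mono adj pref Mat b hlt (D_mem_stb adj pref Mat h (Nat.lt_succ_self _))
      exact (D_spec adj pref Mat h').2.1.1 hmem
    · have hmem : o ∈ stb adj pref Mat b (pos a) :=
        stb_mono adj pref Mat b hlt (D_mem_stb adj pref Mat h' (Nat.lt_succ_self _))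
      exact (D_spec adj pref Mat h).2.1.1 hmem

lemma matchedObjs_Mb (b : Bool) :
    matchedObjs (Mb adj pref Mat b) = ↑(stb adj pref Mat b (Fintype.card A)) := by
  ext x
  simp only [matchedObjs, Set.mem_setOf_eq, Finset.coe_sort_coe, Finset.mem_coe,
    mem_stb adj pref Mat b]
  constructor
  · rintro ⟨a, ha⟩
    exact ⟨a, pos_lt a, (Mb_eq_some adj pref Mat).1 ha⟩
  · rintro ⟨a, _, ha⟩
    exact ⟨a, (Mb_eq_some adj pref Mat).2 ha⟩

lemma isConstrained_Mb (b : Bool) : IsConstrained adj Mat (Mb adj pref Mat b) := by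
  refine ⟨isMatching_Mb adj pref Mat b, ?_⟩
  rw [matchedObjs_Mb]
  exact indep_stb adj pref Mat (Fintype.card A) b

/-- auxiliary closure facts -/
lemma mem_closure_of_not_okc (hE : Mat.E = Set.univ) {o : O} {X : Finset O} (hX : Mat.Indep ↑X)
    (h : ¬ okc Mat o X) : o ∈ Mat.closure ↑X := by
  rw [okc, not_and_or] at h
  rcases h with h | h
  · rw [not_not] at h
    exact Mat.mem_closure_of_mem h (by rw [hE]; exact Set.subset_univ _)
  · by_contra hcl
    obtain ⟨hind, -⟩ := (Matroid.Indep.notMem_closure_iff hX (by rw [hE]; exact Set.mem_univ o)).1 hcl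
    exact h hind

lemma card_le_of_indep_subset_closure (hE : Mat.E = Set.univ) {I X : Finset O} (hI : Mat.Indep ↑I)
    (hX : Mat.Indep ↑X) (hsub : ↑I ⊆ Mat.closure ↑X) : I.card ≤ X.card := by
  by_contra hlt
  push_neg at hlt
  have henc : (↑X : Set O).encard < (↑I : Set O).encard := by
    rw [Set.encard_coe_eq_coe_finsetCard, Set.encard_coe_eq_coe_finsetCard]
    exact_mod_cast hlt
  obtain ⟨e, he, hins⟩ := Matroid.Indep.augment hX hI henc
  exact (Matroid.Indep.notMem_closure_iff hX (by rw [hE]; exact Set.mem_univ e)).2 ⟨hins, he.2⟩ (hsub he.1)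

lemma stb_true (k : ℕ) : stb adj pref Mat true k = (st adj pref Mat k).1 := rfl
lemma stb_false (k : ℕ) : stb adj pref Mat false k = (st adj pref Mat k).2 := rfl

section PrefMFacts

variable {pref}

lemma prefM_ne {M M' : A → Option O} {a : A} (hirr : ∀ o, ¬ pref a o o)
    (h : PrefM pref a M M') : M a ≠ M' a := by
  intro hc
  rcases h with ⟨o, o', h1, h2, h3⟩ | ⟨o, h1, h2⟩
  · rw [hc, h2] at h1
    obtain rfl : o' = o := Option.some.inj h1
    exact hirr _ h3
  · rw [hc, h2] at h1
    exact absurd h1 (by simp)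

lemma prefM_asymm {M M' : A → Option O} {a : A} (hirr : ∀ o, ¬ pref a o o)
    (htr : ∀ o o' o'', pref a o o' → pref a o' o'' → pref a o o'')
    (h : PrefM pref a M M') (h' : PrefM pref a M' M) : False := by
  rcases h with ⟨o, o', h1, h2, h3⟩ | ⟨o, h1, h2⟩ <;>
    rcases h' with ⟨u, u', g1, g2, g3⟩ | ⟨u, g1, g2⟩
  · obtain rfl : o' = u := Option.some.inj (h2.symm.trans g1)
    obtain rfl : u' = o := Option.some.inj (g2.symm.trans h1)
    exact hirr _ (htr _ _ _ h3 g3)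
  · exact absurd (g2.symm.trans h1) (by simp)
  · exact absurd (h2.symm.trans g1) (by simp)
  · exact absurd (h2.symm.trans g1) (by simp)

lemma prefM_trichotomy {M M' : A → Option O} (hpref : IsStrictRanking adj pref)
    (hM : ∀ a o, M a = some o → adj a o) (hM' : ∀ a o, M' a = some o → adj a o) (a : A) :
    PrefM pref a M M' ∨ PrefM pref a M' M ∨ M a = M' a := by
  rcases hMa : M a with _ | o
  · rcases hM'a : M' a with _ | o'
    · exact Or.inr (Or.inr rfl)
    · exact Or.inr (Or.inl (Or.inr ⟨o', hM'a, hMa⟩))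
  · rcases hM'a : M' a with _ | o'
    · exact Or.inl (Or.inr ⟨o, hMa, hM'a⟩)
    · by_cases ho : o = o'
      · subst ho; exact Or.inr (Or.inr rfl)
      · rcases hpref.2 a o o' (hM a o hMa) (hM' a o' hM'a) ho with h | h
        · exact Or.inl (Or.inl ⟨o, o', hMa, hM'a, h⟩)
        · exact Or.inr (Or.inl (Or.inl ⟨o', o, hM'a, hMa, h⟩))

end PrefMFacts

section Main

variable (hpref : IsStrictRanking adj pref) (hE : Mat.E = Set.univ)
variable {N : A → Option O} (hN : IsConstrained adj Mat N)

/-- If an agent prefers `N` to the combined greedy assignment, its `N`-object was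
infeasible at its turn. -/
lemma blocked (hpref : IsStrictRanking adj pref) (hE : Mat.E = Set.univ) {a : A} {u : O}
    (hNa : N a = some u) (hP : PrefM pref a N (Dm adj pref Mat)) (hadj : adj a u) (b : Bool) :
    u ∈ Mat.closure ↑(stb adj pref Mat b (pos a)) := by
  have hnF : u ∉ Feas adj Mat a (st adj pref Mat (pos a)).1 (st adj pref Mat (pos a)).2 := by
    rcases hP with ⟨o, o', h1, h2, h3⟩ | ⟨o, h1, h2⟩
    · rw [hNa] at h1; obtain rfl := Option.some.inj h1
      rcases hDo : D adj pref Mat a with _ | ⟨x, b'⟩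
      · rw [Dm, hDo] at h2; exact absurd h2 (by simp)
      · rw [Dm, hDo] at h2
        obtain rfl : x = o' := by simpa using Option.some.inj h2
        intro hF
        exact (D_spec adj pref Mat hDo).2.2 u hF h3
    · rcases hDo : D adj pref Mat a with _ | ⟨x, b'⟩
      · intro hF
        exact pick_none adj pref Mat (hpref.1 a).1 (fun o o' o'' => (hpref.1 a).2.1 o o' o'')
          ((D_eq_none_iff adj pref Mat).1 hDo) hF
      · rw [Dm, hDo] at h2; exact absurd h2 (by simp)
  rw [Feas, Finset.mem_filter, not_and_or, not_and_or] at hnF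
  have hnot : ¬ (okc Mat u (st adj pref Mat (pos a)).1 ∨ okc Mat u (st adj pref Mat (pos a)).2) := by
    rcases hnF with h | h
    · exact absurd (Finset.mem_univ u) h
    · rcases h with h | h
      · exact absurd hadj h
      · exact h
  rw [not_or] at hnot
  cases b with
  | true => exact mem_closure_of_not_okc Mat hE (indep_stb adj pref Mat (pos a) true) hnot.1
  | false => exact mem_closure_of_not_okc Mat hE (indep_stb adj pref Mat (pos a) false) hnot.2

end Main

theorem main_count (hpref : IsStrictRanking adj pref) (hE : Mat.E = Set.univ)
    {N : A → Option O} (hN : IsConstrained adj Mat N)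
    (hne : N ≠ Mb adj pref Mat true) :
    (Finset.univ.filter fun a => PrefM pref a N (Dm adj pref Mat)).card <
      (Finset.univ.filter fun a => PrefM pref a (Dm adj pref Mat) N).card := by
  classical
  have hirr : ∀ (a : A) o, ¬ pref a o o := fun a => (hpref.1 a).1
  have htr : ∀ (a : A) o o' o'', pref a o o' → pref a o' o'' → pref a o o'' :=
    fun a => (hpref.1 a).2.1
  have hNadj := hN.1.1
  have hNinj := hN.1.2
  have hDm_adj : ∀ (a : A) o, Dm adj pref Mat a = some o → adj a o := by
    intro a o h
    rcases hD : D adj pref Mat a with _ | ⟨x, b⟩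
    · rw [Dm, hD] at h; exact absurd h (by simp)
    · rw [Dm, hD] at h
      obtain rfl : x = o := by simpa using h
      exact (D_spec adj pref Mat hD).1
  have htri := prefM_trichotomy (adj := adj) hpref hNadj hDm_adj
  set Pf : Finset A := Finset.univ.filter (fun a => PrefM pref a N (Dm adj pref Mat)) with hPfdef
  set Qf : Finset A := Finset.univ.filter (fun a => PrefM pref a (Dm adj pref Mat) N) with hQfdef
  have hmemP : ∀ a, a ∈ Pf ↔ PrefM pref a N (Dm adj pref Mat) := by
    intro a; simp [hPfdef]
  have hmemQ : ∀ a, a ∈ Qf ↔ PrefM pref a (Dm adj pref Mat) N := by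
    intro a; simp [hQfdef]
  show Pf.card < Qf.card
  rcases Pf.eq_empty_or_nonempty with hPf | hPne
  · -- no agent prefers N to the greedy assignment
    have hq : Qf.Nonempty := by
      by_contra hq
      rw [Finset.not_nonempty_iff_eq_empty] at hq
      have hEq : ∀ a, N a = Dm adj pref Mat a := by
        intro a
        rcases htri a with h | h | h
        · exact absurd ((hmemP a).2 h) (by simp [hPf])
        · exact absurd ((hmemQ a).2 h) (by simp [hq])
        · exact h
      have hno2 : ∀ (a : A) x, D adj pref Mat a ≠ some (x, false) := by
        intro a x hD
        have hNa : N a = some x := by rw [hEq a, Dm, hD]; rfl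
        apply D_not_okc₁ adj pref Mat hD
        constructor
        · intro hmem
          rw [← stb_true] at hmem
          obtain ⟨c, hck, hDc⟩ := (mem_stb adj pref Mat true (pos a) x).1 hmem
          have hNc : N c = some x := by rw [hEq c, Dm, hDc]; rfl
          have : c = a := hNinj c a x hNc hNa
          subst this
          exact absurd hck (lt_irrefl _)
        · apply hN.2.subset
          intro y hy
          rcases Set.mem_insert_iff.1 hy with rfl | hy
          · exact ⟨a, hNa⟩
          · rw [← stb_true] at hy
            obtain ⟨c, hck, hDc⟩ := (mem_stb adj pref Mat true (pos a) y).1 hy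
            exact ⟨c, by rw [hEq c, Dm, hDc]; rfl⟩
      apply hne
      funext a
      rw [hEq a]
      rcases hD : D adj pref Mat a with _ | ⟨x, b⟩
      · rw [Dm, Mb, hD]; rfl
      · cases b with
        | false => exact absurd hD (hno2 a x)
        | true => rw [Dm, Mb, hD]; rfl
    rw [hPf]
    simpa using Finset.card_pos.2 hq
  · -- some agent prefers N; use the last such agent
    obtain ⟨z, hz, hzmax⟩ := Pf.exists_max_image pos hPne
    obtain ⟨uz, hNzu⟩ : ∃ uz, N z = some uz := by
      rcases (hmemP z).1 hz with ⟨o, o', h1, _, _⟩ | ⟨o, h1, _⟩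
      · exact ⟨o, h1⟩
      · exact ⟨o, h1⟩
    set ν : A → O := fun a => (N a).getD uz with hνdef
    have hν : ∀ {a u}, N a = some u → ν a = u := by
      intro a u h; rw [hνdef]; simp [h]
    set kz := pos z with hkz
    -- per-copy counting
    have key : ∀ b : Bool,
        Pf.card ≤ ((Ag adj pref Mat b kz).filter (· ∈ Pf)).card +
          ((Ag adj pref Mat b kz).filter (· ∈ Qf)).card := by
      intro b
      set Eb := (Ag adj pref Mat b kz).filter (fun c => N c = Dm adj pref Mat c) with hEbdef
      set Sb := Pf ∪ Eb with hSbdef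
      have hNS : ∀ a ∈ Sb, N a = some (ν a) := by
        intro a ha
        rcases Finset.mem_union.1 ha with ha | ha
        · rcases (hmemP a).1 ha with ⟨o, o', h1, _, _⟩ | ⟨o, h1, _⟩
          · rw [hν h1]; exact h1
          · rw [hν h1]; exact h1
        · rw [hEbdef, Finset.mem_filter] at ha
          obtain ⟨hag, hEq⟩ := ha
          rw [Ag, Finset.mem_filter] at hag
          obtain ⟨-, -, x, hDx⟩ := hag
          have : N a = some x := by rw [hEq, Dm, hDx]; rfl
          rw [hν this]; exact this
      have himgcard : (Sb.image ν).card = Sb.card := by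
        apply Finset.card_image_of_injOn
        intro a ha a' ha' hνe
        exact hNinj a a' (ν a) (hNS a ha) (by rw [hνe]; exact hNS a' ha')
      have himg_indep : Mat.Indep ↑(Sb.image ν) := by
        apply hN.2.subset
        intro y hy
        obtain ⟨a, ha, rfl⟩ := Finset.mem_image.1 hy
        exact ⟨a, hNS a ha⟩
      have himg_sub : ↑(Sb.image ν) ⊆ Mat.closure ↑(stb adj pref Mat b kz) := by
        intro y hy
        obtain ⟨a, ha, rfl⟩ := Finset.mem_image.1 hy
        rcases Finset.mem_union.1 ha with ha' | ha'
        · have hNa : N a = some (ν a) := hNS a ha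
          have hblocked := blocked adj pref Mat hpref hE hNa ((hmemP a).1 ha')
            (hNadj a _ hNa) b
          have hsub : stb adj pref Mat b (pos a) ⊆ stb adj pref Mat b kz :=
            stb_mono adj pref Mat b (hzmax a ha')
          exact Mat.closure_subset_closure (Finset.coe_subset.2 hsub) hblocked
        · rw [hEbdef, Finset.mem_filter] at ha'
          obtain ⟨hag, hEq⟩ := ha'
          rw [Ag, Finset.mem_filter] at hag
          obtain ⟨-, hlt, x, hDx⟩ := hag
          have hNa : N a = some x := by rw [hEq, Dm, hDx]; rfl
          have : ν a = x := hν hNa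
          rw [this]
          have hmem : x ∈ stb adj pref Mat b kz := D_mem_stb adj pref Mat hDx hlt
          exact Mat.subset_closure _ (by rw [hE]; exact Set.subset_univ _) hmem
      have hle : Sb.card ≤ (Ag adj pref Mat b kz).card := by
        rw [← himgcard, ← card_stb adj pref Mat kz b]
        exact card_le_of_indep_subset_closure Mat hE himg_indep
          (indep_stb adj pref Mat kz b) himg_sub
      have hdisjPE : Disjoint Pf Eb := by
        rw [Finset.disjoint_left]
        intro c hcP hcE
        rw [hEbdef, Finset.mem_filter] at hcE
        exact prefM_ne (hirr c) ((hmemP c).1 hcP) hcE.2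
      have hSbcard : Sb.card = Pf.card + Eb.card := Finset.card_union_of_disjoint hdisjPE
      -- partition Ag into P/Q/E parts
      have hAg_eq : Ag adj pref Mat b kz =
          ((Ag adj pref Mat b kz).filter (· ∈ Pf)) ∪
            ((Ag adj pref Mat b kz).filter (· ∈ Qf)) ∪ Eb := by
        ext c
        simp only [Finset.mem_union, Finset.mem_filter, hEbdef]
        constructor
        · intro hc
          rcases htri c with h | h | h
          · exact Or.inl (Or.inl ⟨hc, (hmemP c).2 h⟩)
          · exact Or.inl (Or.inr ⟨hc, (hmemQ c).2 h⟩)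
          · exact Or.inr ⟨hc, h⟩
        · rintro ((⟨hc, -⟩ | ⟨hc, -⟩) | ⟨hc, -⟩) <;> exact hc
      have hd1 : Disjoint ((Ag adj pref Mat b kz).filter (· ∈ Pf))
          ((Ag adj pref Mat b kz).filter (· ∈ Qf)) := by
        rw [Finset.disjoint_left]
        intro c hc1 hc2
        rw [Finset.mem_filter] at hc1 hc2
        exact prefM_asymm (hirr c) (htr c) ((hmemP c).1 hc1.2) ((hmemQ c).1 hc2.2)
      have hd2 : Disjoint (((Ag adj pref Mat b kz).filter (· ∈ Pf)) ∪
          ((Ag adj pref Mat b kz).filter (· ∈ Qf))) Eb := by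
        rw [Finset.disjoint_left]
        intro c hc1 hc2
        rw [hEbdef, Finset.mem_filter] at hc2
        rcases Finset.mem_union.1 hc1 with hc | hc
        · rw [Finset.mem_filter] at hc
          exact prefM_ne (hirr c) ((hmemP c).1 hc.2) hc2.2
        · rw [Finset.mem_filter] at hc
          exact prefM_ne (hirr c) ((hmemQ c).1 hc.2) hc2.2.symm
      have hAgcard : (Ag adj pref Mat b kz).card =
          ((Ag adj pref Mat b kz).filter (· ∈ Pf)).card +
            ((Ag adj pref Mat b kz).filter (· ∈ Qf)).card + Eb.card := by
        conv_lhs => rw [hAg_eq]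
        rw [Finset.card_union_of_disjoint hd2, Finset.card_union_of_disjoint hd1]
      omega
    -- combine the two copies
    have hkeyT := key true
    have hkeyF := key false
    have hdisjP : Disjoint ((Ag adj pref Mat true kz).filter (· ∈ Pf))
        ((Ag adj pref Mat false kz).filter (· ∈ Pf)) := by
      rw [Finset.disjoint_left]
      intro c hc1 hc2
      rw [Finset.mem_filter, Ag, Finset.mem_filter] at hc1 hc2
      obtain ⟨⟨-, -, x, hx⟩, -⟩ := hc1
      obtain ⟨⟨-, -, y, hy⟩, -⟩ := hc2
      rw [hx] at hy
      simpa using Option.some.inj hy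
    have hdisjQ : Disjoint ((Ag adj pref Mat true kz).filter (· ∈ Qf))
        ((Ag adj pref Mat false kz).filter (· ∈ Qf)) := by
      rw [Finset.disjoint_left]
      intro c hc1 hc2
      rw [Finset.mem_filter, Ag, Finset.mem_filter] at hc1 hc2
      obtain ⟨⟨-, -, x, hx⟩, -⟩ := hc1
      obtain ⟨⟨-, -, y, hy⟩, -⟩ := hc2
      rw [hx] at hy
      simpa using Option.some.inj hy
    have hPsub : ((Ag adj pref Mat true kz).filter (· ∈ Pf)) ∪
        ((Ag adj pref Mat false kz).filter (· ∈ Pf)) ⊆ Pf.erase z := by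
      intro c hc
      have hcP : c ∈ Pf ∧ pos c < kz := by
        rcases Finset.mem_union.1 hc with hc | hc <;>
          · rw [Finset.mem_filter, Ag, Finset.mem_filter] at hc
            exact ⟨hc.2, hc.1.2.1⟩
      refine Finset.mem_erase.2 ⟨?_, hcP.1⟩
      intro hcz
      subst hcz
      exact absurd hcP.2 (lt_irrefl _)
    have hQsub : ((Ag adj pref Mat true kz).filter (· ∈ Qf)) ∪
        ((Ag adj pref Mat false kz).filter (· ∈ Qf)) ⊆ Qf := by
      intro c hc
      rcases Finset.mem_union.1 hc with hc | hc <;>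
        · rw [Finset.mem_filter] at hc
          exact hc.2
    have hPcount : ((Ag adj pref Mat true kz).filter (· ∈ Pf)).card +
        ((Ag adj pref Mat false kz).filter (· ∈ Pf)).card ≤ Pf.card - 1 := by
      rw [← Finset.card_union_of_disjoint hdisjP]
      calc _ ≤ (Pf.erase z).card := Finset.card_le_card hPsub
        _ = Pf.card - 1 := Finset.card_erase_of_mem hz
    have hQcount : ((Ag adj pref Mat true kz).filter (· ∈ Qf)).card +
        ((Ag adj pref Mat false kz).filter (· ∈ Qf)).card ≤ Qf.card := by
      rw [← Finset.card_union_of_disjoint hdisjQ]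
      exact Finset.card_le_card hQsub
    have hzpos : 1 ≤ Pf.card := Finset.card_pos.2 ⟨z, hz⟩
    omega

lemma Mb_none {a : A} (hD : D adj pref Mat a = none) (b : Bool) :
    Mb adj pref Mat b a = none := by
  rw [Mb, hD]

lemma Mb_other {a : A} {x : O} {b : Bool} (hD : D adj pref Mat a = some (x, b)) (b' : Bool)
    (hb : b' ≠ b) : Mb adj pref Mat b' a = none := by
  rw [Mb, hD]
  cases b <;> cases b' <;> simp_all

lemma Mb_self {a : A} {x : O} {b : Bool} (hD : D adj pref Mat a = some (x, b)) :
    Mb adj pref Mat b a = some x := by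
  rw [Mb, hD]
  simp

lemma Dm_none {a : A} (hD : D adj pref Mat a = none) : Dm adj pref Mat a = none := by
  rw [Dm, hD]; rfl

lemma Dm_some {a : A} {x : O} {b : Bool} (hD : D adj pref Mat a = some (x, b)) :
    Dm adj pref Mat a = some x := by
  rw [Dm, hD]; rfl

lemma exists_iff {N : A → Option O} (a : A) :
    (∃ M ∈ ({Mb adj pref Mat true, Mb adj pref Mat false} : Set (A → Option O)),
      PrefM pref a M N) ↔ PrefM pref a (Dm adj pref Mat) N := by
  constructor
  · rintro ⟨M, hM, h⟩
    have hMb : ∃ b : Bool, M = Mb adj pref Mat b := by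
      rcases hM with rfl | rfl
      · exact ⟨true, rfl⟩
      · exact ⟨false, rfl⟩
    obtain ⟨b, rfl⟩ := hMb
    rcases h with ⟨o, o', h1, h2, h3⟩ | ⟨o, h1, h2⟩
    · exact Or.inl ⟨o, o', Dm_some adj pref Mat ((Mb_eq_some adj pref Mat).1 h1), h2, h3⟩
    · exact Or.inr ⟨o, Dm_some adj pref Mat ((Mb_eq_some adj pref Mat).1 h1), h2⟩
  · intro h
    have hsome : ∃ o, Dm adj pref Mat a = some o := by
      rcases h with ⟨o, o', h1, -, -⟩ | ⟨o, h1, -⟩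
      · exact ⟨o, h1⟩
      · exact ⟨o, h1⟩
    obtain ⟨o, ho⟩ := hsome
    rcases hD : D adj pref Mat a with _ | ⟨x, b⟩
    · rw [Dm_none adj pref Mat hD] at ho; exact absurd ho (by simp)
    · obtain rfl : x = o := by
        rw [Dm_some adj pref Mat hD] at ho; exact Option.some.inj ho
      refine ⟨Mb adj pref Mat b, by cases b <;> simp, ?_⟩
      have hMba : Mb adj pref Mat b a = Dm adj pref Mat a := by
        rw [Mb_self adj pref Mat hD, Dm_some adj pref Mat hD]
      rcases h with ⟨u, u', h1, h2, h3⟩ | ⟨u, h1, h2⟩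
      · exact Or.inl ⟨u, u', hMba.trans h1, h2, h3⟩
      · exact Or.inr ⟨u, hMba.trans h1, h2⟩

lemma all_iff {N : A → Option O} (a : A) :
    (∀ M ∈ ({Mb adj pref Mat true, Mb adj pref Mat false} : Set (A → Option O)),
      PrefM pref a N M) ↔ PrefM pref a N (Dm adj pref Mat) := by
  constructor
  · intro h
    rcases hD : D adj pref Mat a with _ | ⟨x, b⟩
    · have h1 := h (Mb adj pref Mat true) (by simp)
      rcases h1 with ⟨o, o', -, h2, -⟩ | ⟨o, h1, -⟩
      · rw [Mb_none adj pref Mat hD] at h2; exact absurd h2 (by simp)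
      · exact Or.inr ⟨o, h1, Dm_none adj pref Mat hD⟩
    · have h1 := h (Mb adj pref Mat b) (by cases b <;> simp)
      rcases h1 with ⟨o, o', h1, h2, h3⟩ | ⟨o, -, h2⟩
      · rw [Mb_self adj pref Mat hD] at h2
        obtain rfl : x = o' := Option.some.inj h2
        exact Or.inl ⟨o, x, h1, Dm_some adj pref Mat hD, h3⟩
      · rw [Mb_self adj pref Mat hD] at h2; exact absurd h2 (by simp)
  · intro h M hM
    have hMb : ∃ b : Bool, M = Mb adj pref Mat b := by
      rcases hM with rfl | rfl
      · exact ⟨true, rfl⟩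
      · exact ⟨false, rfl⟩
    obtain ⟨b, rfl⟩ := hMb
    rcases hD : D adj pref Mat a with _ | ⟨x, b'⟩
    · rcases h with ⟨o, o', -, h2, -⟩ | ⟨o, h1, -⟩
      · rw [Dm_none adj pref Mat hD] at h2; exact absurd h2 (by simp)
      · exact Or.inr ⟨o, h1, Mb_none adj pref Mat hD b⟩
    · by_cases hb : b = b'
      · subst hb
        rcases h with ⟨o, o', h1, h2, h3⟩ | ⟨o, -, h2⟩
        · rw [Dm_some adj pref Mat hD] at h2
          obtain rfl : x = o' := Option.some.inj h2
          exact Or.inl ⟨o, x, h1, Mb_self adj pref Mat hD, h3⟩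
        · rw [Dm_some adj pref Mat hD] at h2; exact absurd h2 (by simp)
      · have hnone : Mb adj pref Mat b a = none := Mb_other adj pref Mat hD b hb
        rcases h with ⟨o, o', h1, -, -⟩ | ⟨o, h1, -⟩
        · exact Or.inr ⟨o, h1, hnone⟩
        · exact Or.inr ⟨o, h1, hnone⟩

end SPPaux
end SPPaux

/-- In a matroid-constrained matching instance with strict rankings,
there exists a strongly popular set of at most two `ℐ`-constrained matchings. -/
theorem exists_strongly_popular_pair_of_strict
    {A O : Type*} [Fintype A] [Fintype O]
    (adj : A → O → Prop) (pref : A → O → O → Prop)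
    (hpref : IsStrictRanking adj pref)
    (Mat : Matroid O) (hE : Mat.E = Set.univ) :
    ∃ Mset : Set (A → Option O),
      (∀ M ∈ Mset, IsConstrained adj Mat M) ∧ Mset.ncard ≤ 2 ∧
      StronglyPopular pref {M | IsConstrained adj Mat M} Mset := by
  classical
  refine ⟨{SPPaux.Mb adj pref Mat true, SPPaux.Mb adj pref Mat false}, ?_, ?_, ?_⟩
  · rintro M (rfl | rfl)
    · exact SPPaux.isConstrained_Mb adj pref Mat true
    · exact SPPaux.isConstrained_Mb adj pref Mat false
  · exact (Set.ncard_insert_le _ _).trans (by simp)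
  · intro N hNF hNmem
    have hne : N ≠ SPPaux.Mb adj pref Mat true := by
      intro hc; exact hNmem (by rw [hc]; exact Set.mem_insert _ _)
    have h1 : {a : A | ∀ M ∈ ({SPPaux.Mb adj pref Mat true, SPPaux.Mb adj pref Mat false} :
        Set (A → Option O)), PrefM pref a N M} =
        ↑(Finset.univ.filter fun a => PrefM pref a N (SPPaux.Dm adj pref Mat)) := by
      ext a
      simp only [Set.mem_setOf_eq, Finset.coe_filter, Finset.mem_univ, true_and]
      exact SPPaux.all_iff adj pref Mat a
    have h2 : {a : A | ∃ M ∈ ({SPPaux.Mb adj pref Mat true, SPPaux.Mb adj pref Mat false} :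
        Set (A → Option O)), PrefM pref a M N} =
        ↑(Finset.univ.filter fun a => PrefM pref a (SPPaux.Dm adj pref Mat) N) := by
      ext a
      simp only [Set.mem_setOf_eq, Finset.coe_filter, Finset.mem_univ, true_and]
      exact SPPaux.exists_iff adj pref Mat a
    rw [phiOne, phiSet, h1, h2, Set.ncard_coe_finset, Set.ncard_coe_finset]
    exact SPPaux.main_count adj pref Mat hpref hE hNF hne
end

section
/- Let ℐ be a matroid on the object set O, and let M, N be two ℐ-constrained matchings in a matching instance such that every agent is matched in both M and N and both M(A) and N(A) are bases of ℐ. Let C be a directed cycle in the exchange graph D_{N→M}, let A(C) be the set of agents on C, and let a' ∈ A(C). Then there exists A' ⊆ A(C) with a' ∈ A' such that the assignment M' defined by M'(a) = N(a) for all a ∈ A' and M'(a) = M(a) for all a ∈ A \ A' is an ℐ-constrained matching. -/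
open scoped Classical

/-- The fundamental circuit `C(X, o)` of `o` with respect to a basis `X`. -/
noncomputable def fundCircuit {O : Type*} (Mat : Matroid O) (X : Set O) (o : O) : Set O :=
  if o ∈ X then {o} else {x ∈ X | Mat.Indep (insert o (X \ {x}))}

/-- The exchange graph `D_{N→M}` on the agents, for fully matched matchings given by
`m n : A → O`: there is an arc `(a, b)` whenever `M(b) ∈ C(M(A), N(a))`. -/
def exchArc {A O : Type*} (Mat : Matroid O) (m n : A → O) (a b : A) : Prop :=
  m b ∈ fundCircuit Mat (Set.range m) (n a)

/-- A directed cycle in the digraph with arc relation `arc`, given as a nonempty list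
of pairwise distinct nodes with arcs between consecutive nodes and from the last node
back to the first. -/
def IsCycle {V : Type*} (arc : V → V → Prop) (c : List V) : Prop :=
  c ≠ [] ∧ c.Nodup ∧ c.Chain' arc ∧ ∀ x ∈ c.getLast?, ∀ y ∈ c.head?, arc x y

section AuxAll
open Set

section MatroidAux
variable {O : Type*} {Mat : Matroid O} {B : Set O} {x y x1 xl y1 yk xk : O}

lemma mem_fundCircuit_of_not_mem (hyX : y ∉ B) :
    x ∈ fundCircuit Mat B y ↔ x ∈ B ∧ Mat.Indep (insert y (B \ {x})) := by
  simp [fundCircuit, hyX]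

lemma mem_fundCircuit_of_mem (hyX : y ∈ B) :
    x ∈ fundCircuit Mat B y ↔ x = y := by
  simp [fundCircuit, hyX]

lemma fundCircuit_subset : fundCircuit Mat B y ⊆ B := by
  by_cases hy : y ∈ B
  · simp [fundCircuit, hy]
  · intro x hx; exact ((mem_fundCircuit_of_not_mem hy).1 hx).1

/-- Lemma L : if `y` depends on `B \ {x1}` and on `B \ {xl}` then on `B \ {x1, xl}`. -/
lemma dep_insert_diff_pair (hE : Mat.E = Set.univ) (hB : Mat.IsBase B) (hBfin : B.Finite)
    (hy : y ∉ B) (hx1 : x1 ∈ B) (hxl : xl ∈ B) (hne : x1 ≠ xl)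
    (h1 : ¬ Mat.Indep (insert y (B \ {x1})))
    (hl : ¬ Mat.Indep (insert y (B \ {xl}))) :
    ¬ Mat.Indep (insert y (B \ ({x1, xl} : Set O))) := by
  intro hJ
  set J := insert y (B \ ({x1, xl} : Set O)) with hJdef
  have hx1J : x1 ∉ J := by
    simp only [hJdef, mem_insert_iff, mem_diff, mem_insert_iff, mem_singleton_iff]
    rintro (rfl | ⟨-, h⟩) <;> simp_all
  have hxlJ : xl ∉ J := by
    simp only [hJdef, mem_insert_iff, mem_diff, mem_insert_iff, mem_singleton_iff]
    rintro (rfl | ⟨-, h⟩) <;> simp_all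
  have hins1 : insert x1 J = insert y (B \ {xl}) := by
    ext z
    simp only [hJdef, mem_insert_iff, mem_diff, mem_singleton_iff]
    constructor
    · rintro (rfl | rfl | ⟨hz, h⟩) <;> tauto
    · rintro (rfl | ⟨hz, h⟩)
      · tauto
      · by_cases hz1 : z = x1 <;> tauto
  have hinsl : insert xl J = insert y (B \ {x1}) := by
    ext z
    simp only [hJdef, mem_insert_iff, mem_diff, mem_singleton_iff]
    constructor
    · rintro (rfl | rfl | ⟨hz, h⟩) <;> tauto
    · rintro (rfl | ⟨hz, h⟩)
      · tauto
      · by_cases hzl : z = xl <;> tauto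
  have hx1cl : x1 ∈ Mat.closure J := by
    rw [hJ.mem_closure_iff_of_notMem hx1J]
    rw [Matroid.dep_iff]
    refine ⟨?_, by rw [hE]; exact subset_univ _⟩
    rw [hins1]; exact hl
  have hxlcl : xl ∈ Mat.closure J := by
    rw [hJ.mem_closure_iff_of_notMem hxlJ]
    rw [Matroid.dep_iff]
    refine ⟨?_, by rw [hE]; exact subset_univ _⟩
    rw [hinsl]; exact h1
  have hBcl : B ⊆ Mat.closure J := by
    intro b hb
    by_cases hb1 : b = x1
    · exact hb1 ▸ hx1cl
    by_cases hbl : b = xl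
    · exact hbl ▸ hxlcl
    · exact Mat.subset_closure J (by rw [hE]; exact subset_univ _)
        (by simp [hJdef, hb, hb1, hbl])
  have hJbase : Mat.IsBase J := by
    refine hJ.isBase_of_ground_subset_closure ?_
    have := hB.closure_eq
    calc Mat.E = Mat.closure B := this.symm
    _ ⊆ Mat.closure (Mat.closure J) := Mat.closure_subset_closure hBcl
    _ = Mat.closure J := Mat.closure_closure J
  -- cardinality contradiction
  have hcard := hJbase.encard_eq_encard_of_isBase hB
  have hyS : y ∉ B \ ({x1, xl} : Set O) := fun h => hy h.1
  have hxl' : xl ∉ B \ ({x1, xl} : Set O) := by simp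
  have hx1' : x1 ∉ insert xl (B \ ({x1, xl} : Set O)) := by simp [hne]
  have hBsplit : B = insert x1 (insert xl (B \ ({x1, xl} : Set O))) := by
    ext z
    simp only [mem_insert_iff, mem_diff, mem_singleton_iff]
    constructor
    · intro hz; by_cases h1' : z = x1; · tauto
      by_cases h2' : z = xl <;> tauto
    · rintro (rfl | rfl | ⟨h, _⟩) <;> assumption
  have e1 : J.encard = (B \ ({x1, xl} : Set O)).encard + 1 :=
    encard_insert_of_notMem hyS
  have e2 : B.encard = (B \ ({x1, xl} : Set O)).encard + 2 := by
    conv_lhs => rw [hBsplit]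
    rw [encard_insert_of_notMem hx1', encard_insert_of_notMem hxl', add_assoc]
    norm_num
  rw [e1, e2] at hcard
  have hfin : (B \ ({x1, xl} : Set O)).encard ≠ ⊤ :=
    ((hBfin.subset diff_subset).encard_lt_top).ne
  have := WithTop.add_left_cancel hfin hcard
  norm_num at this
  exact absurd (congrArg ENat.toNat this) (by simp)


/-- Claim A: transfer of fundamental-circuit independence across a basis exchange. -/
lemma indep_transfer (hE : Mat.E = Set.univ) (hB : Mat.IsBase B)
    (hy1 : y1 ∉ B) (hx1 : x1 ∈ B) (hyk : yk ∉ B) (hxk : xk ∈ B)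
    (hnex : x1 ≠ xk) (hney : y1 ≠ yk)
    (hI1 : Mat.Indep (insert y1 (B \ {x1})))
    (hIk : Mat.Indep (insert yk (B \ {xk})))
    (hdep : ¬ Mat.Indep (insert yk (B \ {x1}))) :
    Mat.Indep (insert yk (insert y1 (B \ {x1}) \ {xk})) := by
  have hy1xk : y1 ≠ xk := fun h => hy1 (h ▸ hxk)
  have hrw : insert y1 (B \ {x1}) \ {xk} = insert y1 (B \ ({x1, xk} : Set O)) := by
    ext z
    simp only [mem_insert_iff, mem_diff, mem_singleton_iff, not_or]
    constructor
    · rintro ⟨rfl | ⟨hz, h1⟩, hk⟩ <;> tauto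
    · rintro (rfl | ⟨hz, h1, hk⟩) <;> tauto
  rw [hrw, insert_comm]
  by_contra hJ
  set S := B \ ({x1, xk} : Set O) with hSdef
  have hSsub : S ⊆ B \ {xk} := fun z hz =>
    ⟨hz.1, fun hzz => hz.2 (by simp only [mem_singleton_iff] at hzz; simp [hzz])⟩
  have hSsub1 : S ⊆ B \ {x1} := fun z hz =>
    ⟨hz.1, fun hzz => hz.2 (by simp only [mem_singleton_iff] at hzz; simp [hzz])⟩
  have hykS : Mat.Indep (insert yk S) :=
    hIk.subset (insert_subset_insert hSsub)
  have hy1mem : y1 ∉ insert yk S := by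
    simp only [mem_insert_iff]
    rintro (rfl | h)
    · exact hney rfl
    · exact hy1 h.1
  have hy1cl : y1 ∈ Mat.closure (insert yk S) := by
    rw [hykS.mem_closure_iff_of_notMem hy1mem, Matroid.dep_iff]
    exact ⟨hJ, by rw [hE]; exact subset_univ _⟩
  have hBx1indep : Mat.Indep (B \ {x1}) := hB.indep.subset diff_subset
  have hykcl : yk ∈ Mat.closure (B \ {x1}) := by
    rw [hBx1indep.mem_closure_iff_of_notMem (fun h => hyk h.1), Matroid.dep_iff]
    exact ⟨hdep, by rw [hE]; exact subset_univ _⟩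
  have hsub : insert yk S ⊆ Mat.closure (B \ {x1}) := by
    refine insert_subset hykcl (hSsub1.trans ?_)
    exact Mat.subset_closure _ (by rw [hE]; exact subset_univ _)
  have : y1 ∈ Mat.closure (B \ {x1}) := by
    have h1 := Mat.closure_subset_closure hsub
    rw [Mat.closure_closure] at h1
    exact h1 hy1cl
  rw [hBx1indep.mem_closure_iff_of_notMem (fun h => hy1 h.1), Matroid.dep_iff] at this
  exact this.1 hI1


end MatroidAux

section SE
variable {O : Type*} [Fintype O] {Mat : Matroid O}

/-- Serial exchange along a triangular system of fundamental-circuit pairs. -/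
lemma serial_exchange (hE : Mat.E = Set.univ) (L : List (O × O)) :
    ∀ B : Set O, Mat.IsBase B →
    (∀ p ∈ L, p.2 ∈ fundCircuit Mat B p.1) →
    L.Pairwise (fun p q => p.2 ∉ fundCircuit Mat B q.1) →
    (L.map Prod.fst).Nodup → (L.map Prod.snd).Nodup →
    Mat.IsBase ((B \ {x | x ∈ L.map Prod.snd}) ∪ {y | y ∈ L.map Prod.fst}) := by
  induction L with
  | nil => intro B hB _ _ _ _; simpa using hB
  | cons p L' IH =>
    obtain ⟨y1, x1⟩ := p
    intro B hB hmem hpw hy hx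
    have hBfin : B.Finite := Set.toFinite B
    have h1 : x1 ∈ fundCircuit Mat B y1 := hmem _ (List.mem_cons_self)
    have hx1B : x1 ∈ B := fundCircuit_subset h1
    have hchord : ∀ q ∈ L', x1 ∉ fundCircuit Mat B q.1 := fun q hq =>
      (List.pairwise_cons.1 hpw).1 q hq
    have hpw' : L'.Pairwise (fun p q => p.2 ∉ fundCircuit Mat B q.1) :=
      (List.pairwise_cons.1 hpw).2
    rw [List.map_cons, List.nodup_cons] at hy hx
    obtain ⟨hy1notin, hy'⟩ := hy
    obtain ⟨hx1notin, hx'⟩ := hx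
    have hqmem2B : ∀ q ∈ L', q.2 ∈ B := fun q hq =>
      fundCircuit_subset (hmem q (List.mem_cons_of_mem _ hq))
    have hq1ney1 : ∀ q ∈ L', q.1 ≠ y1 := by
      intro q hq h
      exact hy1notin (List.mem_map.2 ⟨q, hq, h⟩)
    have hq2nex1 : ∀ q ∈ L', q.2 ≠ x1 := by
      intro q hq h
      exact hx1notin (List.mem_map.2 ⟨q, hq, h⟩)
    by_cases hy1B : y1 ∈ B
    · -- trivial exchange: x1 = y1, base unchanged
      have hx1y1 : x1 = y1 := (mem_fundCircuit_of_mem hy1B).1 h1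
      have hbase := IH B hB (fun q hq => hmem q (List.mem_cons_of_mem _ hq)) hpw' hy' hx'
      have hset : (B \ {x | x ∈ ((y1, x1) :: L').map Prod.snd}) ∪
          {y | y ∈ ((y1, x1) :: L').map Prod.fst} =
          (B \ {x | x ∈ L'.map Prod.snd}) ∪ {y | y ∈ L'.map Prod.fst} := by
        ext z
        simp only [List.map_cons, List.mem_cons, mem_union, mem_diff, mem_setOf_eq, not_or]
        have hz1 : z = x1 → z ∉ {x | x ∈ L'.map Prod.snd} := fun h hz => hx1notin (h ▸ hz)
        have hz2 : z = x1 → z ∈ B := fun h => h ▸ hx1B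
        rw [← hx1y1]
        constructor
        · rintro (⟨hzB, -, hzs⟩ | (rfl | hzy)) <;> tauto
        · rintro (⟨hzB, hzs⟩ | hzy)
          · by_cases hzx1 : z = x1 <;> tauto
          · tauto
      rw [hset]
      exact hbase
    · -- genuine exchange
      have hI1 : Mat.Indep (insert y1 (B \ {x1})) :=
        ((mem_fundCircuit_of_not_mem hy1B).1 h1).2
      set B' := insert y1 (B \ {x1}) with hB'def
      have hB' : Mat.IsBase B' := hB.exchange_isBase_of_indep hy1B hI1
      -- transfer of circuit membership
      have hmem' : ∀ q ∈ L', q.2 ∈ fundCircuit Mat B' q.1 := by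
        intro q hq
        have hqfc : q.2 ∈ fundCircuit Mat B q.1 := hmem q (List.mem_cons_of_mem _ hq)
        by_cases hq1B : q.1 ∈ B
        · have hq21 : q.2 = q.1 := (mem_fundCircuit_of_mem hq1B).1 hqfc
          have hq1x1 : q.1 ≠ x1 := by
            intro h
            exact hchord q hq ((mem_fundCircuit_of_mem hq1B).2 h.symm)
          have hq1B' : q.1 ∈ B' := Or.inr ⟨hq1B, hq1x1⟩
          exact (mem_fundCircuit_of_mem hq1B').2 hq21
        · have hq1B' : q.1 ∉ B' := by
            simp only [hB'def, mem_insert_iff, mem_diff, mem_singleton_iff, not_or]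
            exact ⟨hq1ney1 q hq, fun h => hq1B h.1⟩
          obtain ⟨hq2B, hqI⟩ := (mem_fundCircuit_of_not_mem hq1B).1 hqfc
          have hdep : ¬ Mat.Indep (insert q.1 (B \ {x1})) := by
            intro hcon
            exact hchord q hq ((mem_fundCircuit_of_not_mem hq1B).2 ⟨hx1B, hcon⟩)
          have := indep_transfer hE hB hy1B hx1B hq1B hq2B
            (fun h => hq2nex1 q hq h.symm) (fun h => hq1ney1 q hq h.symm) hI1 hqI hdep
          exact (mem_fundCircuit_of_not_mem hq1B').2
            ⟨Or.inr ⟨hq2B, hq2nex1 q hq⟩, this⟩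
      -- transfer of the triangular condition
      have hpw'' : L'.Pairwise (fun p q => p.2 ∉ fundCircuit Mat B' q.1) := by
        refine List.Pairwise.imp_of_mem ?_ hpw'
        intro p' q hp' hq hold
        by_cases hq1B : q.1 ∈ B
        · have hq1x1 : q.1 ≠ x1 := by
            intro h
            exact hchord q hq ((mem_fundCircuit_of_mem hq1B).2 h.symm)
          have hq1B' : q.1 ∈ B' := Or.inr ⟨hq1B, hq1x1⟩
          intro hcon
          exact hold ((mem_fundCircuit_of_mem hq1B).2 ((mem_fundCircuit_of_mem hq1B').1 hcon))
        · have hq1B' : q.1 ∉ B' := by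
            simp only [hB'def, mem_insert_iff, mem_diff, mem_singleton_iff, not_or]
            exact ⟨hq1ney1 q hq, fun h => hq1B h.1⟩
          have hdep1 : ¬ Mat.Indep (insert q.1 (B \ {x1})) := by
            intro hcon
            exact hchord q hq ((mem_fundCircuit_of_not_mem hq1B).2 ⟨hx1B, hcon⟩)
          have hdepl : ¬ Mat.Indep (insert q.1 (B \ {p'.2})) := by
            intro hcon
            exact hold ((mem_fundCircuit_of_not_mem hq1B).2 ⟨hqmem2B p' hp', hcon⟩)
          have key : ¬ Mat.Indep (insert q.1 (B \ ({x1, p'.2} : Set O))) :=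
            dep_insert_diff_pair hE hB hBfin hq1B hx1B (hqmem2B p' hp')
              (fun h => hq2nex1 p' hp' h.symm) hdep1 hdepl
          intro hcon
          obtain ⟨hp2B', hconI⟩ := (mem_fundCircuit_of_not_mem hq1B').1 hcon
          refine key (hconI.subset ?_)
          intro z hz
          simp only [mem_insert_iff, mem_diff, mem_singleton_iff, not_or] at hz ⊢
          rcases hz with rfl | ⟨hzB, hz1, hz2⟩
          · exact Or.inl rfl
          · exact Or.inr ⟨Or.inr ⟨hzB, hz1⟩, hz2⟩
      have hbase := IH B' hB' hmem' hpw'' hy' hx'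
      have hy1sx : y1 ∉ {x | x ∈ L'.map Prod.snd} := by
        intro h
        obtain ⟨q, hq, hq2⟩ := List.mem_map.1 h
        exact hy1B (hq2 ▸ hqmem2B q hq)
      have hset : (B \ {x | x ∈ ((y1, x1) :: L').map Prod.snd}) ∪
          {y | y ∈ ((y1, x1) :: L').map Prod.fst} =
          (B' \ {x | x ∈ L'.map Prod.snd}) ∪ {y | y ∈ L'.map Prod.fst} := by
        ext z
        simp only [hB'def, List.map_cons, List.mem_cons, mem_union, mem_diff, mem_setOf_eq,
          not_or, mem_insert_iff, mem_singleton_iff]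
        have hzy1 : z = y1 → z ∉ {x | x ∈ L'.map Prod.snd} := fun h hz => hy1sx (h ▸ hz)
        constructor
        · rintro (⟨hzB, hz1, hzs⟩ | (rfl | hzy)) <;> tauto
        · rintro (⟨rfl | ⟨hzB, hz1⟩, hzs⟩ | hzy) <;> tauto
      rw [hset]
      exact hbase

end SE

section Cycles
variable {V : Type*} {arc : V → V → Prop} {c e : List V} {a : V}

lemma head?_eq_some_getElem (l : List V) (h : 0 < l.length) :
    l.head? = some (l[0]'h) := by
  have hne : l ≠ [] := List.ne_nil_of_length_pos h
  rw [List.head?_eq_head hne, List.head_eq_getElem_zero hne]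

lemma getLast?_eq_some_getElem (l : List V) (h : 0 < l.length) :
    l.getLast? = some (l[l.length - 1]'(by omega)) := by
  have hne : l ≠ [] := List.ne_nil_of_length_pos h
  rw [List.getLast?_eq_getLast hne, List.getLast_eq_getElem]

/-- rotate a cycle so that a given member comes first -/
lemma isCycle_head_rotate (hc : IsCycle arc c) (ha : a ∈ c) :
    ∃ d : List V, IsCycle arc d ∧ d.head? = some a ∧ ∀ x, x ∈ d ↔ x ∈ c := by
  obtain ⟨p, q, rfl⟩ := List.append_of_mem ha
  obtain ⟨hne, hnd, hch, hwrap⟩ := hc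
  obtain ⟨hchp, hchq, hlink⟩ := List.isChain_append.1 hch
  refine ⟨(a :: q) ++ p, ⟨by simp, ?_, ?_, ?_⟩, by simp, fun x => by simp; tauto⟩
  · exact (List.perm_append_comm.nodup_iff).1 (by simpa using hnd)
  · refine List.isChain_append.2 ⟨hchq, hchp, ?_⟩
    intro x hx y hy
    rcases eq_or_ne p [] with rfl | hp
    · simp at hy
    · refine hwrap x ?_ y ?_
      · rw [List.getLast?_append_of_ne_nil _ (by simp : (a :: q) ≠ [])]
        exact hx
      · rw [List.head?_append_of_ne_nil _ hp]
        exact hy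
  · intro x hx y hy
    simp only [List.cons_append, List.head?_cons, Option.mem_some_iff] at hy
    subst hy
    rcases eq_or_ne p [] with rfl | hp
    · simp only [List.append_nil] at hx
      refine hwrap x (by simpa using hx) a (by simp)
    · rw [List.getLast?_append_of_ne_nil _ hp] at hx
      exact hlink x hx a (by simp)

/-- consecutive arcs of a cycle, cyclically -/
lemma IsCycle.arc_getElem (hc : IsCycle arc e) (i : ℕ) (hi : i < e.length) :
    arc (e[i]'hi) (e[(i+1) % e.length]'(Nat.mod_lt _ (by omega))) := by
  obtain ⟨hne, hnd, hch, hwrap⟩ := hc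
  rcases Nat.lt_or_ge (i+1) e.length with h | h
  · have hmod : (i+1) % e.length = i + 1 := Nat.mod_eq_of_lt h
    have := List.isChain_iff_getElem.1 hch i (by omega)
    convert this using 2
  · have hlen : i + 1 = e.length := by omega
    have hmod : (i+1) % e.length = 0 := by rw [hlen, Nat.mod_self]
    have h0 : 0 < e.length := by omega
    have hw := hwrap (e[e.length-1]'(by omega))
      (by rw [getLast?_eq_some_getElem e h0]; rfl)
      (e[0]'h0) (by rw [head?_eq_some_getElem e h0]; rfl)
    obtain rfl : i = e.length - 1 := by omega
    convert hw using 2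


/-- a forward chord yields a shorter cycle with the same head -/
lemma shorter_cycle_of_chord (hc : IsCycle arc e) {i l : ℕ} (hi : i < e.length)
    (hl : l < e.length) (hil : i + 1 < l) (harc : arc (e[i]'hi) (e[l]'hl)) :
    ∃ e' : List V, IsCycle arc e' ∧ e'.head? = e.head? ∧ (∀ x ∈ e', x ∈ e) ∧
      e'.length < e.length := by
  obtain ⟨hne, hnd, hch, hwrap⟩ := hc
  have htl : (e.take (i+1)).length = i + 1 := by
    simp [Nat.min_eq_left (by omega : i + 1 ≤ e.length)]
  have hdl : (e.drop l).length = e.length - l := by simp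
  have hlen : (e.take (i+1) ++ e.drop l).length = (i+1) + (e.length - l) := by
    rw [List.length_append, htl, hdl]
  have htake_ne : e.take (i+1) ≠ [] := by
    intro h; rw [h] at htl; simp at htl
  have hdrop_ne : e.drop l ≠ [] := by
    intro h; rw [h] at hdl; simp at hdl; omega
  have hsub : List.Sublist (e.take (i+1) ++ e.drop l) e := by
    have h1 : e.drop l = (e.drop (i+1)).drop (l - (i+1)) := by
      rw [List.drop_drop]; congr 1; omega
    have h2 : List.Sublist (e.take (i+1) ++ e.drop l) (e.take (i+1) ++ e.drop (i+1)) := by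
      rw [h1]
      exact (List.drop_sublist _ _).append_left _
    rwa [List.take_append_drop] at h2
  have hgetlast : (e.take (i+1) ++ e.drop l).getLast? = some (e[e.length - 1]'(by omega)) := by
    rw [List.getLast?_append_of_ne_nil _ hdrop_ne,
      getLast?_eq_some_getElem _ (by rw [hdl]; omega)]
    congr 1
    rw [List.getElem_drop]
    congr 1
    omega
  have hhead : (e.take (i+1) ++ e.drop l).head? = some (e[0]'(by omega)) := by
    rw [List.head?_append_of_ne_nil _ htake_ne,
      head?_eq_some_getElem _ (by rw [htl]; omega)]
    exact congrArg some (List.getElem_take)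
  refine ⟨e.take (i+1) ++ e.drop l, ⟨?_, hnd.sublist hsub, ?_, ?_⟩, ?_,
    fun x hx => hsub.mem hx, by omega⟩
  · intro h; rw [h] at hlen; simp at hlen; omega
  · refine List.isChain_append.2 ⟨hch.take _, hch.drop _, ?_⟩
    intro x hx y hy
    rw [getLast?_eq_some_getElem _ (by rw [htl]; omega)] at hx
    rw [head?_eq_some_getElem _ (by rw [hdl]; omega)] at hy
    simp only [Option.mem_some_iff] at hx hy
    subst hx; subst hy
    have hx' : (e.take (i+1))[(e.take (i+1)).length - 1]'(by omega) = e[i]'hi := by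
      have h3 : (e.take (i+1)).length - 1 = i := by omega
      simp only [h3]
      exact List.getElem_take
    have hy' : (e.drop l)[0]'(by rw [hdl]; omega) = e[l]'hl := by
      rw [List.getElem_drop]; congr 1
    rw [hx', hy']
    exact harc
  · intro x hx y hy
    rw [hgetlast] at hx
    rw [hhead] at hy
    simp only [Option.mem_some_iff] at hx hy
    subst hx; subst hy
    exact hwrap _ (by rw [getLast?_eq_some_getElem _ (by omega : 0 < e.length)]; rfl)
      _ (by rw [head?_eq_some_getElem _ (by omega : 0 < e.length)]; rfl)
  · rw [hhead, head?_eq_some_getElem _ (by omega : 0 < e.length)]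

/-- a chord back to the head yields a shorter cycle with the same head -/
lemma shorter_cycle_of_chord0 (hc : IsCycle arc e) {i : ℕ} (hi : i + 1 < e.length)
    (harc : arc (e[i]'(by omega)) (e[0]'(by omega))) :
    ∃ e' : List V, IsCycle arc e' ∧ e'.head? = e.head? ∧ (∀ x ∈ e', x ∈ e) ∧
      e'.length < e.length := by
  obtain ⟨hne, hnd, hch, hwrap⟩ := hc
  have htl : (e.take (i+1)).length = i + 1 := by
    simp [Nat.min_eq_left (by omega : i + 1 ≤ e.length)]
  have hsub : List.Sublist (e.take (i+1)) e := List.take_sublist _ _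
  refine ⟨e.take (i+1), ⟨?_, hnd.sublist hsub, hch.take _, ?_⟩, ?_,
    fun x hx => hsub.mem hx, by omega⟩
  · intro h; rw [h] at htl; simp at htl
  · intro x hx y hy
    rw [getLast?_eq_some_getElem _ (by omega)] at hx
    rw [head?_eq_some_getElem _ (by omega)] at hy
    simp only [Option.mem_some_iff] at hx hy
    subst hx; subst hy
    have hx' : (e.take (i+1))[(e.take (i+1)).length - 1]'(by omega) = e[i]'(by omega) := by
      have h2 : (e.take (i+1)).length - 1 = i := by omega
      simp only [h2]
      exact List.getElem_take
    have hy' : (e.take (i+1))[0]'(by rw [htl]; omega) = e[0]'(by omega) :=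
      List.getElem_take
    rw [hx', hy']
    exact harc
  · rw [head?_eq_some_getElem _ (by rw [htl]; omega : 0 < (e.take (i+1)).length),
      head?_eq_some_getElem _ (by omega : 0 < e.length)]
    exact congrArg some (List.getElem_take)

end Cycles

section Main
variable {A O : Type*}

theorem exchange_along_cycle_aux
    {A O : Type*} [Fintype A] [Fintype O]
    (adj : A → O → Prop)
    (Mat : Matroid O) (hE : Mat.E = Set.univ)
    (m n : A → O)
    (hm : IsConstrained adj Mat (fun a => some (m a)))
    (hn : IsConstrained adj Mat (fun a => some (n a)))
    (hmB : Mat.IsBase (Set.range m)) (hnB : Mat.IsBase (Set.range n))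
    (c : List A) (hc : IsCycle (exchArc Mat m n) c)
    (a' : A) (ha' : a' ∈ c) :
    ∃ A' : Set A, A' ⊆ {a : A | a ∈ c} ∧ a' ∈ A' ∧
      IsConstrained adj Mat (fun a => if a ∈ A' then some (n a) else some (m a)) := by
  classical
  set arc : A → A → Prop := exchArc Mat m n with harcdef
  have minj : Function.Injective m := fun a b h =>
    hm.1.2 a b (m a) rfl (by rw [h])
  have ninj : Function.Injective n := fun a b h =>
    hn.1.2 a b (n a) rfl (by rw [h])
  -- rotate the cycle so that a' comes first
  obtain ⟨d, hd, hdhead, hdmem⟩ := isCycle_head_rotate hc ha'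
  -- choose a minimum-length cycle through a' with vertices in c
  have hex : ∃ L : ℕ, ∃ e : List A, IsCycle arc e ∧ e.head? = some a' ∧
      (∀ x ∈ e, x ∈ c) ∧ e.length = L :=
    ⟨d.length, d, hd, hdhead, fun x hx => (hdmem x).1 hx, rfl⟩
  obtain ⟨e, he, hehead, hemem, helen⟩ := Nat.find_spec hex
  have hmin : ∀ (e' : List A), IsCycle arc e' → e'.head? = some a' →
      (∀ x ∈ e', x ∈ c) → ¬ (e'.length < e.length) := by
    intro e' h1 h2 h3 hlt
    exact Nat.find_min hex (helen ▸ hlt) ⟨e', h1, h2, h3, rfl⟩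
  have hr : 0 < e.length := List.length_pos_iff.2 he.1
  -- no forward chords
  have hNC : ∀ (i l : ℕ) (hi : i < e.length) (hl : l < e.length), i + 1 < l →
      ¬ arc (e[i]'hi) (e[l]'hl) := by
    intro i l hi hl hil harc
    obtain ⟨e', he', hh, hmm, hlt⟩ := shorter_cycle_of_chord he hi hl hil harc
    exact hmin e' he' (by rw [hh, hehead]) (fun x hx => hemem x (hmm x hx)) hlt
  have hNC0 : ∀ (i : ℕ) (hi : i + 1 < e.length),
      ¬ arc (e[i]'(by omega)) (e[0]'(by omega)) := by
    intro i hi harc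
    obtain ⟨e', he', hh, hmm, hlt⟩ := shorter_cycle_of_chord0 he hi harc
    exact hmin e' he' (by rw [hh, hehead]) (fun x hx => hemem x (hmm x hx)) hlt
  have hcycarc : ∀ (i : ℕ) (hi : i < e.length),
      arc (e[i]'hi) (e[(i+1) % e.length]'(Nat.mod_lt _ (by omega))) := he.arc_getElem
  -- the pair list
  set Z : List (O × O) := (e.map n).zip ((e.rotate 1).map m) with hZdef
  have hZlen : Z.length = e.length := by simp [hZdef]
  have hZget : ∀ (k : ℕ) (hk : k < Z.length),
      Z[k] = (n (e[k]'(by omega)), m (e[(k+1) % e.length]'(Nat.mod_lt _ (by omega)))) := by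
    intro k hk
    simp only [hZdef, List.getElem_zip, List.getElem_map, List.getElem_rotate]
  set B : Set O := Set.range m with hBdef
  -- serial exchange hypotheses
  have hSE1 : ∀ p ∈ Z.reverse, p.2 ∈ fundCircuit Mat B p.1 := by
    intro p hp
    rw [List.mem_reverse] at hp
    obtain ⟨k, hk, hkeq⟩ := List.mem_iff_getElem.1 hp
    rw [hZget k hk] at hkeq
    subst hkeq
    exact hcycarc k (by omega)
  have hSE2 : Z.reverse.Pairwise (fun p q => p.2 ∉ fundCircuit Mat B q.1) := by
    rw [List.pairwise_reverse]
    rw [List.pairwise_iff_getElem]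
    intro i j hi hj hij
    rw [hZget i hi, hZget j hj]
    dsimp only
    rcases Nat.lt_or_ge (j+1) e.length with h | h
    · have hmod : (j+1) % e.length = j + 1 := Nat.mod_eq_of_lt h
      have := hNC i (j+1) (by omega) (by omega) (by omega)
      simp only [hmod]
      exact this
    · have hjeq : j + 1 = e.length := by rw [hZlen] at hj; omega
      have hmod : (j+1) % e.length = 0 := by rw [hjeq, Nat.mod_self]
      have := hNC0 i (by rw [hZlen] at *; omega)
      simp only [hmod]
      exact this
  have hSE3 : (Z.reverse.map Prod.fst).Nodup := by
    rw [List.map_reverse, List.nodup_reverse, hZdef, List.map_fst_zip (by simp)]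
    exact he.2.1.map ninj
  have hSE4 : (Z.reverse.map Prod.snd).Nodup := by
    rw [List.map_reverse, List.nodup_reverse, hZdef, List.map_snd_zip (by simp)]
    exact (List.nodup_rotate.2 he.2.1).map minj
  have hbase := serial_exchange hE Z.reverse B hmB hSE1 hSE2 hSE3 hSE4
  -- identify the exchanged sets
  set A' : Set A := {a | a ∈ e} with hA'def
  have hsx : {x | x ∈ Z.reverse.map Prod.snd} = m '' A' := by
    ext x
    simp only [Set.mem_setOf_eq, List.map_reverse, List.mem_reverse, Set.mem_image]
    rw [hZdef, List.map_snd_zip (by simp)]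
    simp only [List.mem_map, List.mem_rotate]
    constructor
    · rintro ⟨a, ha, rfl⟩; exact ⟨a, ha, rfl⟩
    · rintro ⟨a, ha, rfl⟩; exact ⟨a, ha, rfl⟩
  have hsy : {y | y ∈ Z.reverse.map Prod.fst} = n '' A' := by
    ext y
    simp only [Set.mem_setOf_eq, List.map_reverse, List.mem_reverse, Set.mem_image]
    rw [hZdef, List.map_fst_zip (by simp)]
    simp only [List.mem_map]
    constructor
    · rintro ⟨a, ha, rfl⟩; exact ⟨a, ha, rfl⟩
    · rintro ⟨a, ha, rfl⟩; exact ⟨a, ha, rfl⟩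
  rw [hsx, hsy] at hbase
  have ha'e : a' ∈ e := by
    have h1 := List.eq_cons_of_mem_head? (show a' ∈ e.head? by rw [hehead]; rfl)
    rw [h1]; exact List.mem_cons_self
  -- the key cross-injectivity fact
  have hcross : ∀ a, a ∈ A' → ∀ b, b ∉ A' → n a ≠ m b := by
    intro a ha b hb heq
    obtain ⟨i, hi, rfl⟩ := List.mem_iff_getElem.1 (show a ∈ e from ha)
    have harc := hcycarc i hi
    by_cases hna : n (e[i]'hi) ∈ B
    · have h2 := (mem_fundCircuit_of_mem hna).1 harc
      obtain rfl := minj (h2.trans heq)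
      exact hb (List.getElem_mem _)
    · exact hna (by rw [hBdef, heq]; exact Set.mem_range_self b)
  refine ⟨A', fun a ha => hemem a ha, ha'e, ⟨?_, ?_⟩, ?_⟩
  · -- adjacency
    intro a o h
    by_cases ha : a ∈ A' <;> simp only [ha, if_pos, if_neg, not_false_iff, if_true] at h
    · exact (Option.some_inj.1 h) ▸ hn.1.1 a (n a) rfl
    · exact (Option.some_inj.1 h) ▸ hm.1.1 a (m a) rfl
  · -- injectivity
    intro a b o hao hbo
    by_cases ha : a ∈ A' <;> by_cases hb : b ∈ A' <;>
      simp only [ha, hb, if_pos, if_neg, not_false_iff, if_true, Option.some_inj] at hao hbo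
    · exact ninj (hao.trans hbo.symm)
    · exact absurd (hao.trans hbo.symm) (hcross a ha b hb)
    · exact absurd (hbo.trans hao.symm) (hcross b hb a ha)
    · exact minj (hao.trans hbo.symm)
  · -- independence
    have hobj : matchedObjs (fun a => if a ∈ A' then some (n a) else some (m a)) =
        (B \ m '' A') ∪ n '' A' := by
      ext o
      simp only [matchedObjs, Set.mem_setOf_eq, Set.mem_union, Set.mem_diff, Set.mem_image]
      constructor
      · rintro ⟨a, h⟩
        by_cases ha : a ∈ A' <;>
          simp only [ha, if_pos, if_neg, not_false_iff, if_true, Option.some_inj] at h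
        · exact Or.inr ⟨a, ha, h⟩
        · refine Or.inl ⟨⟨a, h⟩, ?_⟩
          rintro ⟨b, hb, hbo⟩
          exact ha ((minj (hbo.trans h.symm)) ▸ hb)
      · rintro (⟨⟨a, rfl⟩, hnotim⟩ | ⟨a, ha, rfl⟩)
        · have ha : a ∉ A' := fun h => hnotim ⟨a, h, rfl⟩
          exact ⟨a, by simp [ha]⟩
        · exact ⟨a, by simp [ha]⟩
    have hind := hbase.indep
    rw [← hobj] at hind
    convert hind using 2
    funext a
    by_cases h : a ∈ A' <;> simp [h]
end Main

end AuxAll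

/-- Given two everywhere-matched `ℐ`-constrained matchings `m`, `n`
whose matched object sets are bases, and a directed cycle `c` in the exchange graph
`D_{N→M}` through `a'`, there is a subset `A'` of the agents on `c` containing `a'`
such that reassigning the agents of `A'` to their objects under `n` yields an
`ℐ`-constrained matching. -/
theorem exchange_along_cycle
    {A O : Type*} [Fintype A] [Fintype O]
    (adj : A → O → Prop)
    (Mat : Matroid O) (hE : Mat.E = Set.univ)
    (m n : A → O)
    (hm : IsConstrained adj Mat (fun a => some (m a)))
    (hn : IsConstrained adj Mat (fun a => some (n a)))
    (hmB : Mat.IsBase (Set.range m)) (hnB : Mat.IsBase (Set.range n))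
    (c : List A) (hc : IsCycle (exchArc Mat m n) c)
    (a' : A) (ha' : a' ∈ c) :
    ∃ A' : Set A, A' ⊆ {a : A | a ∈ c} ∧ a' ∈ A' ∧
      IsConstrained adj Mat (fun a => if a ∈ A' then some (n a) else some (m a)) := by
  exact exchange_along_cycle_aux adj Mat hE m n hm hn hmB hnB c hc a' ha'
end
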